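/- arXiv:1409.1423 — 7 statements merged into one kernel-verified Lean document; each statement's English description precedes it below -/
import Mathlib

section
/- If f : 𝔻 → 𝔻 is holomorphic and there exists a positive integer n such that for every w ∈ 𝔻 the equation f(z) = w has exactly n solutions in 𝔻 counting multiplicities, then f is a finite Blaschke product of degree n. -/
open Complex Metric MeasureTheory Set Filter

noncomputable def blaschkeFactor (a z : ℂ) : ℂ := (z - a) / (1 - (starRingEnd ℂ) a * z)

def IsFiniteBlaschkeDeg (n : ℕ) (f : ℂ → ℂ) : Prop :=
  ∃ (lam : ℂ) (a : Fin n → ℂ), ‖lam‖ = 1 ∧ (∀ i, a i ∈ ball (0:ℂ) 1) ∧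
    ∀ z ∈ ball (0:ℂ) 1, f z = lam * ∏ i, blaschkeFactor (a i) z

def IsFiniteBlaschke (f : ℂ → ℂ) : Prop := ∃ n : ℕ, 0 < n ∧ IsFiniteBlaschkeDeg n f

noncomputable def zeroOrder (f : ℂ → ℂ) (z₀ : ℂ) : ℕ :=
  sInf {n : ℕ | ∃ g : ℂ → ℂ, AnalyticAt ℂ g z₀ ∧ g z₀ ≠ 0 ∧
    ∀ᶠ z in nhds z₀, f z = (z - z₀) ^ n * g z}

def HasValence (f : ℂ → ℂ) (U : Set ℂ) (w : ℂ) (n : ℕ) : Prop :=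
  ∃ hS : {z ∈ U | f z = w}.Finite, ∑ z ∈ hS.toFinset, zeroOrder (fun x => f x - w) z = n

noncomputable def Complex.abs : AbsoluteValue ℂ ℝ :=
  IsAbsoluteValue.toAbsoluteValue (norm : ℂ → ℝ)

lemma Complex.norm_eq_abs (z : ℂ) : ‖z‖ = Complex.abs z := rfl

lemma Complex.abs_conj (z : ℂ) : Complex.abs ((starRingEnd ℂ) z) = Complex.abs z :=
  Complex.norm_conj z

lemma Complex.normSq_eq_abs (z : ℂ) : Complex.normSq z = Complex.abs z ^ 2 :=
  Complex.normSq_eq_norm_sq z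

/-! ### Order-at-a-point machinery -/

def OrdAt (f : ℂ → ℂ) (z₀ : ℂ) (m : ℕ) : Prop :=
  ∃ g : ℂ → ℂ, AnalyticAt ℂ g z₀ ∧ g z₀ ≠ 0 ∧
    ∀ᶠ z in nhds z₀, f z = (z - z₀) ^ m * g z

lemma OrdAt.not_lt {f : ℂ → ℂ} {z₀ : ℂ} {m k : ℕ} (hm : OrdAt f z₀ m) (hk : OrdAt f z₀ k) :
    ¬ m < k := by
  intro hlt
  obtain ⟨g, hg, hg0, hfg⟩ := hm
  obtain ⟨g', hg', hg0', hfg'⟩ := hk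
  have hev : ∀ᶠ z in nhdsWithin z₀ {z₀}ᶜ, g z = (z - z₀) ^ (k - m) * g' z := by
    filter_upwards [nhdsWithin_le_nhds hfg, nhdsWithin_le_nhds hfg',
      self_mem_nhdsWithin] with z h1 h2 h3
    have hz : (z - z₀) ≠ 0 := sub_ne_zero.mpr h3
    have hpow : (z - z₀) ^ k = (z - z₀) ^ m * (z - z₀) ^ (k - m) := by
      rw [← pow_add]; congr 1; omega
    have h4 : (z - z₀) ^ m * g z = (z - z₀) ^ m * ((z - z₀) ^ (k - m) * g' z) := by
      rw [← mul_assoc, ← hpow, ← h1, ← h2]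
    exact mul_left_cancel₀ (pow_ne_zero _ hz) h4
  have h1 : Tendsto g (nhdsWithin z₀ {z₀}ᶜ) (nhds (g z₀)) :=
    (hg.continuousAt.continuousWithinAt : ContinuousWithinAt g {z₀}ᶜ z₀)
  have h2 : Tendsto (fun z => (z - z₀) ^ (k - m) * g' z) (nhdsWithin z₀ {z₀}ᶜ)
      (nhds ((z₀ - z₀) ^ (k - m) * g' z₀)) := by
    apply Tendsto.mono_left _ nhdsWithin_le_nhds
    exact (((continuous_id.sub continuous_const).pow _).continuousAt).mul
      hg'.continuousAt
  have h0 : ((z₀ - z₀) ^ (k - m) * g' z₀) = 0 := by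
    rw [sub_self, zero_pow (by omega), zero_mul]
  rw [h0] at h2
  have := tendsto_nhds_unique (h1.congr' hev) h2
  exact hg0 this

lemma OrdAt.unique {f : ℂ → ℂ} {z₀ : ℂ} {m k : ℕ} (hm : OrdAt f z₀ m) (hk : OrdAt f z₀ k) :
    m = k := by
  rcases lt_trichotomy m k with h | h | h
  · exact absurd h (hm.not_lt hk)
  · exact h
  · exact absurd h (hk.not_lt hm)

lemma OrdAt.zeroOrder_eq {f : ℂ → ℂ} {z₀ : ℂ} {m : ℕ} (h : OrdAt f z₀ m) :
    zeroOrder f z₀ = m := by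
  have : {n : ℕ | ∃ g : ℂ → ℂ, AnalyticAt ℂ g z₀ ∧ g z₀ ≠ 0 ∧
      ∀ᶠ z in nhds z₀, f z = (z - z₀) ^ n * g z} = {m} := by
    ext k
    simp only [Set.mem_setOf_eq, Set.mem_singleton_iff]
    exact ⟨fun hk => (OrdAt.unique hk h), fun hk => hk ▸ h⟩
  rw [zeroOrder, this, csInf_singleton]

lemma AnalyticAt.ordAt {f : ℂ → ℂ} {z₀ : ℂ} (hf : AnalyticAt ℂ f z₀)
    (hnz : ¬ ∀ᶠ z in nhds z₀, f z = 0) : ∃ m, OrdAt f z₀ m := by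
  have htop : analyticOrderAt f z₀ ≠ ⊤ := fun h => hnz (analyticOrderAt_eq_top.mp h)
  have hm' : analyticOrderAt f z₀ = ((analyticOrderAt f z₀).toNat : ℕ∞) :=
    (ENat.coe_toNat htop).symm
  obtain ⟨g, hg, hg0, hev⟩ := hf.analyticOrderAt_eq_natCast.mp hm'
  exact ⟨(analyticOrderAt f z₀).toNat, g, hg, hg0, by simpa [smul_eq_mul] using hev⟩

lemma OrdAt.pos {f : ℂ → ℂ} {z₀ : ℂ} {m : ℕ} (h : OrdAt f z₀ m) (h0 : f z₀ = 0) : 0 < m := by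
  rcases Nat.eq_zero_or_pos m with h' | h'
  swap
  · exact h'
  · exfalso
    obtain ⟨g, hg, hg0, hev⟩ := h
    have := hev.self_of_nhds
    rw [h', pow_zero, one_mul, h0] at this
    exact hg0 this.symm

lemma ordAt_zero_of_ne {f : ℂ → ℂ} {z₀ : ℂ} (hf : AnalyticAt ℂ f z₀) (h0 : f z₀ ≠ 0) :
    OrdAt f z₀ 0 :=
  ⟨f, hf, h0, by filter_upwards with z; rw [pow_zero, one_mul]⟩

lemma OrdAt.value_ne_zero {f : ℂ → ℂ} {z₀ : ℂ} (h : OrdAt f z₀ 0) : f z₀ ≠ 0 := by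
  obtain ⟨g, hg, hg0, hev⟩ := h
  have := hev.self_of_nhds
  rw [pow_zero, one_mul] at this
  rw [this]; exact hg0

lemma OrdAt.congr_mul {F F₂ u : ℂ → ℂ} {z₀ : ℂ} {m : ℕ} (h : OrdAt F z₀ m)
    (hu : AnalyticAt ℂ u z₀) (hu0 : u z₀ ≠ 0)
    (heq : ∀ᶠ z in nhds z₀, F₂ z = F z * u z) : OrdAt F₂ z₀ m := by
  obtain ⟨g, hg, hg0, hev⟩ := h
  refine ⟨fun z => g z * u z, hg.mul hu, mul_ne_zero hg0 hu0, ?_⟩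
  filter_upwards [hev, heq] with z h1 h2
  rw [h2, h1, mul_assoc]

/-! ### Non-constancy and counting -/

lemma ball_infinite : (ball (0:ℂ) 1).Infinite := by
  refine Set.infinite_of_injective_forall_mem
    (f := fun k : ℕ => ((((k:ℝ)+2)⁻¹ : ℝ) : ℂ)) ?_ ?_
  · intro a b hab
    have h := Complex.ofReal_injective hab
    have ha : ((a:ℝ)+2) ≠ 0 := by positivity
    have hb : ((b:ℝ)+2) ≠ 0 := by positivity
    field_simp at h
    exact_mod_cast (add_right_cancel h).symm
  · intro k
    rw [mem_ball_zero_iff, Complex.norm_real, Real.norm_eq_abs,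
      abs_of_pos (by positivity), inv_lt_one_iff₀]
    right
    have : (0:ℝ) ≤ k := Nat.cast_nonneg k
    linarith

lemma not_ev_const {f : ℂ → ℂ} (hA : AnalyticOnNhd ℂ f (ball (0:ℂ) 1)) {w : ℂ}
    (hfin : {z ∈ ball (0:ℂ) 1 | f z = w}.Finite) {z : ℂ} (hz : z ∈ ball (0:ℂ) 1) :
    ¬ ∀ᶠ x in nhds z, f x = w := by
  intro hev
  have heq : EqOn f (fun _ => w) (ball (0:ℂ) 1) :=
    hA.eqOn_of_preconnected_of_eventuallyEq (analyticOnNhd_const)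
      (convex_ball (0:ℂ) 1).isPreconnected hz hev
  have : ball (0:ℂ) 1 ⊆ {z ∈ ball (0:ℂ) 1 | f z = w} := fun x hx => ⟨hx, heq hx⟩
  exact (ball_infinite.mono this) hfin

lemma ord_of_sol {f : ℂ → ℂ} (hA : AnalyticOnNhd ℂ f (ball (0:ℂ) 1)) {w : ℂ}
    (hfin : {z ∈ ball (0:ℂ) 1 | f z = w}.Finite) {z : ℂ} (hz : z ∈ ball (0:ℂ) 1) :
    ∃ m, OrdAt (fun x => f x - w) z m ∧ zeroOrder (fun x => f x - w) z = m ∧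
      (f z = w → 1 ≤ m) := by
  have han : AnalyticAt ℂ (fun x => f x - w) z := (hA z hz).sub analyticAt_const
  have hnz : ¬ ∀ᶠ x in nhds z, f x - w = 0 := by
    intro h
    exact not_ev_const hA hfin hz (by filter_upwards [h] with x hx; exact sub_eq_zero.mp hx)
  obtain ⟨m, hm⟩ := han.ordAt hnz
  exact ⟨m, hm, hm.zeroOrder_eq, fun h => hm.pos (by rw [h, sub_self])⟩

lemma card_le_of_valence {f : ℂ → ℂ} (hA : AnalyticOnNhd ℂ f (ball (0:ℂ) 1)) {w : ℂ} {n : ℕ}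
    (hv : HasValence f (ball (0:ℂ) 1) w n) (T : Finset ℂ)
    (hT : ∀ z ∈ T, z ∈ ball (0:ℂ) 1 ∧ f z = w) : T.card ≤ n := by
  obtain ⟨hS, hsum⟩ := hv
  have hsub : T ⊆ hS.toFinset := by
    intro z hz
    rw [Set.Finite.mem_toFinset]
    exact ⟨(hT z hz).1, (hT z hz).2⟩
  calc T.card = ∑ _z ∈ T, 1 := by rw [Finset.card_eq_sum_ones]
    _ ≤ ∑ z ∈ T, zeroOrder (fun x => f x - w) z := by
        apply Finset.sum_le_sum
        intro z hz
        obtain ⟨m, _, heq, hge⟩ := ord_of_sol hA hS (hT z hz).1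
        rw [heq]; exact hge (hT z hz).2
    _ ≤ ∑ z ∈ hS.toFinset, zeroOrder (fun x => f x - w) z :=
        Finset.sum_le_sum_of_subset hsub
    _ = n := hsum

/-! ### Local splitting of values -/

lemma splitting {F : ℂ → ℂ} {s : ℂ} {m : ℕ} (hm : 0 < m) (h : OrdAt F s m)
    {ρ : ℝ} (hρ : 0 < ρ) :
    ∃ ε > 0, ∀ u : ℂ, u ≠ 0 → Complex.abs u < ε →
      ∃ T : Finset ℂ, T.card = m ∧ ∀ z ∈ T, dist z s < ρ ∧ F z = u := by
  classical
  obtain ⟨g, hg, hg0, hfg⟩ := h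
  have hmC : (m:ℂ) ≠ 0 := Nat.cast_ne_zero.mpr hm.ne'
  set h₀ : ℂ → ℂ :=
    fun z => Complex.exp ((Complex.log (g z / g s) + Complex.log (g s)) / m) with hh₀
  have hq : AnalyticAt ℂ (fun z => g z / g s) s := hg.div analyticAt_const hg0
  have hlog : AnalyticAt ℂ (fun z => Complex.log (g z / g s)) s := by
    apply (analyticAt_clog ?_).comp hq
    rw [div_self hg0]
    exact Complex.one_mem_slitPlane
  have hh₀a : AnalyticAt ℂ h₀ s :=
    ((hlog.add analyticAt_const).div analyticAt_const hmC).cexp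
  have hgne : ∀ᶠ z in nhds s, g z ≠ 0 := hg.continuousAt.eventually_ne hg0
  set φ : ℂ → ℂ := fun z => (z - s) * h₀ z with hφ
  have hkey : ∀ᶠ z in nhds s, F z = φ z ^ m := by
    filter_upwards [hfg, hgne] with z h1 h2
    have hpow : (h₀ z) ^ m = g z := by
      rw [hh₀, ← Complex.exp_nat_mul]
      have hc : (m:ℂ) * ((Complex.log (g z / g s) + Complex.log (g s)) / m)
          = Complex.log (g z / g s) + Complex.log (g s) := by field_simp
      rw [hc, Complex.exp_add, Complex.exp_log (div_ne_zero h2 hg0), Complex.exp_log hg0,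
        div_mul_cancel₀ _ hg0]
    rw [hφ]
    simp only [mul_pow, hpow, h1]
  have hφa : AnalyticAt ℂ φ s := ((analyticAt_id.sub analyticAt_const).mul hh₀a)
  have hd : HasDerivAt φ (h₀ s) s := by
    have := ((hasDerivAt_id s).sub_const s).mul (hh₀a.differentiableAt.hasDerivAt)
    simp at this
    exact this
  obtain ⟨p, hp⟩ := hφa
  have hsd := hp.hasStrictDerivAt
  have hc := hsd.hasDerivAt.unique hd
  rw [hc] at hsd
  have hmap := hsd.map_nhds_eq (Complex.exp_ne_zero _)
  have hφs : φ s = 0 := by simp [hφ]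
  have hVmem : {z | dist z s < ρ ∧ F z = φ z ^ m} ∈ nhds s := by
    have h1 : ∀ᶠ z in nhds s, dist z s < ρ := by
      filter_upwards [Metric.ball_mem_nhds s hρ] with z hz
      exact mem_ball.mp hz
    exact h1.and hkey
  have himg := Filter.image_mem_map (f := nhds s) (m := φ) hVmem
  rw [hmap, hφs] at himg
  obtain ⟨ε', hε'sub, hε'open, hε'mem⟩ := _root_.mem_nhds_iff.mp himg
  obtain ⟨ε, hε, hball⟩ := Metric.isOpen_iff.mp hε'open 0 hε'mem
  have hball' : ball (0:ℂ) ε ⊆ φ '' {z | dist z s < ρ ∧ F z = φ z ^ m} :=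
    fun x hx => hε'sub (hball hx)
  refine ⟨ε ^ m, pow_pos hε m, ?_⟩
  intro u hu0 hu
  set ζ₀ := Complex.exp (Complex.log u / m) with hζ₀
  set μ := Complex.exp (2 * Real.pi * Complex.I / m) with hμ
  have hζ₀m : ζ₀ ^ m = u := by
    rw [hζ₀, ← Complex.exp_nat_mul]
    have hc : (m:ℂ) * (Complex.log u / m) = Complex.log u := by field_simp
    rw [hc, Complex.exp_log hu0]
  have hμm : μ ^ m = 1 := by
    rw [hμ, ← Complex.exp_nat_mul]
    have hc : (m:ℂ) * (2 * Real.pi * Complex.I / m) = 2 * Real.pi * Complex.I := by field_simp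
    rw [hc, Complex.exp_two_pi_mul_I]
  have hprim := Complex.isPrimitiveRoot_exp m hm.ne'
  have hrootm : ∀ j : ℕ, (ζ₀ * μ ^ j) ^ m = u := by
    intro j
    rw [mul_pow, hζ₀m, ← pow_mul, mul_comm j m, pow_mul, hμm, one_pow, mul_one]
  have habs : ∀ j : ℕ, Complex.abs (ζ₀ * μ ^ j) < ε := by
    intro j
    by_contra hcon
    push_neg at hcon
    have h2 : ε ^ m ≤ Complex.abs (ζ₀ * μ ^ j) ^ m := pow_le_pow_left₀ hε.le hcon m
    rw [← map_pow, hrootm] at h2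
    exact absurd hu (not_lt.mpr h2)
  have hpre : ∀ j : ℕ, ∃ z, (dist z s < ρ ∧ F z = φ z ^ m) ∧ φ z = ζ₀ * μ ^ j := by
    intro j
    have hmem : ζ₀ * μ ^ j ∈ φ '' {z | dist z s < ρ ∧ F z = φ z ^ m} := by
      apply hball'
      rw [mem_ball_zero_iff, Complex.norm_eq_abs]
      exact habs j
    obtain ⟨z, hz1, hz2⟩ := hmem
    exact ⟨z, hz1, hz2⟩
  choose zf hzf1 hzf2 using hpre
  have hζ₀ne : ζ₀ ≠ 0 := Complex.exp_ne_zero _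
  refine ⟨(Finset.range m).image zf, ?_, ?_⟩
  · rw [Finset.card_image_of_injOn, Finset.card_range]
    intro i hi j hj hij
    have : ζ₀ * μ ^ i = ζ₀ * μ ^ j := by rw [← hzf2 i, ← hzf2 j, hij]
    have hμij : μ ^ i = μ ^ j := mul_left_cancel₀ hζ₀ne this
    exact hprim.pow_inj (Finset.mem_range.mp hi) (Finset.mem_range.mp hj) hμij
  · intro z hz
    obtain ⟨j, _, hjz⟩ := Finset.mem_image.mp hz
    subst hjz
    refine ⟨(hzf1 j).1, ?_⟩
    rw [(hzf1 j).2, hzf2 j, hrootm j]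

/-! ### Properness: |f| → 1 at the boundary -/

lemma abs_eq_dist_zero (z : ℂ) : Complex.abs z = dist z 0 := by
  rw [dist_zero_right, Complex.norm_eq_abs]

lemma proper_boundary {f : ℂ → ℂ} (hA : AnalyticOnNhd ℂ f (ball (0:ℂ) 1)) {n : ℕ} (hn : 0 < n)
    (hval : ∀ w ∈ ball (0:ℂ) 1, HasValence f (ball (0:ℂ) 1) w n)
    (hmaps : MapsTo f (ball (0:ℂ) 1) (ball (0:ℂ) 1)) :
    ∀ ε : ℝ, 0 < ε → ε < 1 →
      ∃ r : ℝ, r < 1 ∧ ∀ z ∈ ball (0:ℂ) 1, r < Complex.abs z → 1 - ε < Complex.abs (f z) := by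
  classical
  intro ε hε hε1
  by_contra hcon
  push_neg at hcon
  have hz : ∀ k : ℕ, ∃ z ∈ ball (0:ℂ) 1,
      1 - 1/((k:ℝ)+1) < Complex.abs z ∧ Complex.abs (f z) ≤ 1 - ε := by
    intro k
    have h1 : (1:ℝ) - 1/((k:ℝ)+1) < 1 := by
      have : (0:ℝ) < 1/((k:ℝ)+1) := by positivity
      linarith
    exact hcon _ h1
  choose zs hzs1 hzs2 hzs3 using hz
  have hcpt := (isCompact_closedBall (0:ℂ) (1-ε)).tendsto_subseq
    (x := fun k => f (zs k)) (fun k => by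
      rw [Metric.mem_closedBall, ← abs_eq_dist_zero]; exact hzs3 k)
  obtain ⟨w₀, hw₀mem, ψ, hψmono, hψtend⟩ := hcpt
  have hw₀D : w₀ ∈ ball (0:ℂ) 1 := by
    rw [mem_ball, ← abs_eq_dist_zero]
    rw [Metric.mem_closedBall, ← abs_eq_dist_zero] at hw₀mem
    linarith
  obtain ⟨hS, hsum⟩ := hval w₀ hw₀D
  set S := hS.toFinset with hSdef
  have hmemS : ∀ s, s ∈ S ↔ s ∈ ball (0:ℂ) 1 ∧ f s = w₀ := by
    intro s; rw [hSdef, Set.Finite.mem_toFinset]; rfl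
  have hord : ∀ s ∈ S, OrdAt (fun x => f x - w₀) s (zeroOrder (fun x => f x - w₀) s) ∧
      1 ≤ zeroOrder (fun x => f x - w₀) s := by
    intro s hs
    obtain ⟨hsD, hsf⟩ := (hmemS s).mp hs
    obtain ⟨m, h1, h2, h3⟩ := ord_of_sol hA hS hsD
    rw [h2]
    exact ⟨h1, h3 hsf⟩
  have hSne : S.Nonempty := by
    by_contra hne
    rw [Finset.not_nonempty_iff_eq_empty] at hne
    rw [hne, Finset.sum_empty] at hsum
    omega
  set R := S.sup' hSne (fun s => Complex.abs s) with hRdef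
  have hR1 : R < 1 := by
    rw [hRdef, Finset.sup'_lt_iff]
    intro s hs
    have := ((hmemS s).mp hs).1
    rwa [mem_ball, ← abs_eq_dist_zero] at this
  have hRmem : ∀ s ∈ S, Complex.abs s ≤ R := fun s hs => Finset.le_sup' _ hs
  have hR0 : 0 ≤ R := le_trans (Complex.abs.nonneg _) (hRmem _ hSne.choose_spec)
  -- radius ρ
  obtain ⟨ρ, hρ0, hρR, hρd⟩ : ∃ ρ > 0, ρ ≤ (1 - R)/2 ∧
      ∀ s ∈ S, ∀ t ∈ S, s ≠ t → 2*ρ ≤ dist s t := by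
    by_cases hP : (S.offDiag).Nonempty
    · set dm := S.offDiag.inf' hP (fun p => dist p.1 p.2) with hdm
      have hdm0 : 0 < dm := by
        rw [hdm, Finset.lt_inf'_iff]
        intro p hp
        have := (Finset.mem_offDiag.mp hp).2.2
        exact dist_pos.mpr this
      refine ⟨min ((1-R)/2) (dm/2), lt_min (by linarith) (by linarith), min_le_left _ _, ?_⟩
      intro s hs t ht hst
      have h2 : (s, t) ∈ S.offDiag := Finset.mem_offDiag.mpr ⟨hs, ht, hst⟩
      have := Finset.inf'_le (fun p => dist p.1 p.2) h2
      have h3 : 2 * min ((1-R)/2) (dm/2) ≤ 2 * (dm/2) := by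
        have := min_le_right ((1-R)/2) (dm/2); linarith
      simp only at this
      linarith
    · refine ⟨(1-R)/2, by linarith, le_refl _, ?_⟩
      intro s hs t ht hst
      exact absurd ⟨(s,t), Finset.mem_offDiag.mpr ⟨hs, ht, hst⟩⟩ hP
  have hRρ1 : R + ρ < 1 := by linarith
  have hballD : ∀ s ∈ S, ∀ z : ℂ, dist z s < ρ →
      z ∈ ball (0:ℂ) 1 ∧ Complex.abs z ≤ R + ρ := by
    intro s hs z hd
    have h1 : Complex.abs z ≤ R + ρ := by
      have h2 : dist z (0:ℂ) ≤ dist z s + dist s 0 := dist_triangle _ _ _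
      rw [← abs_eq_dist_zero] at h2
      rw [← abs_eq_dist_zero] at h2
      have := hRmem s hs
      linarith
    exact ⟨by rw [mem_ball, ← abs_eq_dist_zero]; linarith, h1⟩
  -- per-point epsilons from the splitting lemma
  have hsplit : ∀ s ∈ S, ∃ εs > 0, ∀ u : ℂ, u ≠ 0 → Complex.abs u < εs →
      ∃ T : Finset ℂ, T.card = zeroOrder (fun x => f x - w₀) s ∧
        ∀ z ∈ T, dist z s < ρ ∧ (fun x => f x - w₀) z = u := by
    intro s hs
    exact splitting (hord s hs).2 (hord s hs).1 hρ0
  choose! εf hεf0 hεfP using hsplit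
  set εm := S.inf' hSne εf with hεm
  have hεm0 : 0 < εm := by
    rw [hεm, Finset.lt_inf'_iff]
    exact fun s hs => hεf0 s hs
  -- choose index k
  obtain ⟨k₀, hk₀⟩ := exists_nat_one_div_lt (show (0:ℝ) < 1 - (R + ρ) by linarith)
  obtain ⟨N, hN⟩ := (Metric.tendsto_atTop.mp hψtend) εm hεm0
  set k := max N k₀ with hk
  set zstar := zs (ψ k) with hzstar
  have hψk : k ≤ ψ k := hψmono.le_apply
  have hzabs : R + ρ < Complex.abs zstar := by
    have h1 := hzs2 (ψ k)
    have h2 : 1/((ψ k : ℝ)+1) ≤ 1/((k:ℝ)+1) := by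
      apply one_div_le_one_div_of_le (by positivity)
      exact_mod_cast by omega
    have h3 : 1/((k:ℝ)+1) ≤ 1/((k₀:ℝ)+1) := by
      apply one_div_le_one_div_of_le (by positivity)
      have : k₀ ≤ k := le_max_right _ _
      exact_mod_cast by omega
    linarith
  set w := f zstar with hw
  have hzstarD : zstar ∈ ball (0:ℂ) 1 := hzs1 (ψ k)
  have hwD : w ∈ ball (0:ℂ) 1 := hmaps hzstarD
  have hwne : w ≠ w₀ := by
    intro hcontra
    have : zstar ∈ S := (hmemS zstar).mpr ⟨hzstarD, hcontra⟩
    have := hRmem zstar this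
    linarith
  have hwdist : dist w w₀ < εm := by
    have := hN k (le_max_left _ _)
    simpa [hw, hzstar] using this
  -- preimage finsets
  have hTs : ∀ s ∈ S, ∃ T : Finset ℂ, T.card = zeroOrder (fun x => f x - w₀) s ∧
      ∀ z ∈ T, dist z s < ρ ∧ f z = w := by
    intro s hs
    have h1 : Complex.abs (w - w₀) < εf s := by
      rw [← Complex.norm_eq_abs, ← Complex.dist_eq]
      exact lt_of_lt_of_le hwdist (Finset.inf'_le _ hs)
    obtain ⟨T, hT1, hT2⟩ := hεfP s hs (w - w₀) (sub_ne_zero.mpr hwne) h1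
    refine ⟨T, hT1, fun z hz => ⟨(hT2 z hz).1, ?_⟩⟩
    have := (hT2 z hz).2
    simp only at this
    have : f z - w₀ = w - w₀ := this
    linear_combination this
  choose! Tf hTf1 hTf2 using hTs
  have hdisj : ∀ s ∈ S, ∀ t ∈ S, s ≠ t → Disjoint (Tf s) (Tf t) := by
    intro s hs t ht hst
    rw [Finset.disjoint_left]
    intro z hzs hzt
    have h1 := (hTf2 s hs z hzs).1
    have h2 := (hTf2 t ht z hzt).1
    have h3 := hρd s hs t ht hst
    have h4 : dist s t ≤ dist s z + dist z t := dist_triangle _ _ _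
    rw [dist_comm s z] at h4
    linarith
  set TT := (S.biUnion Tf) ∪ {zstar} with hTT
  have hzstar_notin : zstar ∉ S.biUnion Tf := by
    intro hmem
    obtain ⟨s, hs, hzs'⟩ := Finset.mem_biUnion.mp hmem
    have := (hballD s hs zstar (hTf2 s hs zstar hzs').1).2
    linarith
  have hcard : TT.card = n + 1 := by
    rw [hTT, Finset.card_union_of_disjoint (by
      rw [Finset.disjoint_singleton_right]; exact hzstar_notin)]
    rw [Finset.card_biUnion hdisj, Finset.card_singleton]
    congr 1
    calc ∑ s ∈ S, (Tf s).card = ∑ s ∈ S, zeroOrder (fun x => f x - w₀) s :=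
          Finset.sum_congr rfl (fun s hs => hTf1 s hs)
      _ = n := hsum
  have hle := card_le_of_valence hA (hval w hwD) TT (by
    intro z hz
    rw [hTT, Finset.mem_union] at hz
    rcases hz with hz | hz
    · obtain ⟨s, hs, hzs'⟩ := Finset.mem_biUnion.mp hz
      exact ⟨(hballD s hs z (hTf2 s hs z hzs').1).1, (hTf2 s hs z hzs').2⟩
    · rw [Finset.mem_singleton] at hz
      subst hz
      exact ⟨hzstarD, rfl⟩)
  omega

/-! ### Factoring out the zeros -/

lemma factor_out : ∀ (c : ℕ) (F : ℂ → ℂ) (l : Multiset ℂ), Multiset.card l = c →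
    AnalyticOnNhd ℂ F (ball (0:ℂ) 1) → (∀ a ∈ l, a ∈ ball (0:ℂ) 1) →
    (∀ z ∈ ball (0:ℂ) 1, OrdAt F z (l.count z)) →
    ∃ G : ℂ → ℂ, AnalyticOnNhd ℂ G (ball (0:ℂ) 1) ∧ (∀ z ∈ ball (0:ℂ) 1, G z ≠ 0) ∧
      ∀ z ∈ ball (0:ℂ) 1, F z = (l.map (fun a => z - a)).prod * G z := by
  classical
  intro c
  induction c with
  | zero =>
    intro F l hc hA hmem hord
    rw [Multiset.card_eq_zero] at hc
    subst hc
    refine ⟨F, hA, fun z hz => ?_, fun z hz => ?_⟩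
    · have := hord z hz
      simp only [Multiset.count_zero] at this
      exact this.value_ne_zero
    · simp
  | succ c ih =>
    intro F l hc hA hmem hord
    have hlne : l ≠ 0 := by
      intro h; rw [h] at hc; simp at hc
    obtain ⟨a, ha⟩ := Multiset.exists_mem_of_ne_zero hlne
    have haD := hmem a ha
    set m := l.count a with hmdef
    have hm1 : 1 ≤ m := by
      rw [hmdef]; exact Multiset.one_le_count_iff_mem.mpr ha
    obtain ⟨g, hg, hg0, hev⟩ := hord a haD
    set F₁ := Function.update (fun z => F z / (z - a)) a ((0:ℂ)^(m-1) * g a) with hF₁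
    have hevA : F₁ =ᶠ[nhds a] (fun z => (z - a)^(m-1) * g z) := by
      filter_upwards [hev] with z hz
      by_cases hza : z = a
      · subst hza
        rw [hF₁, Function.update_self, sub_self]
      · rw [hF₁, Function.update_of_ne hza]
        have hzs : z - a ≠ 0 := sub_ne_zero.mpr hza
        have hm' : m = (m-1)+1 := (Nat.succ_pred_eq_of_pos hm1).symm
        have key : (z-a)^m = (z-a)^(m-1) * (z-a) := by
          conv_lhs => rw [hm']
          rw [pow_succ]
        rw [hz, key]
        field_simp
    have hF₁a : AnalyticAt ℂ F₁ a :=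
      (((analyticAt_id.sub analyticAt_const).pow _).mul hg).congr hevA.symm
    have hF₁A : AnalyticOnNhd ℂ F₁ (ball (0:ℂ) 1) := by
      intro z hz
      by_cases hza : z = a
      · subst hza; exact hF₁a
      · have hev2 : (fun x => F x / (x - a)) =ᶠ[nhds z] F₁ := by
          filter_upwards [eventually_ne_nhds hza] with x hx
          rw [hF₁, Function.update_of_ne hx]
        exact (((hA z hz).div (analyticAt_id.sub analyticAt_const)
          (sub_ne_zero.mpr hza))).congr hev2
    have hFz : ∀ z ∈ ball (0:ℂ) 1, F z = (z - a) * F₁ z := by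
      intro z hz
      by_cases hza : z = a
      · subst hza
        have hFa : F z = 0 := by
          have h2 := hev.self_of_nhds
          rw [sub_self, zero_pow (by omega), zero_mul] at h2
          exact h2
        rw [hFa, sub_self, zero_mul]
      · rw [hF₁, Function.update_of_ne hza, mul_comm,
          div_mul_cancel₀ _ (sub_ne_zero.mpr hza)]
    have hordF₁ : ∀ z ∈ ball (0:ℂ) 1, OrdAt F₁ z ((l.erase a).count z) := by
      intro z hz
      by_cases hza : z = a
      · subst hza
        rw [Multiset.count_erase_self, ← hmdef]
        exact ⟨g, hg, hg0, hevA⟩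
      · rw [Multiset.count_erase_of_ne hza]
        apply (hord z hz).congr_mul (u := fun x => (x - a)⁻¹)
          ((analyticAt_id.sub analyticAt_const).inv (sub_ne_zero.mpr hza))
          (inv_ne_zero (sub_ne_zero.mpr hza))
        filter_upwards [eventually_ne_nhds hza] with x hx
        rw [hF₁, Function.update_of_ne hx, div_eq_mul_inv]
    have hcard : Multiset.card (l.erase a) = c := by
      rw [Multiset.card_erase_of_mem ha, hc]
      rfl
    obtain ⟨G, hGA, hG0, hGfact⟩ := ih F₁ (l.erase a) hcard hF₁A
      (fun b hb => hmem b (Multiset.mem_of_mem_erase hb)) hordF₁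
    refine ⟨G, hGA, hG0, ?_⟩
    intro z hz
    rw [hFz z hz, hGfact z hz, ← mul_assoc]
    congr 1
    exact Multiset.prod_map_erase (f := fun b => z - b) ha

/-! ### Blaschke factor estimates -/

lemma blaschke_normSq_identity (a z : ℂ) :
    Complex.normSq (1 - (starRingEnd ℂ) a * z) - Complex.normSq (z - a)
      = (1 - Complex.normSq a) * (1 - Complex.normSq z) := by
  have h : ((1 - (starRingEnd ℂ) a * z) * (starRingEnd ℂ) (1 - (starRingEnd ℂ) a * z)
      - (z - a) * (starRingEnd ℂ) (z - a) : ℂ)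
      = (1 - a * (starRingEnd ℂ) a) * (1 - z * (starRingEnd ℂ) z) := by
    simp only [map_sub, map_mul, map_one, Complex.conj_conj]
    ring
  rw [Complex.mul_conj, Complex.mul_conj, Complex.mul_conj, Complex.mul_conj] at h
  exact_mod_cast h

lemma den_lower {a z : ℂ} (ha : Complex.abs a < 1) (hz : Complex.abs z ≤ 1) :
    1 - Complex.abs a ≤ Complex.abs (1 - (starRingEnd ℂ) a * z) := by
  have h1 : Complex.abs ((starRingEnd ℂ) a * z) ≤ Complex.abs a := by
    rw [map_mul, Complex.abs_conj]
    calc Complex.abs a * Complex.abs z ≤ Complex.abs a * 1 :=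
          mul_le_mul_of_nonneg_left hz (Complex.abs.nonneg a)
      _ = Complex.abs a := mul_one _
  have h2 : ‖(1:ℂ)‖ - ‖(starRingEnd ℂ) a * z‖ ≤ ‖1 - (starRingEnd ℂ) a * z‖ :=
    norm_sub_norm_le _ _
  simp only [Complex.norm_eq_abs, map_one] at h2
  linarith

lemma den_ne_zero {a z : ℂ} (ha : Complex.abs a < 1) (hz : Complex.abs z ≤ 1) :
    (1:ℂ) - (starRingEnd ℂ) a * z ≠ 0 := by
  intro h
  have := den_lower ha hz
  rw [h, map_zero] at this
  linarith

lemma blaschke_abs_le_one {a z : ℂ} (ha : Complex.abs a < 1) (hz : Complex.abs z ≤ 1) :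
    Complex.abs (blaschkeFactor a z) ≤ 1 := by
  rw [blaschkeFactor, map_div₀]
  rw [div_le_one_iff]
  left
  constructor
  · have := den_lower ha hz
    linarith
  · have hid := blaschke_normSq_identity a z
    have h1 : 0 ≤ (1 - Complex.normSq a) * (1 - Complex.normSq z) := by
      apply mul_nonneg
      · rw [Complex.normSq_eq_abs]; nlinarith [Complex.abs.nonneg a]
      · rw [Complex.normSq_eq_abs]; nlinarith [Complex.abs.nonneg z]
    have h2 : Complex.normSq (z - a) ≤ Complex.normSq (1 - (starRingEnd ℂ) a * z) := by
      linarith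
    rw [Complex.normSq_eq_abs, Complex.normSq_eq_abs] at h2
    nlinarith [Complex.abs.nonneg (z - a), Complex.abs.nonneg (1 - (starRingEnd ℂ) a * z)]

lemma blaschke_lower {a : ℂ} (ha : Complex.abs a < 1) {δ : ℝ} (hδ : 0 < δ) (hδ1 : δ < 1) :
    ∃ r, r < 1 ∧ ∀ z : ℂ, Complex.abs z < 1 → r < Complex.abs z →
      1 - δ < Complex.abs (blaschkeFactor a z) := by
  set β := (1 - Complex.abs a)^2 with hβ
  have hβ0 : 0 < β := by
    rw [hβ]
    have h1a : 0 < 1 - Complex.abs a := by linarith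
    positivity
  have hd2 : 0 < 1 - (1-δ)^2 := by nlinarith
  set c := β * (1 - (1-δ)^2) with hc
  have hc0 : 0 < c := by positivity
  set r := Real.sqrt (max (1-c) 0) with hr
  have hr1 : r < 1 := by
    have h1 : max (1-c) 0 < 1 := by
      rw [max_lt_iff]; constructor <;> linarith
    have := Real.sqrt_lt_sqrt (le_max_right (1-c) 0) h1
    rwa [Real.sqrt_one] at this
  refine ⟨r, hr1, ?_⟩
  intro z hz hrz
  have hzsq : 1 - c < Complex.abs z ^ 2 := by
    have h1 : r^2 < Complex.abs z ^ 2 := by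
      have h0 : 0 ≤ r := Real.sqrt_nonneg _
      nlinarith
    rw [hr, Real.sq_sqrt (le_max_right _ _)] at h1
    have := le_max_left (1-c) 0
    linarith
  have hid := blaschke_normSq_identity a z
  set A := Complex.normSq (z - a) with hA
  set Bd := Complex.normSq (1 - (starRingEnd ℂ) a * z) with hBd
  have hE1 : 1 - Complex.normSq a ≤ 1 := by
    have := Complex.normSq_nonneg a; linarith
  have hE0 : 0 ≤ 1 - Complex.normSq a := by
    rw [Complex.normSq_eq_abs]; nlinarith [Complex.abs.nonneg a]
  have hz1 : 0 ≤ 1 - Complex.normSq z := by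
    rw [Complex.normSq_eq_abs]; nlinarith [Complex.abs.nonneg z]
  have hEc : (1 - Complex.normSq a) * (1 - Complex.normSq z) < c := by
    have h2 : (1 - Complex.normSq a) * (1 - Complex.normSq z) ≤ 1 - Complex.normSq z := by
      nlinarith
    simp only [Complex.normSq_eq_abs] at h2 ⊢
    linarith
  have hBdβ : β ≤ Bd := by
    have h1 := den_lower ha hz.le
    rw [hBd, Complex.normSq_eq_abs]
    have h0 : 0 ≤ 1 - Complex.abs a := by linarith
    nlinarith
  have hBd0 : 0 < Bd := lt_of_lt_of_le hβ0 hBdβ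
  -- conclude
  have hkey : (1-δ)^2 * Bd < A := by
    have h3 : c ≤ Bd * (1 - (1-δ)^2) := by
      rw [hc]
      nlinarith
    nlinarith
  by_contra hcon
  push_neg at hcon
  have habs : Complex.abs (blaschkeFactor a z) ^ 2 ≤ (1-δ)^2 := by
    have h0 := Complex.abs.nonneg (blaschkeFactor a z)
    nlinarith
  rw [blaschkeFactor, map_div₀, div_pow, ← Complex.normSq_eq_abs, ← Complex.normSq_eq_abs] at habs
  rw [div_le_iff₀ hBd0] at habs
  linarith

lemma one_sub_sum_le_prod {ι : Type*} [DecidableEq ι] (s : Finset ι) (x : ι → ℝ)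
    (h0 : ∀ i ∈ s, 0 ≤ x i) (h1 : ∀ i ∈ s, x i ≤ 1) :
    1 - ∑ i ∈ s, (1 - x i) ≤ ∏ i ∈ s, x i := by
  induction s using Finset.induction_on with
  | empty => simp
  | @insert a s hnotmem ih =>
    rw [Finset.prod_insert hnotmem, Finset.sum_insert hnotmem]
    have IH := ih (fun i hi => h0 i (Finset.mem_insert_of_mem hi))
      (fun i hi => h1 i (Finset.mem_insert_of_mem hi))
    have ha0 := h0 a (Finset.mem_insert_self a s)
    have ha1 := h1 a (Finset.mem_insert_self a s)
    have hsum0 : 0 ≤ ∑ i ∈ s, (1 - x i) :=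
      Finset.sum_nonneg (fun i hi => by linarith [h1 i (Finset.mem_insert_of_mem hi)])
    have hprod0 : 0 ≤ ∏ i ∈ s, x i :=
      Finset.prod_nonneg (fun i hi => h0 i (Finset.mem_insert_of_mem hi))
    nlinarith

lemma Bprod_lower {n : ℕ} (hn : 0 < n) (a : Fin n → ℂ) (ha : ∀ i, Complex.abs (a i) < 1)
    {δ : ℝ} (hδ : 0 < δ) (hδ1 : δ < 1) :
    ∃ r, r < 1 ∧ ∀ z : ℂ, Complex.abs z < 1 → r < Complex.abs z →
      1 - δ < Complex.abs (∏ i, blaschkeFactor (a i) z) := by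
  set δ' := δ/(n+1) with hδ'
  have hδ'0 : 0 < δ' := by positivity
  have hδ'1 : δ' < 1 := by
    rw [hδ', div_lt_one (by positivity)]
    have : (1:ℝ) ≤ n + 1 := by exact_mod_cast Nat.succ_le_succ (Nat.zero_le n)
    linarith
  have per : ∀ i : Fin n, ∃ r, r < 1 ∧ ∀ z : ℂ, Complex.abs z < 1 → r < Complex.abs z →
      1 - δ' < Complex.abs (blaschkeFactor (a i) z) :=
    fun i => blaschke_lower (ha i) hδ'0 hδ'1
  choose rf hrf1 hrf2 using per
  have hne : (Finset.univ : Finset (Fin n)).Nonempty := Finset.univ_nonempty_iff.mpr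
    (Fin.pos_iff_nonempty.mp hn)
  set r := Finset.univ.sup' hne rf with hrdef
  refine ⟨max r 0, max_lt ((Finset.sup'_lt_iff hne).mpr (fun i _ => hrf1 i)) one_pos, ?_⟩
  intro z hz hrz
  rw [max_lt_iff] at hrz
  have hper : ∀ i : Fin n, 1 - δ' < Complex.abs (blaschkeFactor (a i) z) := by
    intro i
    apply hrf2 i z hz
    exact lt_of_le_of_lt (Finset.le_sup' rf (Finset.mem_univ i)) hrz.1
  have hprodabs : Complex.abs (∏ i, blaschkeFactor (a i) z)
      = ∏ i, Complex.abs (blaschkeFactor (a i) z) := by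
    simpa [Complex.norm_eq_abs] using norm_prod (Finset.univ) (fun i => blaschkeFactor (a i) z)
  rw [hprodabs]
  have hle1 : ∀ i : Fin n, Complex.abs (blaschkeFactor (a i) z) ≤ 1 :=
    fun i => blaschke_abs_le_one (ha i) hz.le
  have h1 := one_sub_sum_le_prod Finset.univ (fun i => Complex.abs (blaschkeFactor (a i) z))
    (fun i _ => Complex.abs.nonneg _) (fun i _ => hle1 i)
  have h2 : ∑ i : Fin n, (1 - Complex.abs (blaschkeFactor (a i) z)) < ∑ _i : Fin n, δ' := by
    apply Finset.sum_lt_sum_of_nonempty hne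
    intro i _
    linarith [hper i]
  rw [Finset.sum_const, Finset.card_univ, Fintype.card_fin, nsmul_eq_mul] at h2
  have h3 : (n:ℝ) * δ' < δ := by
    have hpos : (0:ℝ) < (n:ℝ)+1 := by positivity
    rw [hδ', ← mul_div_assoc, div_lt_iff₀ hpos]
    have hn0 : (0:ℝ) ≤ n := Nat.cast_nonneg n
    nlinarith
  linarith

/-! ### Maximum modulus with boundary control -/

lemma mem_unit_ball_iff {z : ℂ} : z ∈ ball (0:ℂ) 1 ↔ Complex.abs z < 1 := by
  rw [mem_ball, ← abs_eq_dist_zero]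

lemma bound_via_boundary {h : ℂ → ℂ} (hd : DifferentiableOn ℂ h (ball (0:ℂ) 1))
    (hb : ∀ δ : ℝ, 0 < δ → δ < 1 → ∃ r, r < 1 ∧ ∀ z ∈ ball (0:ℂ) 1,
      r < Complex.abs z → Complex.abs (h z) ≤ 1 + δ) :
    ∀ z ∈ ball (0:ℂ) 1, Complex.abs (h z) ≤ 1 := by
  intro z hz
  have key : ∀ δ : ℝ, 0 < δ → δ < 1 → Complex.abs (h z) ≤ 1 + δ := by
    intro δ hδ0 hδ1
    obtain ⟨r, hr1, hr⟩ := hb δ hδ0 hδ1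
    set r₁ := max (max r (Complex.abs z)) (1/2) with hr₁
    set r₂ := (r₁ + 1)/2 with hr₂
    have hr₁0 : (1:ℝ)/2 ≤ r₁ := le_max_right _ _
    have hr₁1 : r₁ < 1 := by
      rw [hr₁, max_lt_iff, max_lt_iff]
      refine ⟨⟨hr1, ?_⟩, by norm_num⟩
      rwa [← mem_unit_ball_iff]
    have hr₂1 : r₂ < 1 := by rw [hr₂]; linarith
    have hr₂r₁ : r₁ < r₂ := by rw [hr₂]; linarith
    have hr₂0 : (0:ℝ) < r₂ := by rw [hr₂]; linarith
    have hsub : closure (ball (0:ℂ) r₂) ⊆ ball (0:ℂ) 1 := by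
      rw [closure_ball (0:ℂ) hr₂0.ne']
      exact closedBall_subset_ball hr₂1
    have hdc : DiffContOnCl ℂ h (ball (0:ℂ) r₂) := (hd.mono hsub).diffContOnCl
    have hfr : ∀ x ∈ frontier (ball (0:ℂ) r₂), ‖h x‖ ≤ 1 + δ := by
      intro x hx
      rw [frontier_ball (0:ℂ) hr₂0.ne'] at hx
      have hxabs : Complex.abs x = r₂ := by
        rw [mem_sphere, ← abs_eq_dist_zero] at hx
        exact hx
      have hxD : x ∈ ball (0:ℂ) 1 := by
        rw [mem_unit_ball_iff, hxabs]; exact hr₂1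
      rw [Complex.norm_eq_abs]
      apply hr x hxD
      rw [hxabs]
      calc r ≤ r₁ := le_trans (le_max_left _ _) (le_max_left _ _)
        _ < r₂ := hr₂r₁
    have hzin : z ∈ closure (ball (0:ℂ) r₂) := by
      apply subset_closure
      rw [mem_ball, ← abs_eq_dist_zero]
      calc Complex.abs z ≤ r₁ := le_trans (le_max_right _ _) (le_max_left _ _)
        _ < r₂ := hr₂r₁
    have := Complex.norm_le_of_forall_mem_frontier_norm_le isBounded_ball hdc hfr hzin
    rwa [Complex.norm_eq_abs] at this
  by_contra hcon
  push_neg at hcon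
  set δ := min ((Complex.abs (h z) - 1)/2) (1/2) with hδ
  have hδ0 : 0 < δ := lt_min (by linarith) (by norm_num)
  have hδ1 : δ < 1 := lt_of_le_of_lt (min_le_right _ _) (by norm_num)
  have := key δ hδ0 hδ1
  have h2 : δ ≤ (Complex.abs (h z) - 1)/2 := min_le_left _ _
  linarith

/-! ### Main theorem -/

theorem stmt_1 (f : ℂ → ℂ) (hf : DifferentiableOn ℂ f (ball (0:ℂ) 1))
    (hmaps : Set.MapsTo f (ball (0:ℂ) 1) (ball (0:ℂ) 1)) (n : ℕ) (hn : 0 < n)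
    (hval : ∀ w ∈ ball (0:ℂ) 1, HasValence f (ball (0:ℂ) 1) w n) :
    IsFiniteBlaschkeDeg n f := by
  classical
  have hA : AnalyticOnNhd ℂ f (ball (0:ℂ) 1) := hf.analyticOnNhd isOpen_ball
  have h0D : (0:ℂ) ∈ ball (0:ℂ) 1 := mem_ball_self one_pos
  obtain ⟨hS, hsum⟩ := hval 0 h0D
  have hfun : (fun x => f x - (0:ℂ)) = f := by funext x; ring
  rw [hfun] at hsum
  set S := hS.toFinset with hSdef
  have hmemS : ∀ s, s ∈ S ↔ s ∈ ball (0:ℂ) 1 ∧ f s = 0 := by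
    intro s; rw [hSdef, Set.Finite.mem_toFinset]; rfl
  -- the multiset of zeros with multiplicity
  set l : Multiset ℂ := ∑ s ∈ S, Multiset.replicate (zeroOrder f s) s with hl
  have hcount : ∀ z : ℂ, l.count z = if z ∈ S then zeroOrder f z else 0 := by
    intro z
    rw [hl, Multiset.count_sum']
    simp only [Multiset.count_replicate]
    exact Finset.sum_ite_eq' S z (fun s => zeroOrder f s)
  have hcard : Multiset.card l = n := by
    rw [hl]
    have hcs : Multiset.card (∑ s ∈ S, Multiset.replicate (zeroOrder f s) s)
        = ∑ s ∈ S, Multiset.card (Multiset.replicate (zeroOrder f s) s) := by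
      induction S using Finset.induction_on with
      | empty => simp
      | @insert a s ha ih =>
        rw [Finset.sum_insert ha, Finset.sum_insert ha, Multiset.card_add, ih]
    rw [hcs]
    simp only [Multiset.card_replicate]
    exact hsum
  have hmeml : ∀ b ∈ l, b ∈ ball (0:ℂ) 1 := by
    intro b hb
    rw [hl, Multiset.mem_sum] at hb
    obtain ⟨s, hs, hbs⟩ := hb
    rw [Multiset.eq_of_mem_replicate hbs]
    exact ((hmemS s).mp hs).1
  have hordl : ∀ z ∈ ball (0:ℂ) 1, OrdAt f z (l.count z) := by
    intro z hz
    rw [hcount z]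
    by_cases hzS : z ∈ S
    · rw [if_pos hzS]
      obtain ⟨m, h1, h2, _⟩ := ord_of_sol hA hS hz
      rw [hfun] at h1 h2
      rw [h2]
      exact h1
    · rw [if_neg hzS]
      have hfz : f z ≠ 0 := fun h => hzS ((hmemS z).mpr ⟨hz, h⟩)
      exact ordAt_zero_of_ne (hA z hz) hfz
  obtain ⟨G, hGA, hG0, hGfact⟩ := factor_out n f l hcard hA hmeml hordl
  -- enumerate the zeros
  set L := l.toList with hL
  have hLlen : L.length = n := by rw [hL, Multiset.length_toList, hcard]
  set a : Fin n → ℂ := fun i => L.get (Fin.cast hLlen.symm i) with ha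
  have haD : ∀ i, a i ∈ ball (0:ℂ) 1 := by
    intro i
    apply hmeml
    rw [← Multiset.mem_toList, ← hL]
    exact List.get_mem L _
  have haabs : ∀ i, Complex.abs (a i) < 1 := fun i => mem_unit_ball_iff.mp (haD i)
  have hprodl : ∀ (Φ : ℂ → ℂ), ∏ i, Φ (a i) = (l.map Φ).prod := by
    intro Φ
    have hmap : L.map Φ = List.ofFn (Φ ∘ L.get) := by
      conv_lhs => rw [← List.ofFn_get L]
      rw [List.map_ofFn]
    calc ∏ i : Fin n, Φ (a i) = ∏ j : Fin L.length, Φ (L.get j) :=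
          Equiv.prod_comp (finCongr hLlen.symm) (fun j => Φ (L.get j))
      _ = (List.ofFn (Φ ∘ L.get)).prod := (List.prod_ofFn).symm
      _ = (L.map Φ).prod := by rw [hmap]
      _ = (l.map Φ).prod := by
          conv_rhs => rw [← Multiset.coe_toList l, ← hL]
          rw [Multiset.map_coe, Multiset.prod_coe]
  -- f = B * g with g = den * G
  set g : ℂ → ℂ := fun z => (∏ i, (1 - (starRingEnd ℂ) (a i) * z)) * G z with hgdef
  have hfB : ∀ z ∈ ball (0:ℂ) 1, f z = (∏ i, blaschkeFactor (a i) z) * g z := by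
    intro z hz
    have hfz := hGfact z hz
    rw [← hprodl (fun b => z - b)] at hfz
    rw [hfz, hgdef, ← mul_assoc, ← Finset.prod_mul_distrib]
    congr 1
    apply Finset.prod_congr rfl
    intro i _
    rw [blaschkeFactor, div_mul_cancel₀]
    exact den_ne_zero (haabs i) (mem_unit_ball_iff.mp hz).le
  have hgd : DifferentiableOn ℂ g (ball (0:ℂ) 1) := by
    apply DifferentiableOn.mul _ hGA.differentiableOn
    apply Differentiable.differentiableOn
    apply Differentiable.fun_finsetProd
    intro i _
    exact (differentiable_const _).sub ((differentiable_const _).mul differentiable_id)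
  have hgne : ∀ z ∈ ball (0:ℂ) 1, g z ≠ 0 := by
    intro z hz
    rw [hgdef]
    apply mul_ne_zero _ (hG0 z hz)
    rw [Finset.prod_ne_zero_iff]
    intro i _
    exact den_ne_zero (haabs i) (mem_unit_ball_iff.mp hz).le
  have hBle : ∀ z : ℂ, Complex.abs z ≤ 1 → Complex.abs (∏ i, blaschkeFactor (a i) z) ≤ 1 := by
    intro z hz
    have : Complex.abs (∏ i, blaschkeFactor (a i) z)
        = ∏ i, Complex.abs (blaschkeFactor (a i) z) := by
      simpa [Complex.norm_eq_abs] using norm_prod Finset.univ (fun i => blaschkeFactor (a i) z)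
    rw [this]
    exact Finset.prod_le_one (fun i _ => Complex.abs.nonneg _)
      (fun i _ => blaschke_abs_le_one (haabs i) hz)
  have habsmul : ∀ z ∈ ball (0:ℂ) 1, Complex.abs (f z)
      = Complex.abs (∏ i, blaschkeFactor (a i) z) * Complex.abs (g z) := by
    intro z hz
    rw [hfB z hz, map_mul]
  -- |g| ≤ 1
  have hgb : ∀ z ∈ ball (0:ℂ) 1, Complex.abs (g z) ≤ 1 := by
    apply bound_via_boundary hgd
    intro δ hδ0 hδ1
    have hδ₂0 : 0 < δ/(1+δ) := by positivity
    have hδ₂1 : δ/(1+δ) < 1 := by rw [div_lt_one (by linarith)]; linarith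
    obtain ⟨r, hr1, hr⟩ := Bprod_lower hn a haabs hδ₂0 hδ₂1
    refine ⟨r, hr1, fun z hz hrz => ?_⟩
    have hzabs := mem_unit_ball_iff.mp hz
    have hB := hr z hzabs hrz
    have h1δ : 1 - δ/(1+δ) = 1/(1+δ) := by field_simp; ring
    have hf1 : Complex.abs (f z) ≤ 1 := (mem_unit_ball_iff.mp (hmaps hz)).le
    have hBpos : 0 < Complex.abs (∏ i, blaschkeFactor (a i) z) := by
      rw [h1δ] at hB
      have : (0:ℝ) < 1/(1+δ) := by positivity
      linarith
    have hgval : Complex.abs (g z)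
        = Complex.abs (f z) / Complex.abs (∏ i, blaschkeFactor (a i) z) := by
      rw [habsmul z hz, mul_comm, mul_div_assoc, div_self hBpos.ne', mul_one]
    rw [hgval]
    calc Complex.abs (f z) / Complex.abs (∏ i, blaschkeFactor (a i) z)
        ≤ 1 / (1/(1+δ)) := by
          apply div_le_div₀ zero_le_one hf1 (by positivity)
          rw [← h1δ]; linarith
      _ = 1 + δ := by rw [one_div_one_div]
  -- |g⁻¹| ≤ 1, via properness
  have hproper := proper_boundary hA hn hval hmaps
  have hginvb : ∀ z ∈ ball (0:ℂ) 1, Complex.abs ((g z)⁻¹) ≤ 1 := by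
    apply bound_via_boundary (hgd.inv hgne)
    intro δ hδ0 hδ1
    have hε0 : 0 < δ/(1+δ) := by positivity
    have hε1 : δ/(1+δ) < 1 := by rw [div_lt_one (by linarith)]; linarith
    obtain ⟨r, hr1, hr⟩ := hproper (δ/(1+δ)) hε0 hε1
    refine ⟨r, hr1, fun z hz hrz => ?_⟩
    have hzabs := mem_unit_ball_iff.mp hz
    have hfz := hr z hz hrz
    have h1δ : 1 - δ/(1+δ) = 1/(1+δ) := by field_simp; ring
    have hfpos : 0 < Complex.abs (f z) := by
      rw [h1δ] at hfz
      have : (0:ℝ) < 1/(1+δ) := by positivity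
      linarith
    have hgpos : 0 < Complex.abs (g z) := by
      rw [AbsoluteValue.pos_iff]
      exact hgne z hz
    have hBpos : 0 < Complex.abs (∏ i, blaschkeFactor (a i) z) := by
      by_contra hc
      push_neg at hc
      have h0 : Complex.abs (∏ i, blaschkeFactor (a i) z) = 0 :=
        le_antisymm hc (Complex.abs.nonneg _)
      rw [habsmul z hz, h0, zero_mul] at hfpos
      exact lt_irrefl 0 hfpos
    have hval' : (Complex.abs (g z))⁻¹
        = Complex.abs (∏ i, blaschkeFactor (a i) z) / Complex.abs (f z) := by
      rw [habsmul z hz, div_mul_cancel_left₀ hBpos.ne']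
    rw [Pi.inv_apply, map_inv₀, hval']
    calc Complex.abs (∏ i, blaschkeFactor (a i) z) / Complex.abs (f z)
        ≤ 1 / (1/(1+δ)) := by
          apply div_le_div₀ zero_le_one (hBle z hzabs.le) (by positivity)
          rw [← h1δ]; linarith
      _ = 1 + δ := by rw [one_div_one_div]
  have hg1 : ∀ z ∈ ball (0:ℂ) 1, Complex.abs (g z) = 1 := by
    intro z hz
    have h1 := hgb z hz
    have h2 := hginvb z hz
    rw [map_inv₀] at h2
    have hgpos : 0 < Complex.abs (g z) := by
      rw [AbsoluteValue.pos_iff]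
      exact hgne z hz
    have h3 : 1 ≤ Complex.abs (g z) := by
      rw [inv_le_one_iff₀] at h2
      rcases h2 with h2 | h2
      · linarith
      · exact h2
    linarith
  -- g is constant
  have hmax : IsMaxOn (norm ∘ g) (ball (0:ℂ) 1) 0 := by
    intro z hz
    simp only [Function.comp_apply, Complex.norm_eq_abs, Set.mem_setOf_eq]
    rw [hg1 z hz, hg1 0 h0D]
  have hconst := Complex.eqOn_of_isPreconnected_of_isMaxOn_norm
    (convex_ball (0:ℂ) 1).isPreconnected isOpen_ball hgd h0D hmax
  refine ⟨g 0, a, ?_, haD, ?_⟩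
  · exact hg1 0 h0D
  · intro z hz
    rw [hfB z hz]
    have : g z = g 0 := hconst hz
    rw [this, mul_comm]
end

section
/- The set of finite Blaschke products on the unit disc is closed under composition: if f and g are finite Blaschke products, then so is f ∘ g. -/
open Complex Metric MeasureTheory Set Filter

open Polynomial

lemma normSq_id (a z : ℂ) :
    normSq (1 - (starRingEnd ℂ) a * z) - normSq (z - a) = (1 - normSq a) * (1 - normSq z) := by
  simp only [normSq_apply, sub_re, sub_im, mul_re, mul_im, one_re, one_im,
    Complex.conj_re, Complex.conj_im]
  ring

lemma denom_ne {a z : ℂ} (ha : ‖a‖ < 1) (hz : ‖z‖ < 1) :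
    1 - (starRingEnd ℂ) a * z ≠ 0 := by
  intro h
  have h2 : ‖(starRingEnd ℂ) a * z‖ = 1 := by
    have := sub_eq_zero.mp h; rw [← this]; simp
  rw [norm_mul, Complex.norm_conj] at h2
  nlinarith [norm_nonneg a, norm_nonneg z]

lemma blaschke_lt {a z : ℂ} (ha : ‖a‖ < 1) (hz : ‖z‖ < 1) :
    ‖blaschkeFactor a z‖ < 1 := by
  have hd := denom_ne ha hz
  have hd' : 0 < ‖1 - (starRingEnd ℂ) a * z‖ := by
    simpa [norm_pos_iff] using hd
  rw [blaschkeFactor, norm_div, div_lt_one hd']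
  have key := normSq_id a z
  have h1 : 0 < (1 - normSq a) * (1 - normSq z) := by
    have ha2 : normSq a < 1 := by
      rw [Complex.normSq_eq_norm_sq]; nlinarith [norm_nonneg a]
    have hz2 : normSq z < 1 := by
      rw [Complex.normSq_eq_norm_sq]; nlinarith [norm_nonneg z]
    exact mul_pos (by linarith) (by linarith)
  have h2 : normSq (z - a) < normSq (1 - (starRingEnd ℂ) a * z) := by linarith
  have := Complex.normSq_eq_norm_sq (z - a)
  have := Complex.normSq_eq_norm_sq (1 - (starRingEnd ℂ) a * z)
  nlinarith [norm_nonneg (z - a)]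

lemma blaschke_ge {b c : ℂ} (hb : ‖b‖ < 1) (hc : 1 ≤ ‖c‖) :
    ‖1 - (starRingEnd ℂ) b * c‖ ≤ ‖c - b‖ := by
  have key := normSq_id b c
  have h1 : (1 - normSq b) * (1 - normSq c) ≤ 0 := by
    have hb2 : normSq b < 1 := by
      rw [Complex.normSq_eq_norm_sq]; nlinarith [norm_nonneg b]
    have hc2 : 1 ≤ normSq c := by
      rw [Complex.normSq_eq_norm_sq]; nlinarith
    exact mul_nonpos_of_nonneg_of_nonpos (by linarith) (by linarith)
  have h2 : normSq (1 - (starRingEnd ℂ) b * c) ≤ normSq (c - b) := by linarith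
  have e1 := Complex.normSq_eq_norm_sq (c - b)
  have e2 := Complex.normSq_eq_norm_sq (1 - (starRingEnd ℂ) b * c)
  nlinarith [norm_nonneg (c - b), norm_nonneg (1 - (starRingEnd ℂ) b * c)]

lemma gball {m : ℕ} (hm : 0 < m) {g : ℂ → ℂ} {μ : ℂ} {b : Fin m → ℂ}
    (hμ : ‖μ‖ = 1) (hb : ∀ i, ‖b i‖ < 1)
    (hgeq : ∀ z ∈ ball (0:ℂ) 1, g z = μ * ∏ i, blaschkeFactor (b i) z)
    {z : ℂ} (hz : ‖z‖ < 1) : ‖g z‖ < 1 := by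
  have hz' : z ∈ ball (0:ℂ) 1 := by simpa [mem_ball_zero_iff] using hz
  rw [hgeq z hz', norm_mul, hμ, one_mul, norm_prod]
  set i0 : Fin m := ⟨0, hm⟩
  have h0 := (Finset.mul_prod_erase Finset.univ
    (fun i => ‖blaschkeFactor (b i) z‖) (Finset.mem_univ i0)).symm
  rw [h0]
  have hrest : ∏ i ∈ Finset.univ.erase i0, ‖blaschkeFactor (b i) z‖ ≤ 1 :=
    Finset.prod_le_one (fun i _ => norm_nonneg _)
      (fun i _ => le_of_lt (blaschke_lt (hb i) hz))
  calc ‖blaschkeFactor (b i0) z‖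
        * ∏ i ∈ Finset.univ.erase i0, ‖blaschkeFactor (b i) z‖
      ≤ ‖blaschkeFactor (b i0) z‖ * 1 :=
        mul_le_mul_of_nonneg_left hrest (norm_nonneg _)
    _ < 1 := by rw [mul_one]; exact blaschke_lt (hb i0) hz

local notation "cj" => starRingEnd ℂ

lemma comp_factor {m : ℕ} (hm : 0 < m) {g : ℂ → ℂ} {μ : ℂ} {b : Fin m → ℂ}
    (hμ : ‖μ‖ = 1) (hb : ∀ i, ‖b i‖ < 1)
    (hgeq : ∀ z ∈ ball (0:ℂ) 1, g z = μ * ∏ i, blaschkeFactor (b i) z)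
    {a : ℂ} (ha : ‖a‖ < 1) :
    IsFiniteBlaschkeDeg m (fun z => blaschkeFactor a (g z)) := by
  classical
  set A : ℂ[X] := ∏ i, (X - C (b i)) with hA
  set B : ℂ[X] := ∏ i, (1 - C (cj (b i)) * X) with hB
  set P : ℂ[X] := C μ * A - C a * B with hP
  set Q : ℂ[X] := B - C (cj a * μ) * A with hQ
  have hAeval : ∀ z : ℂ, A.eval z = ∏ i, (z - b i) := by
    intro z; simp [hA, eval_prod]
  have hBeval : ∀ z : ℂ, B.eval z = ∏ i, (1 - cj (b i) * z) := by
    intro z; simp [hB, eval_prod]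
  have hBne : ∀ z : ℂ, ‖z‖ < 1 → B.eval z ≠ 0 := by
    intro z hz
    rw [hBeval]
    exact Finset.prod_ne_zero_iff.mpr (fun i _ => denom_ne (hb i) hz)
  have hgPB : ∀ z : ℂ, ‖z‖ < 1 → g z * B.eval z = μ * A.eval z := by
    intro z hz
    have hz' : z ∈ ball (0:ℂ) 1 := by simpa [mem_ball_zero_iff] using hz
    rw [hgeq z hz', hAeval, hBeval, mul_assoc]
    congr 1
    rw [← Finset.prod_mul_distrib]
    apply Finset.prod_congr rfl
    intro i _
    exact div_mul_cancel₀ _ (denom_ne (hb i) hz)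
  have hgz : ∀ z : ℂ, ‖z‖ < 1 → ‖g z‖ < 1 :=
    fun z hz => gball hm hμ hb hgeq hz
  have hPev : ∀ z : ℂ, ‖z‖ < 1 → P.eval z = (g z - a) * B.eval z := by
    intro z hz
    simp only [hP, eval_sub, eval_mul, eval_C]
    linear_combination -hgPB z hz
  have hQev : ∀ z : ℂ, ‖z‖ < 1 → Q.eval z = (1 - cj a * g z) * B.eval z := by
    intro z hz
    simp only [hQ, eval_sub, eval_mul, eval_C]
    linear_combination cj a * hgPB z hz
  have hQne : ∀ z : ℂ, ‖z‖ < 1 → Q.eval z ≠ 0 := by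
    intro z hz
    rw [hQev z hz]
    exact mul_ne_zero (denom_ne ha (hgz z hz)) (hBne z hz)
  have hBF : ∀ z : ℂ, ‖z‖ < 1 →
      blaschkeFactor a (g z) = P.eval z / Q.eval z := by
    intro z hz
    rw [blaschkeFactor, hPev z hz, hQev z hz, mul_div_mul_right _ _ (hBne z hz)]
  -- the reflection identity
  have hcw : ∀ z : ℂ, cj ((cj z)⁻¹) = z⁻¹ := by
    intro z; rw [map_inv₀, Complex.conj_conj]
  have hkey : ∀ z : ℂ, z ≠ 0 → Q.eval z = μ * z ^ m * cj (P.eval ((cj z)⁻¹)) := by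
    intro z hz
    have hzm : z ^ m = ∏ _i : Fin m, z := by simp
    have e1 : z ^ m * ∏ i, (z⁻¹ - cj (b i)) = B.eval z := by
      rw [hBeval, hzm, ← Finset.prod_mul_distrib]
      apply Finset.prod_congr rfl
      intro i _
      rw [mul_sub, mul_inv_cancel₀ hz]; ring
    have e2 : z ^ m * ∏ i, (1 - b i * z⁻¹) = A.eval z := by
      rw [hAeval, hzm, ← Finset.prod_mul_distrib]
      apply Finset.prod_congr rfl
      intro i _
      rw [mul_sub, mul_one, mul_comm (b i) z⁻¹, ← mul_assoc, mul_inv_cancel₀ hz]; ring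
    have e3 : cj (P.eval ((cj z)⁻¹)) =
        cj μ * ∏ i, (z⁻¹ - cj (b i)) - cj a * ∏ i, (1 - b i * z⁻¹) := by
      simp only [hP, eval_sub, eval_mul, eval_C, hAeval, hBeval, map_sub, map_mul,
        map_prod, map_one, hcw, Complex.conj_conj]
    have e4 : μ * cj μ = 1 := by
      rw [Complex.mul_conj]
      norm_cast
      rw [Complex.normSq_eq_norm_sq, hμ]; norm_num
    have eQ : Q.eval z = B.eval z - cj a * μ * A.eval z := by
      simp only [hQ, eval_sub, eval_mul, eval_C]
    rw [eQ, e3]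
    linear_combination (-(μ * cj μ)) * e1 + (μ * cj a) * e2 + (-(B.eval z)) * e4
  have hQ0 : Q.eval 0 ≠ 0 := hQne 0 (by norm_num)
  -- P is nonzero
  have hPne : P ≠ 0 := by
    intro h0
    apply hQ0
    have hQzero : Q = 0 := by
      apply Q.eq_zero_of_infinite_isRoot
      apply Set.Infinite.mono (s := ({0}ᶜ : Set ℂ))
      · intro z hz
        have := hkey z hz
        simp only [h0, eval_zero, map_zero, mul_zero] at this
        exact this
      · exact (Set.finite_singleton 0).infinite_compl
    rw [hQzero, eval_zero]
  have hsplit : P.Splits := IsAlgClosed.splits P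
  have hcard : P.roots.card = P.natDegree := (splits_iff_card_roots).mp hsplit
  have hPfac : P = C P.leadingCoeff * (P.roots.map fun c => X - C c).prod :=
    hsplit.eq_prod_roots
  have hlcne : P.leadingCoeff ≠ 0 := leadingCoeff_ne_zero.mpr hPne
  -- degree bounds
  have hdegA : A.natDegree = m := by
    rw [hA, natDegree_prod _ _ (fun i _ => X_sub_C_ne_zero (b i))]
    simp
  have hdegB : B.natDegree ≤ m := by
    calc B.natDegree ≤ ∑ i : Fin m, (1 - C (cj (b i)) * X : ℂ[X]).natDegree :=
          natDegree_prod_le _ _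
      _ ≤ ∑ _i : Fin m, 1 := by
          apply Finset.sum_le_sum
          intro i _
          have : (1 - C (cj (b i)) * X : ℂ[X]) = C (-(cj (b i))) * X + C 1 := by
            simp; ring
          rw [this]
          exact natDegree_linear_le
      _ = m := by simp
  have hdegP : P.natDegree ≤ m := by
    apply le_trans (natDegree_sub_le _ _)
    apply max_le
    · exact le_trans (natDegree_C_mul_le _ _) (le_of_eq hdegA)
    · exact le_trans (natDegree_C_mul_le _ _) hdegB
  -- all roots lie in the ball
  have hroots : ∀ c ∈ P.roots, ‖c‖ < 1 := by
    intro c hc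
    by_contra hge
    push_neg at hge
    have hcr : P.eval c = 0 := isRoot_of_mem_roots hc
    have hMA : μ * A.eval c = a * B.eval c := by
      have : P.eval c = 0 := isRoot_of_mem_roots hc
      simp only [hP, eval_sub, eval_mul, eval_C] at this
      linear_combination this
    have habs : ‖A.eval c‖ = ‖a‖ * ‖B.eval c‖ := by
      have := congrArg (fun x : ℂ => ‖x‖) hMA
      rwa [norm_mul, norm_mul, hμ, one_mul] at this
    have hBA : ‖B.eval c‖ ≤ ‖A.eval c‖ := by
      rw [hAeval, hBeval, norm_prod, norm_prod]
      exact Finset.prod_le_prod (fun i _ => norm_nonneg _)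
        (fun i _ => blaschke_ge (hb i) hge)
    have hApos : 0 < ‖A.eval c‖ := by
      rw [hAeval, norm_prod]
      apply Finset.prod_pos
      intro i _
      rw [norm_pos_iff, sub_ne_zero]
      intro h
      rw [h] at hge
      exact absurd (hb i) (not_lt.mpr hge)
    have h1 : ‖a‖ * ‖B.eval c‖ ≤ ‖a‖ * ‖A.eval c‖ :=
      mul_le_mul_of_nonneg_left hBA (norm_nonneg a)
    have h2 : ‖a‖ * ‖A.eval c‖ < 1 * ‖A.eval c‖ :=
      mul_lt_mul_of_pos_right ha hApos
    linarith
  -- factorization of Q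
  have hQfac : Q = C (μ * cj P.leadingCoeff) *
      (P.roots.map fun c => 1 - C (cj c) * X).prod * X ^ (m - P.natDegree) := by
    apply eq_of_infinite_eval_eq
    apply Set.Infinite.mono (s := ({0}ᶜ : Set ℂ))
    swap
    · exact (Set.finite_singleton 0).infinite_compl
    intro z hz
    simp only [Set.mem_setOf_eq]
    rw [hkey z hz]
    have hPez : P.eval ((cj z)⁻¹) =
        P.leadingCoeff * (P.roots.map fun c => (cj z)⁻¹ - c).prod := by
      conv_lhs => rw [hPfac]
      rw [eval_mul, eval_C, eval_multiset_prod, Multiset.map_map]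
      congr 2
      apply Multiset.map_congr rfl
      intro c _
      simp
    have hconj : cj (P.eval ((cj z)⁻¹)) =
        cj P.leadingCoeff * (P.roots.map fun c => z⁻¹ - cj c).prod := by
      rw [hPez, map_mul, map_multiset_prod, Multiset.map_map]
      congr 2
      apply Multiset.map_congr rfl
      intro c _
      simp [hcw]
    have hzd : z ^ P.natDegree * (P.roots.map fun c => z⁻¹ - cj c).prod =
        (P.roots.map fun c => 1 - cj c * z).prod := by
      have hz1 : z ^ P.natDegree = (P.roots.map fun _ => z).prod := by
        rw [Multiset.map_const', Multiset.prod_replicate, hcard]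
      rw [hz1, ← Multiset.prod_map_mul]
      apply congrArg
      apply Multiset.map_congr rfl
      intro c _
      rw [mul_sub, mul_inv_cancel₀ hz]; ring
    have hzsplit : z ^ m = z ^ P.natDegree * z ^ (m - P.natDegree) := by
      rw [← pow_add, Nat.add_sub_cancel' hdegP]
    rw [hconj, eval_mul, eval_mul, eval_C, eval_pow, eval_X, eval_multiset_prod,
      Multiset.map_map, hzsplit]
    have heq2 : (P.roots.map (eval z ∘ fun c => (1 - C (cj c) * X : ℂ[X]))).prod
        = (P.roots.map fun c => 1 - cj c * z).prod := by
      apply congrArg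
      apply Multiset.map_congr rfl
      intro c _
      simp
    calc μ * (z ^ P.natDegree * z ^ (m - P.natDegree)) *
          (cj P.leadingCoeff * (P.roots.map fun c => z⁻¹ - cj c).prod)
        = μ * cj P.leadingCoeff *
          (z ^ P.natDegree * (P.roots.map fun c => z⁻¹ - cj c).prod) *
          z ^ (m - P.natDegree) := by ring
      _ = μ * cj P.leadingCoeff * (P.roots.map fun c => 1 - cj c * z).prod *
          z ^ (m - P.natDegree) := by rw [hzd]
      _ = _ := by rw [heq2]
  -- the degree of P is exactly m
  have hdm : P.natDegree = m := by
    by_contra hne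
    have hlt : P.natDegree < m := lt_of_le_of_ne hdegP hne
    apply hQ0
    rw [hQfac, eval_mul, eval_pow, eval_X, zero_pow (by omega : m - P.natDegree ≠ 0),
      mul_zero]
  -- enumerate the roots
  set L := P.roots.toList with hLdef
  have hL : L.length = m := by rw [hLdef, Multiset.length_toList, hcard, hdm]
  set cc : Fin m → ℂ := fun i => L.get (finCongr hL.symm i) with hcc
  have hprods : ∀ f : ℂ → ℂ, (∏ i, f (cc i)) = (P.roots.map f).prod := by
    intro f
    have h1 : (∏ i : Fin m, f (cc i)) = ∏ i : Fin L.length, f (L.get i) :=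
      Fintype.prod_equiv (finCongr hL.symm) _ _ (fun i => rfl)
    have h2 : List.ofFn (fun i => f (L.get i)) = L.map f := by
      have h4 := List.map_ofFn (f := L.get) (g := f)
      rw [List.ofFn_get] at h4
      exact h4.symm
    rw [h1, ← List.prod_ofFn, h2, ← Multiset.prod_coe, ← Multiset.map_coe,
      Multiset.coe_toList]
  have hmem : ∀ i, ‖cc i‖ < 1 := by
    intro i
    apply hroots
    have h3 : cc i ∈ L := by apply List.get_mem
    rwa [hLdef, Multiset.mem_toList] at h3
  have hPz : ∀ z : ℂ, P.eval z = P.leadingCoeff * ∏ i, (z - cc i) := by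
    intro z
    rw [hprods (fun c => z - c)]
    conv_lhs => rw [hPfac]
    rw [eval_mul, eval_C, eval_multiset_prod, Multiset.map_map]
    exact congrArg _ (congrArg Multiset.prod (Multiset.map_congr rfl (fun c _ => by simp)))
  have hQz2 : ∀ z : ℂ, Q.eval z = μ * cj P.leadingCoeff * ∏ i, (1 - cj (cc i) * z) := by
    intro z
    rw [hprods (fun c => 1 - cj c * z)]
    rw [hQfac, hdm, Nat.sub_self, pow_zero, mul_one, eval_mul, eval_C,
      eval_multiset_prod, Multiset.map_map]
    exact congrArg _ (congrArg Multiset.prod (Multiset.map_congr rfl (fun c _ => by simp)))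
  refine ⟨P.leadingCoeff / (μ * cj P.leadingCoeff), cc, ?_, ?_, ?_⟩
  · rw [norm_div, norm_mul, hμ, one_mul, Complex.norm_conj, div_self]
    exact norm_ne_zero_iff.mpr hlcne
  · intro i
    simpa [mem_ball_zero_iff] using hmem i
  · intro z hz'
    have hz : ‖z‖ < 1 := by simpa [mem_ball_zero_iff] using hz'
    have hprodB : ∏ i, blaschkeFactor (cc i) z =
        (∏ i, (z - cc i)) / (∏ i, (1 - cj (cc i) * z)) := by
      rw [← Finset.prod_div_distrib]
      rfl
    show blaschkeFactor a (g z) = _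
    rw [hBF z hz, hPz z, hQz2 z, hprodB, div_mul_div_comm]

lemma mul_deg {n m : ℕ} {f h : ℂ → ℂ} (hf : IsFiniteBlaschkeDeg n f)
    (hh : IsFiniteBlaschkeDeg m h) :
    IsFiniteBlaschkeDeg (n + m) (fun z => f z * h z) := by
  obtain ⟨l1, a1, hl1, ha1, he1⟩ := hf
  obtain ⟨l2, a2, hl2, ha2, he2⟩ := hh
  refine ⟨l1 * l2, Fin.append a1 a2, ?_, ?_, ?_⟩
  · rw [norm_mul, hl1, hl2, one_mul]
  · intro i
    induction i using Fin.addCases with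
    | left i => rw [Fin.append_left]; exact ha1 i
    | right i => rw [Fin.append_right]; exact ha2 i
  · intro z hz
    show f z * h z = _
    rw [he1 z hz, he2 z hz, Fin.prod_univ_add]
    simp only [Fin.append_left, Fin.append_right]
    ring

lemma prod_deg {n m : ℕ} (h : Fin n → ℂ → ℂ)
    (hh : ∀ i, IsFiniteBlaschkeDeg m (h i)) :
    IsFiniteBlaschkeDeg (n * m) (fun z => ∏ i, h i z) := by
  induction n with
  | zero =>
    rw [Nat.zero_mul]
    exact ⟨1, Fin.elim0, by simp, fun i => i.elim0, fun z hz => by simp⟩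
  | succ k ih =>
    have h1 := ih (fun i => h i.castSucc) (fun i => hh _)
    have h2 := mul_deg h1 (hh (Fin.last k))
    have heq : (fun z => ∏ i : Fin (k+1), h i z) =
        fun z => (∏ i : Fin k, h i.castSucc z) * h (Fin.last k) z :=
      funext (fun z => Fin.prod_univ_castSucc _)
    rw [heq, Nat.succ_mul]
    exact h2

lemma const_mul_deg {n : ℕ} {f : ℂ → ℂ} {l : ℂ} (hl : ‖l‖ = 1)
    (hf : IsFiniteBlaschkeDeg n f) : IsFiniteBlaschkeDeg n (fun z => l * f z) := by
  obtain ⟨lam, a, h1, h2, h3⟩ := hf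
  exact ⟨l * lam, a, by rw [norm_mul, hl, h1, one_mul], h2,
    fun z hz => by show l * f z = _; rw [h3 z hz]; ring⟩


theorem stmt_2 (f g : ℂ → ℂ) (hf : IsFiniteBlaschke f) (hg : IsFiniteBlaschke g) :
    IsFiniteBlaschke (f ∘ g) := by
  obtain ⟨n, hn, lam, a, hlam, ha, hfeq⟩ := hf
  obtain ⟨m, hm, μ, b, hμ, hb, hgeq⟩ := hg
  have ha' : ∀ i, ‖a i‖ < 1 := fun i => by
    simpa [mem_ball_zero_iff] using ha i
  have hb' : ∀ i, ‖b i‖ < 1 := fun i => by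
    simpa [mem_ball_zero_iff] using hb i
  refine ⟨n * m, Nat.mul_pos hn hm, ?_⟩
  have hcomp : ∀ i, IsFiniteBlaschkeDeg m (fun z => blaschkeFactor (a i) (g z)) :=
    fun i => comp_factor hm hμ hb' hgeq (ha' i)
  have hfinal := const_mul_deg hlam (prod_deg _ hcomp)
  obtain ⟨l2, c2, k1, k2, k3⟩ := hfinal
  refine ⟨l2, c2, k1, k2, ?_⟩
  intro z hz
  have hz' : ‖z‖ < 1 := by simpa [mem_ball_zero_iff] using hz
  have hgz : g z ∈ ball (0:ℂ) 1 := by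
    simpa [mem_ball_zero_iff] using gball hm hμ hb' hgeq hz'
  calc (f ∘ g) z = f (g z) := rfl
    _ = lam * ∏ i, blaschkeFactor (a i) (g z) := hfeq _ hgz
    _ = l2 * ∏ i, blaschkeFactor (c2 i) z := k3 z hz
end

section
/- If f is a finite Blaschke product on 𝔻 and f'(z) ≠ 0 for all z ∈ 𝔻, then f is a disc automorphism, i.e., f(z) = λ(z - α)/(1 - conj(α) z) for some α ∈ 𝔻 and some λ with |λ| = 1. -/
open Complex Metric MeasureTheory Set Filter

open Polynomial Finset

variable {n : ℕ}

/-- The key auxiliary polynomial: `λ⁻¹` times the numerator of the derivative of the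
Blaschke product with zeros `a`. -/
noncomputable def bR (a : Fin n → ℂ) : ℂ[X] :=
  ∑ k, C (1 - (starRingEnd ℂ) (a k) * a k) *
    ∏ j ∈ univ.erase k, ((X - C (a j)) * (1 - C ((starRingEnd ℂ) (a j)) * X))

lemma bR_eval (a : Fin n → ℂ) (z : ℂ) :
    (bR a).eval z = ∑ k, (1 - (starRingEnd ℂ) (a k) * a k) *
      ∏ j ∈ univ.erase k, ((z - a j) * (1 - (starRingEnd ℂ) (a j) * z)) := by
  simp [bR, eval_finset_sum, eval_prod]

lemma bKey (a : Fin n → ℂ) (z : ℂ) :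
    (∑ k, ∏ j ∈ univ.erase k, (z - a j)) * (∏ i, (1 - (starRingEnd ℂ) (a i) * z))
      - (∏ i, (z - a i)) * (∑ k, (∏ j ∈ univ.erase k, (1 - (starRingEnd ℂ) (a j) * z))
          * (-((starRingEnd ℂ) (a k))))
      = (bR a).eval z := by
  rw [bR_eval, Finset.sum_mul, Finset.mul_sum, ← Finset.sum_sub_distrib]
  refine Finset.sum_congr rfl fun k _ => ?_
  rw [← Finset.mul_prod_erase _ (fun i => z - a i) (mem_univ k),
      ← Finset.mul_prod_erase _ (fun i => 1 - (starRingEnd ℂ) (a i) * z) (mem_univ k),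
      Finset.prod_mul_distrib]
  ring

lemma bR_reflect (a : Fin n → ℂ) {z : ℂ} (hz : z ≠ 0) :
    (bR a).eval z = z ^ (2 * n - 2) * (starRingEnd ℂ) ((bR a).eval (((starRingEnd ℂ) z)⁻¹)) := by
  rcases Nat.eq_zero_or_pos n with hn | hn
  · subst hn; simp [bR_eval]
  rw [bR_eval, bR_eval, map_sum, Finset.mul_sum]
  refine Finset.sum_congr rfl fun k _ => ?_
  have hcard : (univ.erase k).card = n - 1 := by
    rw [Finset.card_erase_of_mem (mem_univ k), Finset.card_univ, Fintype.card_fin]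
  have hpow : z ^ (2 * n - 2) = ∏ j ∈ univ.erase k, z ^ 2 := by
    rw [Finset.prod_const, hcard, ← pow_mul]
    congr 1
    omega
  rw [map_mul, map_prod, map_sub, map_one, map_mul]
  simp only [map_sub, map_mul, map_inv₀, Complex.conj_conj, map_one]
  have h1 : ∀ j ∈ univ.erase k, (z - a j) * (1 - (starRingEnd ℂ) (a j) * z)
      = z ^ 2 * ((z⁻¹ - (starRingEnd ℂ) (a j)) * (1 - a j * z⁻¹)) := by
    intro j _
    field_simp
  rw [Finset.prod_congr rfl h1, Finset.prod_mul_distrib, ← hpow]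
  ring

lemma bR_circle (a : Fin n → ℂ) (hn : 0 < n) (ha : ∀ i, ‖a i‖ < 1)
    {z : ℂ} (hz : ‖z‖ = 1) : (bR a).eval z ≠ 0 := by
  have hz0 : z ≠ 0 := by
    intro h; rw [h] at hz; simp at hz
  have hzc : z * (starRingEnd ℂ) z = 1 := by
    rw [Complex.mul_conj, Complex.normSq_eq_norm_sq, hz]; norm_num
  have key : ∀ j : Fin n, (z - a j) * (1 - (starRingEnd ℂ) (a j) * z)
      = z * ((Complex.normSq (z - a j) : ℂ)) := by
    intro j
    rw [← Complex.mul_conj, map_sub]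
    ring_nf
    linear_combination (- z + a j) * hzc
  have hck : ∀ k : Fin n, (1 : ℂ) - (starRingEnd ℂ) (a k) * a k
      = ((1 - Complex.normSq (a k) : ℝ) : ℂ) := by
    intro k
    push_cast
    rw [← Complex.mul_conj]
    ring
  have hterm : ∀ k : Fin n,
      (1 - (starRingEnd ℂ) (a k) * a k) *
        ∏ j ∈ univ.erase k, ((z - a j) * (1 - (starRingEnd ℂ) (a j) * z))
      = z ^ (n - 1) * (((1 - Complex.normSq (a k)) *
          ∏ j ∈ univ.erase k, Complex.normSq (z - a j) : ℝ) : ℂ) := by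
    intro k
    rw [Finset.prod_congr rfl fun j _ => key j, Finset.prod_mul_distrib, Finset.prod_const,
      Finset.card_erase_of_mem (mem_univ k), Finset.card_univ, Fintype.card_fin, hck k]
    push_cast
    ring
  rw [bR_eval, Finset.sum_congr rfl fun k _ => hterm k, ← Finset.mul_sum, ← Complex.ofReal_sum]
  have hpos : (0 : ℝ) < ∑ k, (1 - Complex.normSq (a k)) *
      ∏ j ∈ univ.erase k, Complex.normSq (z - a j) := by
    have : Nonempty (Fin n) := Fin.pos_iff_nonempty.mp hn
    refine Finset.sum_pos (fun k _ => ?_) Finset.univ_nonempty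
    refine mul_pos ?_ (Finset.prod_pos fun j _ => ?_)
    · have := ha k
      rw [← Complex.sq_norm]
      nlinarith [norm_nonneg (a k)]
    · refine Complex.normSq_pos.mpr ?_
      intro h
      rw [sub_eq_zero.mp h] at hz
      exact absurd hz (ne_of_lt (ha j))
  exact mul_ne_zero (pow_ne_zero _ hz0) (by exact_mod_cast hpos.ne')

lemma bQ_ne (a : Fin n → ℂ) (ha : ∀ i, a i ∈ ball (0:ℂ) 1)
    {w : ℂ} (hw : ‖w‖ ≤ 1) :
    (∏ i, (1 - (starRingEnd ℂ) (a i) * w)) ≠ 0 := by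
  refine Finset.prod_ne_zero_iff.mpr fun i _ => ?_
  have hai : ‖a i‖ < 1 := by
    have := ha i; rwa [mem_ball_zero_iff] at this
  intro h
  have h1 : (starRingEnd ℂ) (a i) * w = 1 := by linear_combination -h
  have := congrArg (‖·‖) h1
  rw [norm_mul, norm_one, Complex.norm_conj] at this
  nlinarith [norm_nonneg (a i), norm_nonneg w]

lemma deriv_blaschke (lam : ℂ) (a : Fin n → ℂ) (f : ℂ → ℂ)
    (ha : ∀ i, a i ∈ ball (0:ℂ) 1)
    (hfe : ∀ z ∈ ball (0:ℂ) 1, f z = lam * ∏ i, blaschkeFactor (a i) z)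
    {z : ℂ} (hz : z ∈ ball (0:ℂ) 1) :
    deriv f z = lam * (bR a).eval z / (∏ i, (1 - (starRingEnd ℂ) (a i) * z)) ^ 2 := by
  have hQz : (∏ i, (1 - (starRingEnd ℂ) (a i) * z)) ≠ 0 :=
    bQ_ne a ha (by rw [mem_ball_zero_iff] at hz; exact le_of_lt hz)
  set g : ℂ → ℂ := fun w => lam * ((∏ i, (w - a i)) / (∏ i, (1 - (starRingEnd ℂ) (a i) * w)))
    with hg
  have hfg : f =ᶠ[nhds z] g := by
    filter_upwards [isOpen_ball.mem_nhds hz] with w hw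
    rw [hfe w hw, hg]
    simp only [blaschkeFactor]
    rw [Finset.prod_div_distrib]
  have hPr : HasDerivAt (fun w => ∏ i, (w - a i))
      (∑ k, ∏ j ∈ univ.erase k, (z - a j)) z := by
    have := HasDerivAt.fun_finsetProd (u := univ) (f := fun (i : Fin n) (w : ℂ) => w - a i)
      (f' := fun _ => 1) (x := z) (fun i _ => (hasDerivAt_id z).sub_const (a i))
    simpa using this
  have hQ : HasDerivAt (fun w => ∏ i, (1 - (starRingEnd ℂ) (a i) * w))
      (∑ k, (∏ j ∈ univ.erase k, (1 - (starRingEnd ℂ) (a j) * z))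
        * (-((starRingEnd ℂ) (a k)))) z := by
    have hfac : ∀ i : Fin n, HasDerivAt (fun w => 1 - (starRingEnd ℂ) (a i) * w)
        (-((starRingEnd ℂ) (a i))) z := by
      intro i
      simpa using ((hasDerivAt_id z).const_mul ((starRingEnd ℂ) (a i))).const_sub 1
    have := HasDerivAt.fun_finsetProd (u := univ)
      (f := fun (i : Fin n) (w : ℂ) => 1 - (starRingEnd ℂ) (a i) * w)
      (f' := fun i => -((starRingEnd ℂ) (a i))) (x := z) (fun i _ => hfac i)
    simpa [smul_eq_mul] using this
  have hdiv := (hPr.div hQ hQz).const_mul lam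
  rw [hfg.deriv_eq, show deriv g z = _ from hdiv.deriv]
  rw [bKey a z]
  ring

theorem stmt_3 (f : ℂ → ℂ) (hf : IsFiniteBlaschke f)
    (hder : ∀ z ∈ ball (0:ℂ) 1, deriv f z ≠ 0) :
    ∃ α ∈ ball (0:ℂ) 1, ∃ lam : ℂ, ‖lam‖ = 1 ∧
      ∀ z ∈ ball (0:ℂ) 1, f z = lam * ((z - α) / (1 - (starRingEnd ℂ) α * z)) := by
  obtain ⟨n, hn, lam, a, hlam, ha, hfe⟩ := hf
  have hlam0 : lam ≠ 0 := by
    intro h; rw [h] at hlam; simp at hlam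
  have haabs : ∀ i, ‖a i‖ < 1 := fun i => mem_ball_zero_iff.mp (ha i)
  have hRball : ∀ z ∈ ball (0:ℂ) 1, (bR a).eval z ≠ 0 := by
    intro z hz hR0
    have hd := deriv_blaschke lam a f ha hfe hz
    rw [hR0, mul_zero, zero_div] at hd
    exact hder z hz hd
  have hRall : ∀ z : ℂ, (bR a).eval z ≠ 0 := by
    intro z h0
    rcases lt_trichotomy ‖z‖ 1 with h | h | h
    · exact hRball z (mem_ball_zero_iff.mpr h) h0
    · exact bR_circle a hn haabs h h0
    · have hz0 : z ≠ 0 := by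
        intro e; rw [e] at h; simp at h; linarith
      have hrefl := bR_reflect a hz0
      rw [h0] at hrefl
      have hconj0 : (starRingEnd ℂ) ((bR a).eval (((starRingEnd ℂ) z)⁻¹)) = 0 :=
        (mul_eq_zero.mp hrefl.symm).resolve_left (pow_ne_zero _ hz0)
      have heval0 : (bR a).eval (((starRingEnd ℂ) z)⁻¹) = 0 := by
        have := congrArg (starRingEnd ℂ) hconj0
        simpa using this
      have hw : ((starRingEnd ℂ) z)⁻¹ ∈ ball (0:ℂ) 1 := by
        rw [mem_ball_zero_iff]
        rw [norm_inv, Complex.norm_conj]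
        exact inv_lt_one_of_one_lt₀ h
      exact hRball _ hw heval0
  have hdeg : (bR a).degree ≤ 0 := by
    by_contra hd
    push_neg at hd
    obtain ⟨r, hr⟩ := Complex.exists_root hd
    exact hRall r hr
  set c := (bR a).coeff 0 with hcdef
  have hC : bR a = Polynomial.C c := Polynomial.eq_C_of_degree_le_zero hdeg
  have hc0 : c ≠ 0 := by
    have := hRall 0
    rw [hC] at this
    simpa using this
  have h2 := bR_reflect a (two_ne_zero (α := ℂ)) (z := 2)
  have h1 := bR_reflect a (one_ne_zero (α := ℂ)) (z := 1)
  rw [hC] at h2 h1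
  simp only [eval_C, one_pow, one_mul] at h2 h1
  rw [← h1] at h2
  have hpow1 : (2:ℂ) ^ (2 * n - 2) = 1 :=
    mul_right_cancel₀ hc0 (h2.symm.trans (one_mul c).symm)
  have hn1 : n = 1 := by
    have habs := congrArg (‖·‖) hpow1
    rw [norm_pow, Complex.norm_two, norm_one] at habs
    by_contra hne
    have h2n : 2 * n - 2 ≠ 0 := by omega
    have : (1:ℝ) < 2 ^ (2 * n - 2) := one_lt_pow₀ one_lt_two h2n
    linarith
  subst hn1
  refine ⟨a 0, ha 0, lam, hlam, fun z hz => ?_⟩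
  rw [hfe z hz, Fin.prod_univ_one]
  rfl
end

section
/- Let f_n : 𝔻 → ℂ be holomorphic functions converging locally uniformly to a nonconstant holomorphic f. Then for every w ∈ ℂ and every compact K ⊆ 𝔻 whose boundary avoids the solutions of f = w, the number of solutions of f_n(z) = w in K (with multiplicity) equals the number of solutions of f(z) = w in K for all sufficiently large n. -/
open Complex Metric MeasureTheory Set Filter

open intervalIntegral

lemma zeroOrder_eq {f : ℂ → ℂ} {z₀ : ℂ} (hf : AnalyticAt ℂ f z₀) {m : ℕ}
    (hm : analyticOrderAt f z₀ = m) : zeroOrder f z₀ = m := by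
  have hset : {n : ℕ | ∃ g : ℂ → ℂ, AnalyticAt ℂ g z₀ ∧ g z₀ ≠ 0 ∧
      ∀ᶠ z in nhds z₀, f z = (z - z₀) ^ n * g z} = {m} := by
    ext n
    simp only [mem_setOf_eq, mem_singleton_iff]
    constructor
    · intro h
      have hn : analyticOrderAt f z₀ = n := (hf.analyticOrderAt_eq_natCast (n := n)).mpr h
      rw [hm] at hn
      exact_mod_cast hn.symm
    · rintro rfl
      exact (hf.analyticOrderAt_eq_natCast).mp hm
  rw [zeroOrder, hset, csInf_singleton]

lemma finite_zeros {f : ℂ → ℂ} (hf : AnalyticOnNhd ℂ f (ball (0:ℂ) 1))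
    (hne : ∃ z ∈ ball (0:ℂ) 1, f z ≠ 0) {K : Set ℂ} (hK : IsCompact K)
    (hKb : K ⊆ ball (0:ℂ) 1) : {z ∈ K | f z = 0}.Finite := by
  by_contra hinf
  rw [← Set.not_infinite, not_not] at hinf
  obtain ⟨a, haK, ha⟩ := hinf.exists_accPt_of_subset_isCompact hK (sep_subset _ _)
  have hfreq : ∃ᶠ z in nhdsWithin a {a}ᶜ, f z = 0 := by
    rw [frequently_nhdsWithin_iff]
    exact (accPt_iff_frequently.mp ha).mono (fun z hz => ⟨hz.2.2, hz.1⟩)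
  have := hf.eqOn_zero_of_preconnected_of_frequently_eq_zero
    (convex_ball (0:ℂ) 1).isPreconnected (hKb haK) hfreq
  obtain ⟨z, hz, hzne⟩ := hne
  exact hzne (this hz)

lemma order_ne_top {f : ℂ → ℂ} (hf : AnalyticOnNhd ℂ f (ball (0:ℂ) 1))
    {z₁ : ℂ} (hz₁ : z₁ ∈ ball (0:ℂ) 1) (hne : f z₁ ≠ 0)
    {z : ℂ} (hz : z ∈ ball (0:ℂ) 1) : analyticOrderAt f z ≠ ⊤ := by
  intro htop
  rw [analyticOrderAt_eq_top] at htop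
  have hfreq : ∃ᶠ w in nhdsWithin z {z}ᶜ, f w = 0 :=
    (htop.filter_mono nhdsWithin_le_nhds).frequently
  exact hne (hf.eqOn_zero_of_preconnected_of_frequently_eq_zero
    (convex_ball (0:ℂ) 1).isPreconnected hz hfreq hz₁)

lemma circleIntegral_deriv_eq_zero {c : ℂ} {R : ℝ} (hR : 0 ≤ R) {φ : ℂ → ℂ} {V : Set ℂ}
    (hsub : sphere c R ⊆ V) (hφ : AnalyticOnNhd ℂ φ V) :
    (∮ z in C(c, R), deriv φ z) = 0 := by
  have hmem : ∀ θ : ℝ, circleMap c R θ ∈ sphere c R := fun θ => circleMap_mem_sphere c hR θ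
  set Φ : ℝ → ℂ := fun θ => φ (circleMap c R θ) with hΦ
  have hd : ∀ θ : ℝ, HasDerivAt Φ (deriv φ (circleMap c R θ) * (circleMap 0 R θ * I)) θ := by
    intro θ
    exact ((hφ _ (hsub (hmem θ))).differentiableAt.hasDerivAt).comp θ (hasDerivAt_circleMap c R θ)
  have hcont : Continuous fun θ => deriv φ (circleMap c R θ) * (circleMap 0 R θ * I) := by
    have h1 : ContinuousOn (deriv φ) (sphere c R) := fun z hz =>
      ((hφ.deriv z (hsub hz)).continuousAt).continuousWithinAt
    exact ((h1.comp_continuous (continuous_circleMap c R) hmem).mul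
      ((continuous_circleMap 0 R).mul continuous_const))
  have key : (∫ θ in (0:ℝ)..2 * Real.pi, deriv φ (circleMap c R θ) * (circleMap 0 R θ * I))
      = Φ (2 * Real.pi) - Φ 0 := by
    apply integral_eq_sub_of_hasDerivAt (fun t _ => hd t)
    exact hcont.intervalIntegrable _ _
  have hper : Φ (2 * Real.pi) = Φ 0 := by
    simp only [hΦ]
    rw [show circleMap c R (2 * Real.pi) = circleMap c R (0 + 2 * Real.pi) by ring_nf,
      (periodic_circleMap c R) 0]
  rw [circleIntegral]
  simp only [deriv_circleMap, smul_eq_mul]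
  rw [show (∫ θ in (0:ℝ)..2 * Real.pi, circleMap 0 R θ * I * deriv φ (circleMap c R θ))
      = ∫ θ in (0:ℝ)..2 * Real.pi, deriv φ (circleMap c R θ) * (circleMap 0 R θ * I) by
    congr 1; ext θ; ring]
  rw [key, hper, sub_self]

lemma argPrinciple_aux (n : ℕ) : ∀ (f : ℂ → ℂ), AnalyticOnNhd ℂ f (ball (0:ℂ) 1) →
    ∀ (c : ℂ) (R : ℝ), 0 < R → closedBall c R ⊆ ball (0:ℂ) 1 →
    (∀ z ∈ sphere c R, f z ≠ 0) →
    ∀ (Z : Finset ℂ), (∀ z, z ∈ Z ↔ z ∈ closedBall c R ∧ f z = 0) → Z.card = n →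
    (∮ z in C(c, R), deriv f z / f z)
      = 2 * Real.pi * I * ∑ z ∈ Z, (zeroOrder f z : ℂ) := by
  induction n with
  | zero =>
    intro f hf c R hR hUB hsph Z hZ hcard
    have hZe : Z = ∅ := Finset.card_eq_zero.mp hcard
    subst hZe
    have hne : ∀ z ∈ closedBall c R, f z ≠ 0 := by
      intro z hz hz0
      exact absurd ((hZ z).mpr ⟨hz, hz0⟩) (Finset.notMem_empty z)
    have h0 : (∮ z in C(c, R), deriv f z / f z) = 0 := by
      apply circleIntegral_eq_zero_of_differentiable_on_off_countable hR.le
        Set.countable_empty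
      · intro z hz
        exact (((hf.deriv z (hUB hz)).continuousAt).div
          ((hf z (hUB hz)).continuousAt) (hne z hz)).continuousWithinAt
      · intro z hz
        have hzb : z ∈ closedBall c R := ball_subset_closedBall hz.1
        exact ((hf.deriv z (hUB hzb)).differentiableAt).div
          ((hf z (hUB hzb)).differentiableAt) (hne z hzb)
    simp [h0]
  | succ n ih =>
    intro f hf c R hR hUB hsph Z hZ hcard
    -- pick a zero z₀
    obtain ⟨z₀, hz₀Z⟩ := Finset.card_pos.mp (by omega : 0 < Z.card)
    obtain ⟨hz₀cb, hz₀f⟩ := (hZ z₀).mp hz₀Z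
    have hz₀ball : z₀ ∈ ball c R := by
      rcases eq_or_lt_of_le (mem_closedBall.mp hz₀cb) with h | h
      · exact absurd hz₀f (hsph z₀ (mem_sphere.mpr h))
      · exact mem_ball.mpr h
    have hz₀U : z₀ ∈ ball (0:ℂ) 1 := hUB hz₀cb
    -- a nonzero point: any sphere point
    obtain ⟨zs, hzs⟩ := (NormedSpace.sphere_nonempty (x := c) (r := R)).mpr hR.le
    have hzsU : zs ∈ ball (0:ℂ) 1 := hUB (sphere_subset_closedBall hzs)
    have hzsne : f zs ≠ 0 := hsph zs hzs
    -- finite order m ≥ 1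
    have hA : AnalyticAt ℂ f z₀ := hf z₀ hz₀U
    have hot : analyticOrderAt f z₀ ≠ ⊤ := order_ne_top hf hzsU hzsne hz₀U
    obtain ⟨m, hm⟩ := WithTop.ne_top_iff_exists.mp hot
    obtain ⟨g, hg, hgne, hfg⟩ := (hA.analyticOrderAt_eq_natCast (n := m)).mp hm.symm
    have hm1 : 1 ≤ m := by
      rcases Nat.eq_zero_or_pos m with h | h
      · exfalso
        have h5 := hfg.self_of_nhds
        rw [h] at h5
        simp only [pow_zero, one_smul, one_mul] at h5
        exact hgne (by rw [← h5, hz₀f])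
      · exact h
    -- define h
    set h : ℂ → ℂ := fun z => if z = z₀ then g z₀ else f z / (z - z₀) ^ m with hhdef
    have hfac : ∀ z, f z = (z - z₀) ^ m * h z := by
      intro z
      by_cases hz : z = z₀
      · subst hz
        simp [hz₀f, zero_pow (by omega : m ≠ 0)]
      · have hpow : (z - z₀) ^ m ≠ 0 := pow_ne_zero _ (sub_ne_zero.mpr hz)
        simp only [hhdef, if_neg hz]
        field_simp
    have hh : AnalyticOnNhd ℂ h (ball (0:ℂ) 1) := by
      intro z hz
      by_cases hzz : z = z₀
      · subst hzz
        apply hg.congr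
        filter_upwards [hfg] with w hw
        by_cases hwz : w = z
        · subst hwz; simp [hhdef]
        · have hpow : (w - z) ^ m ≠ 0 := pow_ne_zero _ (sub_ne_zero.mpr hwz)
          simp only [hhdef, if_neg hwz, smul_eq_mul] at hw ⊢
          rw [hw]; field_simp
      · have hbig : AnalyticAt ℂ (fun w => f w / (w - z₀) ^ m) z :=
          (hf z hz).div (((analyticAt_id).sub analyticAt_const).pow m)
            (pow_ne_zero _ (sub_ne_zero.mpr hzz))
        apply hbig.congr
        filter_upwards [(isOpen_ne (x := z₀)).mem_nhds hzz] with w hw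
        exact (if_neg hw).symm
    have hhz₀ : h z₀ = g z₀ := by simp [hhdef]
    -- zeros of h
    have hZ' : ∀ z, z ∈ Z.erase z₀ ↔ z ∈ closedBall c R ∧ h z = 0 := by
      intro z
      constructor
      · intro hz
        obtain ⟨hzne, hzZ⟩ := Finset.mem_erase.mp hz
        obtain ⟨hcb, hf0⟩ := (hZ z).mp hzZ
        refine ⟨hcb, ?_⟩
        simp only [hhdef, if_neg hzne, hf0, zero_div]
      · rintro ⟨hcb, hh0⟩
        have hzne : z ≠ z₀ := by
          intro hzz; subst hzz; rw [hhz₀] at hh0; exact hgne hh0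
        have hf0 : f z = 0 := by rw [hfac z, hh0, mul_zero]
        exact Finset.mem_erase.mpr ⟨hzne, (hZ z).mpr ⟨hcb, hf0⟩⟩
    have hsph' : ∀ z ∈ sphere c R, h z ≠ 0 := by
      intro z hz hh0
      exact hsph z hz (by rw [hfac z, hh0, mul_zero])
    have hcard' : (Z.erase z₀).card = n := by
      rw [Finset.card_erase_of_mem hz₀Z, hcard]
      omega
    have IH := ih h hh c R hR hUB hsph' (Z.erase z₀) hZ' hcard'
    -- zeroOrder h = zeroOrder f on Z.erase z₀
    have horder : ∀ z ∈ Z.erase z₀, (zeroOrder h z : ℂ) = zeroOrder f z := by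
      intro z hz
      obtain ⟨hzne, hzZ⟩ := Finset.mem_erase.mp hz
      have hzU : z ∈ ball (0:ℂ) 1 := hUB ((hZ z).mp hzZ).1
      have hAz : AnalyticAt ℂ f z := hf z hzU
      have hotz : analyticOrderAt f z ≠ ⊤ := order_ne_top hf hzsU hzsne hzU
      obtain ⟨k, hk⟩ := WithTop.ne_top_iff_exists.mp hotz
      obtain ⟨g₂, hg₂, hg₂ne, hfg₂⟩ := (hAz.analyticOrderAt_eq_natCast (n := k)).mp hk.symm
      have hAh : AnalyticAt ℂ h z := hh z hzU
      have hkh : analyticOrderAt h z = k := by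
        rw [hAh.analyticOrderAt_eq_natCast]
        refine ⟨fun w => g₂ w / (w - z₀) ^ m, hg₂.div
          (((analyticAt_id).sub analyticAt_const).pow m)
          (pow_ne_zero _ (sub_ne_zero.mpr hzne)), ?_, ?_⟩
        · exact div_ne_zero hg₂ne (pow_ne_zero _ (sub_ne_zero.mpr hzne))
        · filter_upwards [hfg₂, (isOpen_ne (x := z₀)).mem_nhds hzne] with w hw hwne
          simp only [hhdef, if_neg hwne, smul_eq_mul] at hw ⊢
          rw [hw]
          field_simp
      rw [zeroOrder_eq hAh hkh, zeroOrder_eq hAz hk.symm]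
    -- derivative identity on sphere
    have hfh : f = fun w => (w - z₀) ^ m * h w := funext hfac
    have hderiv : ∀ z ∈ sphere c R,
        deriv f z / f z = (m : ℂ) * (z - z₀)⁻¹ + deriv h z / h z := by
      intro z hz
      have hzU : z ∈ ball (0:ℂ) 1 := hUB (sphere_subset_closedBall hz)
      have hzz₀ : z ≠ z₀ := by
        intro hzz; subst hzz; exact (mem_ball.mp hz₀ball).ne (mem_sphere.mp hz)
      have hsub : z - z₀ ≠ 0 := sub_ne_zero.mpr hzz₀
      have hhd : HasDerivAt h (deriv h z) z := (hh z hzU).differentiableAt.hasDerivAt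
      have hP : HasDerivAt (fun w => (w - z₀) ^ m)
          ((m : ℂ) * (z - z₀) ^ (m - 1) * 1) z :=
        ((hasDerivAt_id z).sub_const z₀).pow m
      have hF : HasDerivAt f ((m : ℂ) * (z - z₀) ^ (m - 1) * 1 * h z
          + (z - z₀) ^ m * deriv h z) z := by
        rw [hfh]; exact hP.mul hhd
      rw [hF.deriv]
      have hhne : h z ≠ 0 := hsph' z hz
      have hfz : f z = (z - z₀) ^ m * h z := hfac z
      have hpow : (z - z₀) ^ m = (z - z₀) ^ (m - 1) * (z - z₀) := by
        rw [← pow_succ]; congr 1; omega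
      rw [hfz, hpow]
      have hu : (z - z₀) ^ (m - 1) ≠ 0 := pow_ne_zero _ hsub
      field_simp
    -- integrate
    have hif : (∮ z in C(c, R), deriv f z / f z)
        = ∮ z in C(c, R), ((m : ℂ) * (z - z₀)⁻¹ + deriv h z / h z) :=
      circleIntegral.integral_congr hR.le (fun z hz => hderiv z hz)
    have hci1 : CircleIntegrable (fun z => (m : ℂ) * (z - z₀)⁻¹) c R := by
      apply ContinuousOn.circleIntegrable hR.le
      intro z hz
      have hzz₀ : z ≠ z₀ := by
        intro hzz; subst hzz; exact (mem_ball.mp hz₀ball).ne (mem_sphere.mp hz)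
      exact (continuousAt_const.mul ((continuousAt_id.sub continuousAt_const).inv₀
        (sub_ne_zero.mpr hzz₀))).continuousWithinAt
    have hci2 : CircleIntegrable (fun z => deriv h z / h z) c R := by
      apply ContinuousOn.circleIntegrable hR.le
      intro z hz
      have hzU : z ∈ ball (0:ℂ) 1 := hUB (sphere_subset_closedBall hz)
      exact (((hh.deriv z hzU).continuousAt).div ((hh z hzU).continuousAt)
        (hsph' z hz)).continuousWithinAt
    have hsplit : (∮ z in C(c, R), ((m : ℂ) * (z - z₀)⁻¹ + deriv h z / h z))
        = (∮ z in C(c, R), (m : ℂ) * (z - z₀)⁻¹)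
          + ∮ z in C(c, R), deriv h z / h z := by
      have h2 := circleIntegral.integral_sub (hci1.add hci2) hci2
      simp only [Pi.add_apply, add_sub_cancel_right] at h2
      exact (eq_sub_iff_add_eq.mp h2).symm
    have hint1 : (∮ z in C(c, R), (m : ℂ) * (z - z₀)⁻¹) = 2 * Real.pi * I * m := by
      have h4 := circleIntegral.integral_smul (m : ℂ) (fun z => (z - z₀)⁻¹) c R
      simp only [smul_eq_mul] at h4
      rw [h4, circleIntegral.integral_sub_inv_of_mem_ball hz₀ball]
      ring
    rw [hif, hsplit, hint1, IH]
    rw [Finset.sum_congr rfl horder]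
    rw [← Finset.add_sum_erase _ _ hz₀Z]
    rw [zeroOrder_eq hA hm.symm]
    ring

lemma norm_lt_imp_ne {f g : ℂ → ℂ} {z : ℂ} (h : ‖g z - f z‖ < ‖f z‖) :
    f z ≠ 0 ∧ g z ≠ 0 := by
  constructor
  · intro h0
    rw [h0, norm_zero] at h
    exact absurd h (not_lt.mpr (norm_nonneg _))
  · intro h0
    rw [h0, zero_sub, norm_neg] at h
    exact h.false

lemma rouche {c : ℂ} {R : ℝ} (hR : 0 < R)
    {f g : ℂ → ℂ} (hf : AnalyticOnNhd ℂ f (ball (0:ℂ) 1))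
    (hg : AnalyticOnNhd ℂ g (ball (0:ℂ) 1))
    (hUB : closedBall c R ⊆ ball (0:ℂ) 1)
    (hfg : ∀ z ∈ sphere c R, ‖g z - f z‖ < ‖f z‖)
    (Zf Zg : Finset ℂ) (hZf : ∀ z, z ∈ Zf ↔ z ∈ closedBall c R ∧ f z = 0)
    (hZg : ∀ z, z ∈ Zg ↔ z ∈ closedBall c R ∧ g z = 0) :
    ∑ z ∈ Zf, zeroOrder f z = ∑ z ∈ Zg, zeroOrder g z := by
  have hsphf : ∀ z ∈ sphere c R, f z ≠ 0 := fun z hz => (norm_lt_imp_ne (hfg z hz)).1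
  have hsphg : ∀ z ∈ sphere c R, g z ≠ 0 := fun z hz => (norm_lt_imp_ne (hfg z hz)).2
  have A1 := argPrinciple_aux Zf.card f hf c R hR hUB hsphf Zf hZf rfl
  have A2 := argPrinciple_aux Zg.card g hg c R hR hUB hsphg Zg hZg rfl
  set V : Set ℂ := {z | z ∈ ball (0:ℂ) 1 ∧ ‖g z - f z‖ < ‖f z‖} with hVdef
  have hsubV : sphere c R ⊆ V := fun z hz =>
    ⟨hUB (sphere_subset_closedBall hz), hfg z hz⟩
  have hVopen : IsOpen V := by
    rw [isOpen_iff_mem_nhds]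
    intro z hz
    have hcf : ContinuousAt f z := (hf z hz.1).continuousAt
    have hcg : ContinuousAt g z := (hg z hz.1).continuousAt
    have hc1 : ContinuousAt (fun w => ‖g w - f w‖) z := (hcg.sub hcf).norm
    have hc2 : ContinuousAt (fun w => ‖f w‖) z := hcf.norm
    have h1 : ∀ᶠ w in nhds z, ‖g w - f w‖ < ‖f w‖ := hc1.eventually_lt hc2 hz.2
    filter_upwards [h1, isOpen_ball.mem_nhds hz.1] with w hw1 hw2
    exact ⟨hw2, hw1⟩
  set q : ℂ → ℂ := fun z => g z / f z with hqdef
  have hq : AnalyticOnNhd ℂ q V := fun z hz =>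
    (hg z hz.1).div (hf z hz.1) (norm_lt_imp_ne hz.2).1
  have hslit : ∀ z ∈ V, q z ∈ slitPlane := by
    intro z hz
    have hfz : f z ≠ 0 := (norm_lt_imp_ne hz.2).1
    have hnorm : ‖q z - 1‖ < 1 := by
      have : q z - 1 = (g z - f z) / f z := by
        simp only [hqdef]
        field_simp
      rw [this, norm_div]
      rw [div_lt_one (norm_pos_iff.mpr hfz)]
      exact hz.2
    have := mem_slitPlane_of_norm_lt_one hnorm
    simpa using this
  set φ : ℂ → ℂ := fun z => Complex.log (q z) with hφdef
  have hφ : AnalyticOnNhd ℂ φ V := fun z hz =>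
    (analyticAt_clog (hslit z hz)).comp (hq z hz)
  have hderiv : ∀ z ∈ sphere c R,
      deriv φ z = deriv g z / g z - deriv f z / f z := by
    intro z hz
    have hzV : z ∈ V := hsubV hz
    have hzU : z ∈ ball (0:ℂ) 1 := hzV.1
    have hfz : f z ≠ 0 := hsphf z hz
    have hgz : g z ≠ 0 := hsphg z hz
    have hdf : HasDerivAt f (deriv f z) z := (hf z hzU).differentiableAt.hasDerivAt
    have hdg : HasDerivAt g (deriv g z) z := (hg z hzU).differentiableAt.hasDerivAt
    have hdq : HasDerivAt q ((deriv g z * f z - g z * deriv f z) / f z ^ 2) z :=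
      hdg.div hdf hfz
    have hdlog : HasDerivAt Complex.log (q z)⁻¹ (q z) :=
      Complex.hasDerivAt_log (hslit z hzV)
    have hdφ : HasDerivAt φ ((q z)⁻¹ * ((deriv g z * f z - g z * deriv f z) / f z ^ 2)) z :=
      hdlog.comp z hdq
    rw [hdφ.deriv]
    rw [hqdef]
    field_simp
  have hzero : (∮ z in C(c, R), deriv φ z) = 0 :=
    circleIntegral_deriv_eq_zero hR.le hsubV hφ
  have hcif : CircleIntegrable (fun z => deriv f z / f z) c R := by
    apply ContinuousOn.circleIntegrable hR.le
    intro z hz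
    have hzU : z ∈ ball (0:ℂ) 1 := hUB (sphere_subset_closedBall hz)
    exact (((hf.deriv z hzU).continuousAt).div ((hf z hzU).continuousAt)
      (hsphf z hz)).continuousWithinAt
  have hcig : CircleIntegrable (fun z => deriv g z / g z) c R := by
    apply ContinuousOn.circleIntegrable hR.le
    intro z hz
    have hzU : z ∈ ball (0:ℂ) 1 := hUB (sphere_subset_closedBall hz)
    exact (((hg.deriv z hzU).continuousAt).div ((hg z hzU).continuousAt)
      (hsphg z hz)).continuousWithinAt
  have hsub : (∮ z in C(c, R), (deriv g z / g z - deriv f z / f z))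
      = (∮ z in C(c, R), deriv g z / g z) - ∮ z in C(c, R), deriv f z / f z :=
    circleIntegral.integral_sub hcig hcif
  have hcongr : (∮ z in C(c, R), deriv φ z)
      = ∮ z in C(c, R), (deriv g z / g z - deriv f z / f z) :=
    circleIntegral.integral_congr hR.le (fun z hz => hderiv z hz)
  have hkey : (2 * (Real.pi : ℂ) * I) * ∑ z ∈ Zg, (zeroOrder g z : ℂ)
      = (2 * (Real.pi : ℂ) * I) * ∑ z ∈ Zf, (zeroOrder f z : ℂ) := by
    rw [← A1, ← A2]
    have := hcongr ▸ hzero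
    rw [hsub] at this
    linear_combination this
  have hne : (2 * (Real.pi : ℂ) * I) ≠ 0 := by
    apply mul_ne_zero (mul_ne_zero two_ne_zero ?_) Complex.I_ne_zero
    exact_mod_cast Real.pi_ne_zero
  have hC : (∑ z ∈ Zg, (zeroOrder g z : ℂ)) = ∑ z ∈ Zf, (zeroOrder f z : ℂ) :=
    mul_left_cancel₀ hne hkey
  have : ((∑ z ∈ Zg, zeroOrder g z : ℕ) : ℂ) = ((∑ z ∈ Zf, zeroOrder f z : ℕ) : ℂ) := by
    push_cast
    exact hC
  exact_mod_cast this.symm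

theorem stmt_8 (F : ℕ → ℂ → ℂ) (f : ℂ → ℂ)
    (hF : ∀ n, DifferentiableOn ℂ (F n) (ball (0:ℂ) 1))
    (hf : DifferentiableOn ℂ f (ball (0:ℂ) 1))
    (hconv : TendstoLocallyUniformlyOn F f atTop (ball (0:ℂ) 1))
    (hnc : ¬ ∃ c : ℂ, ∀ z ∈ ball (0:ℂ) 1, f z = c) :
    ∀ (w : ℂ) (K : Set ℂ), IsCompact K → K ⊆ ball (0:ℂ) 1 →
      (∀ z ∈ frontier K, f z ≠ w) →
      ∃ d : ℕ, HasValence f K w d ∧ ∀ᶠ n in atTop, HasValence (F n) K w d := by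
  intro w K hK hKb hfr
  set φ : ℂ → ℂ := fun x => f x - w with hφdef
  have hφ : AnalyticOnNhd ℂ φ (ball (0:ℂ) 1) := fun z hz =>
    ((hf.analyticOnNhd isOpen_ball) z hz).sub analyticAt_const
  have hFn : ∀ n, AnalyticOnNhd ℂ (fun x => F n x - w) (ball (0:ℂ) 1) := fun n z hz =>
    (((hF n).analyticOnNhd isOpen_ball) z hz).sub analyticAt_const
  have hne : ∃ z ∈ ball (0:ℂ) 1, φ z ≠ 0 := by
    push_neg at hnc
    obtain ⟨z, hz, hzne⟩ := hnc w
    exact ⟨z, hz, sub_ne_zero.mpr hzne⟩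
  have hSeq : {z ∈ K | f z = w} = {z ∈ K | φ z = 0} := by
    ext z; simp [hφdef, sub_eq_zero]
  have hSfin : {z ∈ K | f z = w}.Finite := by
    rw [hSeq]; exact finite_zeros hφ hne hK hKb
  set Sf : Finset ℂ := hSfin.toFinset with hSfdef
  have hSmem : ∀ z, z ∈ Sf ↔ z ∈ K ∧ φ z = 0 := by
    intro z
    rw [hSfdef, Set.Finite.mem_toFinset, hSeq]
    rfl
  have hSint : ∀ z ∈ Sf, z ∈ interior K := by
    intro z hz
    obtain ⟨hzK, hz0⟩ := (hSmem z).mp hz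
    have hzfr : z ∉ frontier K := fun hfrz => hfr z hfrz (sub_eq_zero.mp hz0)
    rw [hK.isClosed.frontier_eq] at hzfr
    simp only [Set.mem_diff, not_and, not_not] at hzfr
    exact hzfr hzK
  -- minimum distance between distinct zeros
  classical
  set dmin : ℂ → ℝ := fun z =>
    if h : (Sf.erase z).Nonempty then (Sf.erase z).inf' h (fun y => dist z y) else 1
    with hdmindef
  have hdmin_pos : ∀ z ∈ Sf, 0 < dmin z := by
    intro z hz
    simp only [hdmindef]
    split_ifs with h
    · rw [Finset.lt_inf'_iff]
      intro y hy
      exact dist_pos.mpr fun hzy => (Finset.mem_erase.mp hy).1 hzy.symm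
      -- careful: need z ≠ y; dist z y > 0 iff z ≠ y
    · exact one_pos
  have hdmin_le : ∀ z ∈ Sf, ∀ z' ∈ Sf, z ≠ z' → dmin z ≤ dist z z' := by
    intro z hz z' hz' hne'
    have hz'e : z' ∈ Sf.erase z := Finset.mem_erase.mpr ⟨hne'.symm, hz'⟩
    simp only [hdmindef]
    rw [dif_pos ⟨z', hz'e⟩]
    exact Finset.inf'_le _ hz'e
  -- choose radii
  have hex : ∀ z : ℂ, ∃ r : ℝ, 0 < r ∧ (z ∈ Sf →
      (closedBall z r ⊆ interior K ∧ (∀ x ∈ closedBall z r, x ≠ z → φ x ≠ 0) ∧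
        r ≤ dmin z / 3)) := by
    intro z
    by_cases hz : z ∈ Sf
    · obtain ⟨hzK, hz0⟩ := (hSmem z).mp hz
      have hzU : z ∈ ball (0:ℂ) 1 := hKb hzK
      -- isolated zero
      have hcase := (hφ z hzU).eventually_eq_zero_or_eventually_ne_zero
      have hev : ∀ᶠ x in nhdsWithin z {z}ᶜ, φ x ≠ 0 := by
        rcases hcase with h | h
        · exact absurd (analyticOrderAt_eq_top.mpr h) (order_ne_top hφ hne.choose_spec.1 hne.choose_spec.2 hzU)
        · exact h
      rw [eventually_nhdsWithin_iff] at hev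
      rw [Metric.eventually_nhds_iff] at hev
      obtain ⟨ε₂, hε₂, hev⟩ := hev
      have hzint : z ∈ interior K := hSint z hz
      obtain ⟨ε₁, hε₁, hball⟩ := Metric.isOpen_iff.mp isOpen_interior z hzint
      refine ⟨min (min (ε₁ / 2) (ε₂ / 2)) (dmin z / 3), ?_, fun _ => ⟨?_, ?_, ?_⟩⟩
      · have := hdmin_pos z hz
        positivity
      · intro x hx
        apply hball
        rw [mem_closedBall] at hx
        rw [mem_ball]
        calc dist x z ≤ min (min (ε₁ / 2) (ε₂ / 2)) (dmin z / 3) := hx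
          _ ≤ ε₁ / 2 := le_trans (min_le_left _ _) (min_le_left _ _)
          _ < ε₁ := by linarith
      · intro x hx hxz
        apply hev
        · rw [mem_closedBall] at hx
          calc dist x z ≤ min (min (ε₁ / 2) (ε₂ / 2)) (dmin z / 3) := hx
            _ ≤ ε₂ / 2 := le_trans (min_le_left _ _) (min_le_right _ _)
            _ < ε₂ := by linarith
        · exact hxz
      · exact min_le_right _ _
    · exact ⟨1, one_pos, fun h => absurd h hz⟩
  choose r hr0 hrP using hex
  have hrK : ∀ z ∈ Sf, closedBall z (r z) ⊆ interior K := fun z hz => (hrP z hz).1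
  have hrne : ∀ z ∈ Sf, ∀ x ∈ closedBall z (r z), x ≠ z → φ x ≠ 0 :=
    fun z hz => (hrP z hz).2.1
  have hrd : ∀ z ∈ Sf, r z ≤ dmin z / 3 := fun z hz => (hrP z hz).2.2
  have hdisj : ∀ z ∈ Sf, ∀ z' ∈ Sf, z ≠ z' →
      Disjoint (closedBall z (r z)) (closedBall z' (r z')) := by
    intro z hz z' hz' hne'
    rw [Set.disjoint_left]
    intro x hx hx'
    rw [mem_closedBall] at hx hx'
    have h1 : dist z z' ≤ dist z x + dist x z' := dist_triangle z x z'
    have h2 : dist z x ≤ dmin z / 3 := le_trans (dist_comm z x ▸ hx) (hrd z hz)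
    have h3 : dist x z' ≤ dmin z' / 3 := le_trans hx' (hrd z' hz')
    have h4 : dmin z ≤ dist z z' := hdmin_le z hz z' hz' hne'
    have h5 : dmin z' ≤ dist z z' := dist_comm z z' ▸ hdmin_le z' hz' z hz hne'.symm
    have h6 : 0 < dist z z' := dist_pos.mpr hne'
    linarith
  -- balls inside ball 0 1
  have hrU : ∀ z ∈ Sf, closedBall z (r z) ⊆ ball (0:ℂ) 1 :=
    fun z hz => (hrK z hz).trans (interior_subset.trans hKb)
  -- K' and ε
  set K' : Set ℂ := K \ ⋃ z ∈ Sf, ball z (r z) with hK'def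
  have hK'cpt : IsCompact K' := hK.diff (isOpen_biUnion fun z _ => isOpen_ball)
  have hK'ne : ∀ x ∈ K', φ x ≠ 0 := by
    intro x hx hx0
    have hxS : x ∈ Sf := (hSmem x).mpr ⟨hx.1, hx0⟩
    exact hx.2 (Set.mem_biUnion hxS (mem_ball_self (hr0 x)))
  have hεex : ∃ ε : ℝ, 0 < ε ∧ ∀ x ∈ K', ε ≤ ‖φ x‖ := by
    rcases eq_empty_or_nonempty K' with h | h
    · exact ⟨1, one_pos, fun x hx => absurd (h ▸ hx) (Set.notMem_empty x)⟩
    · have hcont : ContinuousOn (fun x => ‖φ x‖) K' := by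
        intro x hx
        exact ((hφ x (hKb hx.1)).continuousAt.norm).continuousWithinAt
      obtain ⟨x₀, hx₀, hmin⟩ := hK'cpt.exists_isMinOn h hcont
      exact ⟨‖φ x₀‖, norm_pos_iff.mpr (hK'ne x₀ hx₀), fun x hx => hmin hx⟩
  obtain ⟨ε, hε, hεle⟩ := hεex
  -- spheres are in K'
  have hsphK' : ∀ z ∈ Sf, sphere z (r z) ⊆ K' := by
    intro z hz x hx
    have hxcb : x ∈ closedBall z (r z) := sphere_subset_closedBall hx
    refine ⟨interior_subset (hrK z hz hxcb), ?_⟩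
    intro hxU
    obtain ⟨z', hz', hxball⟩ := Set.mem_iUnion₂.mp hxU
    by_cases hzz : z' = z
    · subst hzz
      rw [mem_ball] at hxball
      rw [mem_sphere] at hx
      exact absurd hx (ne_of_lt hxball)
    · exact Set.disjoint_left.mp (hdisj z' hz' z hz hzz)
        (ball_subset_closedBall hxball) hxcb
  -- the degree
  refine ⟨∑ z ∈ Sf, zeroOrder φ z, ⟨hSfin, rfl⟩, ?_⟩
  have hTU : TendstoUniformlyOn F f atTop K :=
    (tendstoLocallyUniformlyOn_iff_tendstoUniformlyOn_of_compact hK).mp (hconv.mono hKb)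
  have hev := (Metric.tendstoUniformlyOn_iff.mp hTU) ε hε
  filter_upwards [hev] with n hn
  set ψ : ℂ → ℂ := fun x => F n x - w with hψdef
  have hψ : AnalyticOnNhd ℂ ψ (ball (0:ℂ) 1) := hFn n
  have hsmall : ∀ x ∈ K, ‖ψ x - φ x‖ < ε := by
    intro x hx
    have h1 : ψ x - φ x = F n x - f x := by simp only [hψdef, hφdef]; ring
    rw [h1, ← dist_eq_norm, dist_comm]
    exact hn x hx
  have hψK' : ∀ x ∈ K', ψ x ≠ 0 := by
    intro x hx hx0
    have h1 := hεle x hx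
    have h2 := hsmall x hx.1
    rw [hx0, zero_sub, norm_neg] at h2
    linarith
  set Zg : ℂ → Finset ℂ := fun z =>
    if hzf : ({x ∈ closedBall z (r z) | ψ x = 0}).Finite then hzf.toFinset else ∅
    with hZgdef
  have hZgmem : ∀ z ∈ Sf, ∀ x, x ∈ Zg z ↔ x ∈ closedBall z (r z) ∧ ψ x = 0 := by
    intro z hz x
    obtain ⟨xs, hxs⟩ := (NormedSpace.sphere_nonempty (x := z) (r := r z)).mpr (hr0 z).le
    have hxsK' : xs ∈ K' := hsphK' z hz hxs
    have hfin : ({x ∈ closedBall z (r z) | ψ x = 0}).Finite :=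
      finite_zeros hψ ⟨xs, hKb hxsK'.1, hψK' xs hxsK'⟩ (isCompact_closedBall z (r z)) (hrU z hz)
    simp only [hZgdef, dif_pos hfin, Set.Finite.mem_toFinset]
    exact Iff.rfl
  have hcount : ∀ z ∈ Sf, zeroOrder φ z = ∑ x ∈ Zg z, zeroOrder ψ x := by
    intro z hz
    have hZfz : ∀ x, x ∈ ({z} : Finset ℂ) ↔ x ∈ closedBall z (r z) ∧ φ x = 0 := by
      intro x
      simp only [Finset.mem_singleton]
      constructor
      · intro hxe
        rw [hxe]
        exact ⟨mem_closedBall_self (hr0 z).le, ((hSmem z).mp hz).2⟩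
      · rintro ⟨hx1, hx2⟩
        by_contra hxz
        exact hrne z hz x hx1 hxz hx2
    have hfgz : ∀ x ∈ sphere z (r z), ‖ψ x - φ x‖ < ‖φ x‖ := fun x hx =>
      lt_of_lt_of_le (hsmall x (hsphK' z hz hx).1) (hεle x (hsphK' z hz hx))
    have hrz := rouche (hr0 z) hφ hψ (hrU z hz) hfgz {z} (Zg z) hZfz (hZgmem z hz)
    rwa [Finset.sum_singleton] at hrz
  have hTeq : {x ∈ K | F n x = w} = ↑(Sf.biUnion Zg) := by
    ext x
    simp only [Set.mem_setOf_eq, Finset.coe_biUnion, Set.mem_iUnion, Finset.mem_coe]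
    constructor
    · rintro ⟨hxK, hxw⟩
      have hx0 : ψ x = 0 := sub_eq_zero.mpr hxw
      have hxnK' : x ∉ K' := fun hxK' => hψK' x hxK' hx0
      have hxU : x ∈ ⋃ z ∈ Sf, ball z (r z) := by
        by_contra hc
        exact hxnK' ⟨hxK, hc⟩
      obtain ⟨z, hz, hxb⟩ := Set.mem_iUnion₂.mp hxU
      exact ⟨z, hz, (hZgmem z hz x).mpr ⟨ball_subset_closedBall hxb, hx0⟩⟩
    · rintro ⟨z, hz, hxg⟩
      obtain ⟨hx1, hx2⟩ := (hZgmem z hz x).mp hxg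
      exact ⟨interior_subset (hrK z hz hx1), sub_eq_zero.mp hx2⟩
  have hTfin : {x ∈ K | F n x = w}.Finite := by
    rw [hTeq]; exact (Sf.biUnion Zg).finite_toSet
  refine ⟨hTfin, ?_⟩
  have hTf : hTfin.toFinset = Sf.biUnion Zg :=
    Finset.coe_injective (by rw [Set.Finite.coe_toFinset, hTeq])
  rw [hTf]
  have hdisjZg : (↑Sf : Set ℂ).PairwiseDisjoint Zg := by
    intro z hz z' hz' hne'
    rw [Function.onFun, Finset.disjoint_left]
    intro x hx hx'
    exact Set.disjoint_left.mp (hdisj z (Finset.mem_coe.mp hz) z' (Finset.mem_coe.mp hz') hne')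
      ((hZgmem z (Finset.mem_coe.mp hz) x).mp hx).1
      ((hZgmem z' (Finset.mem_coe.mp hz') x).mp hx').1
  rw [Finset.sum_biUnion hdisjZg]
  exact Finset.sum_congr rfl (fun z hz => (hcount z hz).symm)
end

section
/- There exists a holomorphic function f : 𝔻 → 𝔻 with f'(z) ≠ 0 for all z ∈ 𝔻, bounded valence (some N bounds the number of preimages of every point), and meas(𝔻 \ f(𝔻)) = 0, such that f is neither injective nor surjective onto 𝔻. -/
open Complex Metric MeasureTheory Set Filter

noncomputable def mm (z : ℂ) : ℂ := Complex.I * (1 + z) / (1 - z)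
noncomputable def ss (z : ℂ) : ℂ := Complex.I * (1 - mm z ^ 2) ^ ((2:ℂ)⁻¹)
noncomputable def hh (z : ℂ) : ℂ := -mm z + ss z

lemma one_sub_ne {z : ℂ} (hz : ‖z‖ < 1) : (1:ℂ) - z ≠ 0 := by
  intro h
  have : z = 1 := by linear_combination -h
  rw [this] at hz; norm_num at hz

lemma mm_im_pos {z : ℂ} (hz : ‖z‖ < 1) : 0 < (mm z).im := by
  have h1 : (1:ℂ) - z ≠ 0 := one_sub_ne hz
  have hns : 0 < Complex.normSq (1 - z) := Complex.normSq_pos.2 h1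
  have hz2 : Complex.normSq z < 1 := by
    have hab : ‖z‖ < 1 := by simpa using hz
    have := norm_nonneg z
    rw [← Complex.sq_norm]
    nlinarith
  have : (mm z).im = ((1+z) / (1-z)).re := by
    rw [mm, mul_div_assoc]
    simp
  rw [this, Complex.div_re]
  have hnum : (1 + z).re * (1 - z).re + (1 + z).im * (1 - z).im
      = 1 - Complex.normSq z := by
    simp [Complex.normSq_apply]; ring
  rw [← add_div, hnum]
  exact div_pos (by linarith) hns

lemma q_mem_slitPlane {z : ℂ} (hz : ‖z‖ < 1) : (1 - mm z ^ 2) ∈ Complex.slitPlane := by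
  have hm := mm_im_pos hz
  rw [Complex.mem_slitPlane_iff]
  by_cases h : (mm z).re = 0
  · left
    simp [Complex.sub_re, Complex.one_re, Complex.sq_norm, pow_two, Complex.mul_re, h]
    nlinarith
  · right
    simp [Complex.sub_im, Complex.one_im, pow_two, Complex.mul_im]
    intro hc
    have hc' : (mm z).im * (mm z).re = 0 := by linarith
    rcases mul_eq_zero.1 hc' with h' | h'
    · exact absurd h' (by positivity)
    · exact h h' 

lemma ss_sq {z : ℂ} (hz : ‖z‖ < 1) : ss z ^ 2 = mm z ^ 2 - 1 := by
  rw [ss, mul_pow, Complex.I_sq]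
  have : ((1 - mm z ^ 2) ^ ((2:ℂ)⁻¹)) ^ 2 = 1 - mm z ^ 2 := by
    have := Complex.cpow_nat_inv_pow (1 - mm z ^ 2) (n := 2) (by norm_num)
    simpa using this
  rw [this]; ring

lemma hh_quad {z : ℂ} (hz : ‖z‖ < 1) : hh z ^ 2 + 2 * mm z * hh z + 1 = 0 := by
  have h4 := ss_sq hz
  rw [hh]
  linear_combination h4

lemma hh_ne_zero {z : ℂ} (hz : ‖z‖ < 1) : hh z ≠ 0 := by
  intro h
  have := hh_quad hz
  rw [h] at this
  simp at this

lemma mm_hasDeriv {z : ℂ} (hz : ‖z‖ < 1) :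
    HasDerivAt mm (2 * Complex.I / (1 - z)^2) z := by
  have h1 : (1:ℂ) - z ≠ 0 := one_sub_ne hz
  have hc : HasDerivAt (fun z : ℂ => Complex.I * (1 + z)) Complex.I z := by
    simpa using ((hasDerivAt_id z).const_add (1:ℂ)).const_mul Complex.I
  have hd : HasDerivAt (fun z : ℂ => 1 - z) (-1) z := by
    simpa using (hasDerivAt_id z).const_sub (1:ℂ)
  have := hc.div hd h1
  exact this.congr_deriv (by ring)

lemma mm_diff {z : ℂ} (hz : ‖z‖ < 1) : DifferentiableAt ℂ mm z :=
  (mm_hasDeriv hz).differentiableAt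

lemma hh_diff {z : ℂ} (hz : ‖z‖ < 1) : DifferentiableAt ℂ hh z := by
  have hm := mm_diff hz
  have hq : DifferentiableAt ℂ (fun z => 1 - mm z ^ 2) z :=
    (differentiableAt_const _).sub (hm.pow 2)
  have hs : DifferentiableAt ℂ ss z := by
    have := (hq.cpow (differentiableAt_const ((2:ℂ)⁻¹)) (q_mem_slitPlane hz)).const_mul
      Complex.I
    exact this
  exact hm.neg.add hs

lemma hh_abs_ne_one {z : ℂ} (hz : ‖z‖ < 1) : ‖hh z‖ ≠ 1 := by
  intro habs
  have h0 := hh_ne_zero hz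
  have hinv : (hh z)⁻¹ = starRingEnd ℂ (hh z) := Complex.inv_eq_conj habs
  have hq := hh_quad hz
  have hm : mm z = -(hh z + (hh z)⁻¹) / 2 := by
    field_simp
    linear_combination hq
  have : (mm z).im = 0 := by
    rw [hm, hinv]
    simp [Complex.div_im, Complex.neg_im, Complex.add_im]
  have := mm_im_pos hz
  linarith

lemma hh_abs_lt_one {z : ℂ} (hz : ‖z‖ < 1) : ‖hh z‖ < 1 := by
  by_contra hcon
  push_neg at hcon
  have hgt : 1 < ‖hh z‖ := lt_of_le_of_ne hcon (fun h => hh_abs_ne_one hz h.symm)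
  -- connectedness argument
  have hcont : ContinuousOn (fun w => ‖hh w‖) (ball (0:ℂ) 1) := by
    apply Continuous.comp_continuousOn continuous_norm
    intro w hw
    exact (hh_diff (mem_ball_zero_iff.1 hw)).continuousAt.continuousWithinAt
  have hpc : IsPreconnected (ball (0:ℂ) 1) := (convex_ball (0:ℂ) 1).isPreconnected
  have himg : IsPreconnected ((fun w => ‖hh w‖) '' ball (0:ℂ) 1) :=
    hpc.image _ hcont
  have h0mem : ‖hh 0‖ ∈ (fun w => ‖hh w‖) '' ball (0:ℂ) 1 :=
    ⟨0, by simp, rfl⟩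
  have hzmem : ‖hh z‖ ∈ (fun w => ‖hh w‖) '' ball (0:ℂ) 1 :=
    ⟨z, mem_ball_zero_iff.2 hz, rfl⟩
  have hh0 : ‖hh 0‖ < 1 := by
    have hm0 : mm 0 = Complex.I := by simp [mm]
    have hq0 : ((2:ℂ)) ^ ((2:ℂ)⁻¹) = ((Real.sqrt 2 : ℝ) : ℂ) := by
      have h := Complex.ofReal_cpow (show (0:ℝ) ≤ 2 by norm_num) (2⁻¹ : ℝ)
      push_cast at h
      rw [← h, Real.sqrt_eq_rpow]
      norm_num
    have hhh : hh 0 = Complex.I * ((Real.sqrt 2 - 1 : ℝ) : ℂ) := by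
      rw [hh, ss, hm0, Complex.I_sq]
      push_cast
      rw [show (1:ℂ) - -1 = 2 by norm_num, hq0]
      ring
    rw [hhh]
    have hsq := Real.sq_sqrt (show (0:ℝ) ≤ 2 by norm_num)
    have hnn := Real.sqrt_nonneg 2
    have h2 : (1:ℝ) < Real.sqrt 2 := by nlinarith
    have h2' : Real.sqrt 2 < 2 := by nlinarith
    rw [norm_mul, Complex.norm_I, one_mul, Complex.norm_real, Real.norm_eq_abs, abs_of_pos (by linarith)]
    linarith
  have h1mem : (1:ℝ) ∈ (fun w => ‖hh w‖) '' ball (0:ℂ) 1 := by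
    have := himg.ordConnected.out h0mem hzmem
    exact this ⟨le_of_lt hh0, le_of_lt hgt⟩
  obtain ⟨w, hw, hw1⟩ := h1mem
  exact hh_abs_ne_one (mem_ball_zero_iff.1 hw) hw1

lemma hh_deriv_ne {z : ℂ} (hz : ‖z‖ < 1) :
    HasDerivAt hh (deriv hh z) z ∧ deriv hh z ≠ 0 := by
  have hd : HasDerivAt hh (deriv hh z) z := (hh_diff hz).hasDerivAt
  refine ⟨hd, ?_⟩
  set d := deriv hh z with hdd
  have hm := mm_hasDeriv hz
  set m' := 2 * Complex.I / (1 - z)^2 with hm'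
  have hm'ne : m' ≠ 0 := by
    rw [hm']
    apply div_ne_zero (by simp [Complex.I_ne_zero]) (pow_ne_zero _ (one_sub_ne hz))
  have hP : HasDerivAt (fun w => hh w ^ 2 + 2 * mm w * hh w + 1)
      ((2 * hh z ^ 1 * d) + ((2 * m') * hh z + (2 * mm z) * d) + 0) z := by
    exact (((hd.pow 2).add (((hm.const_mul 2).mul hd))).add (hasDerivAt_const z 1))
  have hP0 : HasDerivAt (fun w => hh w ^ 2 + 2 * mm w * hh w + 1) 0 z := by
    have hev : (fun w => hh w ^ 2 + 2 * mm w * hh w + 1) =ᶠ[nhds z] (fun _ => (0:ℂ)) := by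
      filter_upwards [Metric.ball_mem_nhds z (by linarith [norm_nonneg z] : (0:ℝ) < 1 - ‖z‖)]
        with w hw
      have : ‖w‖ < 1 := by
        have := mem_ball_iff_norm.1 hw
        calc ‖w‖ ≤ ‖w - z‖ + ‖z‖ := by simpa using norm_add_le (w - z) z
        _ < 1 := by linarith
      exact hh_quad this
    exact (hasDerivAt_const z (0:ℂ)).congr_of_eventuallyEq hev
  have heq := hP.unique hP0
  intro hd0
  rw [hd0] at heq
  simp at heq
  rcases heq with h | h
  · exact hm'ne h
  · exact hh_ne_zero hz h

lemma mm_inj {z1 z2 : ℂ} (h1 : ‖z1‖ < 1) (h2 : ‖z2‖ < 1) (he : mm z1 = mm z2) : z1 = z2 := by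
  rw [mm, mm, div_eq_div_iff (one_sub_ne h1) (one_sub_ne h2)] at he
  have : (2:ℂ) * Complex.I * (z1 - z2) = 0 := by linear_combination he
  simpa [Complex.I_ne_zero, sub_eq_zero] using this

lemma hh_inj {z1 z2 : ℂ} (h1 : ‖z1‖ < 1) (h2 : ‖z2‖ < 1) (he : hh z1 = hh z2) : z1 = z2 := by
  apply mm_inj h1 h2
  have hq1 := hh_quad h1
  have hq2 := hh_quad h2
  have hne := hh_ne_zero h2
  have : 2 * hh z2 * (mm z1 - mm z2) = 0 := by
    rw [← he] at hq2 ⊢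
    linear_combination hq1 - hq2
  have := mul_eq_zero.1 this
  rcases this with h | h
  · exact absurd (by simpa using h) hne
  · exact sub_eq_zero.1 h

lemma hh_exists {v : ℂ} (hv1 : 0 < v.im) (hv2 : ‖v‖ < 1) :
    ∃ z, ‖z‖ < 1 ∧ hh z = v := by
  have hv0 : v ≠ 0 := by
    intro h; rw [h] at hv1; simp at hv1
  have hns : 0 < Complex.normSq v := Complex.normSq_pos.2 hv0
  have hns1 : Complex.normSq v < 1 := by
    rw [← Complex.sq_norm]; nlinarith [norm_nonneg v]
  set u := -(v + v⁻¹) / 2 with hu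
  have hu_im : 0 < u.im := by
    have : u.im = v.im * (1 - Complex.normSq v) / (2 * Complex.normSq v) := by
      rw [hu]
      rw [show (-(v + v⁻¹) / 2) = -(v + v⁻¹) * (2⁻¹ : ℂ) by ring]
      simp [Complex.mul_im, Complex.add_im, Complex.inv_im, Complex.inv_re]
      field_simp
      ring
    rw [this]
    exact div_pos (by nlinarith) (by positivity)
  have huI : u + Complex.I ≠ 0 := by
    intro h
    have : (u + Complex.I).im = 0 := by rw [h]; simp
    simp [Complex.add_im] at this
    linarith
  set z := (u - Complex.I) / (u + Complex.I) with hz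
  have hnslt : Complex.normSq (u - Complex.I) < Complex.normSq (u + Complex.I) := by
    simp [Complex.normSq_apply, Complex.sub_re, Complex.sub_im, Complex.add_re, Complex.add_im]
    nlinarith
  have habsz : ‖z‖ < 1 := by
    rw [hz, norm_div, div_lt_one (by simpa [norm_pos_iff] using huI)]
    have e1 : ‖u - Complex.I‖ ^ 2 = Complex.normSq (u - Complex.I) := by
      rw [Complex.sq_norm]
    have e2 : ‖u + Complex.I‖ ^ 2 = Complex.normSq (u + Complex.I) := by
      rw [Complex.sq_norm]
    nlinarith [norm_nonneg (u - Complex.I), norm_nonneg (u + Complex.I)]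
  have hmz : mm z = u := by
    rw [mm, div_eq_iff (one_sub_ne habsz), hz]
    field_simp
    ring
  have hq := hh_quad habsz
  rw [hmz] at hq
  have hvv : v * v⁻¹ = 1 := mul_inv_cancel₀ hv0
  have key : (hh z - v) * (hh z - v⁻¹) = 0 := by
    linear_combination hq + hvv - 2 * hh z * hu
  rcases mul_eq_zero.1 key with h | h
  · exact ⟨z, habsz, sub_eq_zero.1 h⟩
  · exfalso
    have h' : hh z = v⁻¹ := sub_eq_zero.1 h
    have hlt := hh_abs_lt_one habsz
    rw [h', norm_inv] at hlt
    have hpos : 0 < ‖v‖ := norm_pos_iff.2 hv0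
    rw [inv_lt_one_iff₀] at hlt
    rcases hlt with h'' | h''
    · nlinarith
    · nlinarith


lemma root_mem {r x : ℂ} (hx : x ^ 4 = r ^ 4) :
    x ∈ ({r, -r, r * Complex.I, -(r * Complex.I)} : Set ℂ) := by
  have key : (x - r) * (x + r) * (x - r * Complex.I) * (x + r * Complex.I) = 0 := by
    linear_combination hx + (r^4 - x^2*r^2) * Complex.I_sq
  rcases mul_eq_zero.1 key with h | h
  · rcases mul_eq_zero.1 h with h' | h'
    · rcases mul_eq_zero.1 h' with h'' | h''
      · left; linear_combination h''
      · right; left; linear_combination h''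
    · right; right; left; linear_combination h'
  · right; right; right; rw [Set.mem_singleton_iff]; linear_combination h

theorem stmt_9 :
    ∃ f : ℂ → ℂ, DifferentiableOn ℂ f (ball (0:ℂ) 1) ∧
      Set.MapsTo f (ball (0:ℂ) 1) (ball (0:ℂ) 1) ∧
      (∀ z ∈ ball (0:ℂ) 1, deriv f z ≠ 0) ∧
      (∃ N : ℕ, ∀ w ∈ ball (0:ℂ) 1, {z ∈ ball (0:ℂ) 1 | f z = w}.Finite ∧
        {z ∈ ball (0:ℂ) 1 | f z = w}.ncard ≤ N) ∧
      volume (ball (0:ℂ) 1 \ f '' ball (0:ℂ) 1) = 0 ∧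
      ¬ Set.InjOn f (ball (0:ℂ) 1) ∧
      f '' ball (0:ℂ) 1 ≠ ball (0:ℂ) 1 := by
  refine ⟨fun z => hh z ^ 4, ?_, ?_, ?_, ?_, ?_, ?_, ?_⟩
  · intro z hz
    exact ((hh_diff (mem_ball_zero_iff.1 hz)).pow 4).differentiableWithinAt
  · intro z hz
    rw [mem_ball_zero_iff] at hz ⊢
    rw [norm_pow]
    exact pow_lt_one₀ (norm_nonneg _) (by simpa using hh_abs_lt_one hz) (by norm_num)
  · intro z hz
    rw [mem_ball_zero_iff] at hz
    obtain ⟨hd, hdne⟩ := hh_deriv_ne hz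
    have hD : HasDerivAt (fun z => hh z ^ 4) (4 * hh z ^ 3 * deriv hh z) z := by
      simpa using hd.fun_pow 4
    rw [hD.deriv]
    exact mul_ne_zero (mul_ne_zero (by norm_num) (pow_ne_zero _ (hh_ne_zero hz))) hdne
  · refine ⟨4, fun w _ => ?_⟩
    have hr : ∃ r : ℂ, r ^ 4 = w := by
      by_cases hw : w = 0
      · exact ⟨0, by simp [hw]⟩
      · exact ⟨w ^ (((4:ℕ):ℂ))⁻¹, Complex.cpow_nat_inv_pow w (by norm_num)⟩
    obtain ⟨r, hr⟩ := hr
    set T : Set ℂ := {r, -r, r * Complex.I, -(r * Complex.I)} with hT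
    have hTfin : T.Finite := (Set.finite_singleton _).insert _ |>.insert _ |>.insert _
    set S := {z ∈ ball (0:ℂ) 1 | hh z ^ 4 = w} with hS
    have hSsub : hh '' S ⊆ T := by
      rintro x ⟨z, ⟨_, hz2⟩, rfl⟩
      exact root_mem (by rw [hz2, hr])
    have hinj : Set.InjOn hh S := by
      intro a ha b hb hab
      exact hh_inj (mem_ball_zero_iff.1 ha.1) (mem_ball_zero_iff.1 hb.1) hab
    have hSfin : S.Finite :=
      Set.Finite.of_finite_image (hTfin.subset hSsub) hinj
    refine ⟨hSfin, ?_⟩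
    have h1 : S.ncard = (hh '' S).ncard := (Set.ncard_image_of_injOn hinj).symm
    have h2 : (hh '' S).ncard ≤ T.ncard := Set.ncard_le_ncard hSsub hTfin
    have h3 : T.ncard ≤ 4 := by
      rw [hT]
      apply le_trans (Set.ncard_insert_le _ _)
      have := Set.ncard_insert_le (-r) ({r * Complex.I, -(r * Complex.I)} : Set ℂ)
      have := Set.ncard_insert_le (r * Complex.I) ({-(r * Complex.I)} : Set ℂ)
      simp [Set.ncard_singleton] at *
      omega
    omega
  · refine measure_mono_null ?_ (measure_singleton (0:ℂ))
    · intro w hw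
      simp only [Set.mem_diff] at hw
      obtain ⟨hw1, hw2⟩ := hw
      simp only [Set.mem_singleton_iff]
      by_contra hw0
      apply hw2
      rw [mem_ball_zero_iff] at hw1
      -- find a 4th root with positive imaginary part and abs < 1
      have hr : ∃ r : ℂ, r ^ 4 = w ∧ r ≠ 0 := by
        refine ⟨w ^ (((4:ℕ):ℂ))⁻¹, Complex.cpow_nat_inv_pow w (by norm_num), ?_⟩
        intro h
        apply hw0
        have := Complex.cpow_nat_inv_pow w (n := 4) (by norm_num)
        rw [h] at this
        simpa using this.symm
      obtain ⟨r, hr4, hr0⟩ := hr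
      have habsr : ‖r‖ < 1 := by
        by_contra hc
        push_neg at hc
        have : (1:ℝ) ≤ ‖r‖ ^ 4 := one_le_pow₀ hc
        rw [← norm_pow, hr4] at this
        linarith
      have hv : ∃ v : ℂ, v ^ 4 = w ∧ 0 < v.im ∧ ‖v‖ < 1 := by
        rcases lt_trichotomy r.im 0 with h | h | h
        · exact ⟨-r, by rw [show (-r)^4 = r^4 by ring, hr4], by simpa using h, by simpa using habsr⟩
        · have hre : r.re ≠ 0 := by
            intro h'
            exact hr0 (Complex.ext h' h)
          rcases lt_trichotomy r.re 0 with h' | h' | h'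
          · refine ⟨-(r * Complex.I), ?_, ?_, ?_⟩
            · rw [show (-(r * Complex.I))^4 = r^4 * Complex.I^4 by ring, Complex.I_pow_four, mul_one, hr4]
            · simpa [Complex.mul_im, h] using h'
            · simpa using habsr
          · exact absurd h' hre
          · refine ⟨r * Complex.I, ?_, ?_, ?_⟩
            · rw [show (r * Complex.I)^4 = r^4 * Complex.I^4 by ring, Complex.I_pow_four, mul_one, hr4]
            · simpa [Complex.mul_im, h] using h'
            · simpa using habsr
        · exact ⟨r, hr4, h, habsr⟩
      obtain ⟨v, hv4, hvim, hvabs⟩ := hv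
      obtain ⟨z, hz1, hz2⟩ := hh_exists hvim hvabs
      exact ⟨z, mem_ball_zero_iff.2 hz1, by show hh z ^ 4 = w; rw [hz2, hv4]⟩
  · intro hinj
    set v1 : ℂ := (1 + Complex.I) / 2 with hv1
    set v2 : ℂ := (-1 + Complex.I) / 2 with hv2
    have hv1im : 0 < v1.im := by simp [hv1]
    have hv2im : 0 < v2.im := by simp [hv2]
    have hv1abs : ‖v1‖ < 1 := by
      have h := Complex.sq_norm v1
      have : Complex.normSq v1 = 1/2 := by
        simp [hv1, Complex.normSq_apply, Complex.div_re, Complex.div_im, Complex.normSq]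
        norm_num
      nlinarith [norm_nonneg v1]
    have hv2abs : ‖v2‖ < 1 := by
      have h := Complex.sq_norm v2
      have : Complex.normSq v2 = 1/2 := by
        simp [hv2, Complex.normSq_apply, Complex.div_re, Complex.div_im, Complex.normSq]
        norm_num
      nlinarith [norm_nonneg v2]
    obtain ⟨z1, hz1, he1⟩ := hh_exists hv1im hv1abs
    obtain ⟨z2, hz2, he2⟩ := hh_exists hv2im hv2abs
    have hne : z1 ≠ z2 := by
      intro h
      rw [h, he2] at he1
      have : v2.re = v1.re := by rw [he1]
      simp [hv1, hv2] at this
      norm_num at this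
    apply hne
    apply hinj (mem_ball_zero_iff.2 hz1) (mem_ball_zero_iff.2 hz2)
    simp only [he1, he2, hv1, hv2]
    linear_combination ((((1:ℂ) + Complex.I)^2/4 + ((-1:ℂ) + Complex.I)^2/4) / 4 + (-(Complex.I^2)/8 + Complex.I/2 - 1/8)) * Complex.I_sq
  · intro him
    have h0 : (0:ℂ) ∈ ball (0:ℂ) 1 := by simp
    rw [← him] at h0
    obtain ⟨z, hz, hz0⟩ := h0
    exact hh_ne_zero (mem_ball_zero_iff.1 hz) (pow_eq_zero_iff (by norm_num)|>.1 hz0)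
end

section
/- Let Ω = 𝔻 \ [0,1) and g : 𝔻 → Ω a biholomorphism, k ≥ 2 an integer, f = g^k. Then every point of 𝔻 has at most k preimages under f, and the complement 𝔻 \ f(𝔻) has Lebesgue measure zero, yet f is not surjective onto 𝔻. -/
open Complex Metric MeasureTheory Set Filter

theorem stmt_11 (g : ℂ → ℂ)
    (hg : DifferentiableOn ℂ g (ball (0:ℂ) 1))
    (hbij : Set.BijOn g (ball (0:ℂ) 1)
      (ball (0:ℂ) 1 \ (Complex.ofReal '' Set.Ico (0:ℝ) 1)))
    (k : ℕ) (hk : 2 ≤ k) (f : ℂ → ℂ) (hf : f = fun z => g z ^ k) :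
    (∀ w ∈ ball (0:ℂ) 1, {z ∈ ball (0:ℂ) 1 | f z = w}.Finite ∧
      {z ∈ ball (0:ℂ) 1 | f z = w}.ncard ≤ k) ∧
    volume (ball (0:ℂ) 1 \ f '' ball (0:ℂ) 1) = 0 ∧
    f '' ball (0:ℂ) 1 ≠ ball (0:ℂ) 1 := by
  have hk0 : 0 < k := by omega
  subst hf
  -- the set of k-th roots of any w is finite with at most k elements
  have hroots : ∀ w : ℂ, {u : ℂ | u ^ k = w}.Finite ∧ {u : ℂ | u ^ k = w}.ncard ≤ k := by
    intro w
    have hT : {u : ℂ | u ^ k = w} = ↑(Polynomial.nthRoots k w).toFinset := by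
      ext u
      simp [Polynomial.mem_nthRoots hk0]
    rw [hT]
    refine ⟨(Polynomial.nthRoots k w).toFinset.finite_toSet, ?_⟩
    rw [Set.ncard_coe_finset]
    exact le_trans (Multiset.toFinset_card_le _) (Polynomial.card_nthRoots k w)
  -- 0 is not in the image
  have h0 : (0:ℂ) ∉ (fun z => g z ^ k) '' ball (0:ℂ) 1 := by
    rintro ⟨z, hz, hz0⟩
    have hgz : g z ∈ ball (0:ℂ) 1 \ (Complex.ofReal '' Set.Ico (0:ℝ) 1) := hbij.mapsTo hz
    have : g z = 0 := pow_eq_zero_iff hk0.ne' |>.mp hz0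
    exact hgz.2 ⟨0, ⟨le_refl 0, one_pos⟩, by simp [this]⟩
  -- every nonzero point of the disc is in the image
  have hmem : ∀ w ∈ ball (0:ℂ) 1, w ≠ 0 → w ∈ (fun z => g z ^ k) '' ball (0:ℂ) 1 := by
    intro w hw hw0
    obtain ⟨r, hr⟩ := IsAlgClosed.exists_pow_nat_eq w hk0
    have hr0 : r ≠ 0 := by rintro rfl; simp [zero_pow hk0.ne'] at hr; exact hw0 hr.symm
    have hζ := Complex.isPrimitiveRoot_exp k hk0.ne'
    set ζ := Complex.exp (2 * Real.pi * I / k) with hζdef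
    have hζ1 : ζ ≠ 1 := hζ.ne_one (by omega)
    have hζk : ζ ^ k = 1 := hζ.pow_eq_one
    have hrk : (r * ζ) ^ k = w := by rw [mul_pow, hζk, mul_one, hr]
    -- r and r*ζ are in the ball
    have hwnorm : ‖w‖ < 1 := by simpa using hw
    have hball : ∀ u : ℂ, u ^ k = w → u ∈ ball (0:ℂ) 1 := by
      intro u hu
      simp only [mem_ball, dist_zero_right]
      by_contra h
      push_neg at h
      have : (1:ℝ) ≤ ‖u‖ ^ k := one_le_pow₀ h
      rw [← norm_pow, hu] at this
      linarith
    -- at most one root can lie on the slit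
    by_cases hbad : r ∈ Complex.ofReal '' Set.Ico (0:ℝ) 1
    · -- then r*ζ is not on the slit
      have hnotbad : r * ζ ∉ Complex.ofReal '' Set.Ico (0:ℝ) 1 := by
        rintro ⟨y, hy, hyeq⟩
        obtain ⟨x, hx, hxeq⟩ := hbad
        have hxk : ((x:ℂ)) ^ k = w := by rw [hxeq]; exact hr
        have hyk : ((y:ℂ)) ^ k = w := by rw [hyeq]; exact hrk
        have hxy : x = y := by
          have : ((x ^ k : ℝ) : ℂ) = ((y ^ k : ℝ) : ℂ) := by push_cast; rw [hxk, hyk]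
          have hxy' : x ^ k = y ^ k := Complex.ofReal_injective this
          exact (pow_left_inj₀ hx.1 hy.1 hk0.ne').mp hxy'
        have hζeq : r * ζ = r * 1 := by rw [mul_one, ← hyeq, ← hxy, hxeq]
        exact hζ1 (mul_left_cancel₀ hr0 hζeq)
      obtain ⟨z, hz, hgz⟩ := hbij.surjOn (show r * ζ ∈ _ from ⟨hball _ hrk, hnotbad⟩)
      exact ⟨z, hz, by show g z ^ k = w; rw [hgz]; exact hrk⟩
    · obtain ⟨z, hz, hgz⟩ := hbij.surjOn (show r ∈ _ from ⟨hball _ hr, hbad⟩)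
      exact ⟨z, hz, by show g z ^ k = w; rw [hgz]; exact hr⟩
  refine ⟨?_, ?_, ?_⟩
  · intro w hw
    have hsub : g '' {z ∈ ball (0:ℂ) 1 | (fun z => g z ^ k) z = w} ⊆ {u : ℂ | u ^ k = w} := by
      rintro _ ⟨z, ⟨hz1, hz2⟩, rfl⟩; exact hz2
    have hinj : Set.InjOn g {z ∈ ball (0:ℂ) 1 | (fun z => g z ^ k) z = w} :=
      hbij.injOn.mono (fun z hz => hz.1)
    have hfin : {z ∈ ball (0:ℂ) 1 | (fun z => g z ^ k) z = w}.Finite :=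
      Set.Finite.of_finite_image (((hroots w).1).subset hsub) hinj
    refine ⟨hfin, ?_⟩
    calc {z ∈ ball (0:ℂ) 1 | (fun z => g z ^ k) z = w}.ncard
        = (g '' {z ∈ ball (0:ℂ) 1 | (fun z => g z ^ k) z = w}).ncard :=
          (Set.ncard_image_of_injOn hinj).symm
      _ ≤ {u : ℂ | u ^ k = w}.ncard := Set.ncard_le_ncard hsub (hroots w).1
      _ ≤ k := (hroots w).2
  · refine measure_mono_null (fun w hw => ?_) (measure_singleton (0:ℂ))
    rcases hw with ⟨hw1, hw2⟩
    by_contra hne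
    exact hw2 (hmem w hw1 hne)
  · intro heq
    have : (0:ℂ) ∈ (fun z => g z ^ k) '' ball (0:ℂ) 1 := by
      rw [heq]; simp
    exact h0 this
end

section
/- If f : 𝔻 → 𝔻 is a nonconstant holomorphic function that extends continuously to the closed disc with |f(z)| = 1 for all |z| = 1, then f is a finite Blaschke product. -/
open Complex Metric MeasureTheory Set Filter

section BlaschkeProof

open Function


open scoped Classical in
noncomputable def ordAt (f : ℂ → ℂ) (z : ℂ) : ℕ∞ :=
  if h : AnalyticAt ℂ f z then analyticOrderAt f z else 0

lemma ordAt_eq {f : ℂ → ℂ} {z : ℂ} (h : AnalyticAt ℂ f z) : ordAt f z = analyticOrderAt f z := by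
  rw [ordAt, dif_pos h]

lemma order_congr {f g : ℂ → ℂ} {b : ℂ} (hf : AnalyticAt ℂ f b) (hg : AnalyticAt ℂ g b)
    (h : ∀ᶠ z in nhds b, f z = g z) : analyticOrderAt f b = analyticOrderAt g b := by
  cases hord : analyticOrderAt g b with
  | top =>
    rw [analyticOrderAt_eq_top] at hord ⊢
    filter_upwards [h, hord] with z h1 h2
    rw [h1, h2]
  | coe m =>
    rw [hg.analyticOrderAt_eq_natCast] at hord; rw [hf.analyticOrderAt_eq_natCast]
    obtain ⟨u, hu, hu0, hueq⟩ := hord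
    exact ⟨u, hu, hu0, by filter_upwards [h, hueq] with z h1 h2; rw [h1, h2]⟩

lemma order_unit_mul {f₂ u : ℂ → ℂ} {b : ℂ} (hf₂ : AnalyticAt ℂ f₂ b) (hu : AnalyticAt ℂ u b)
    (hub : u b ≠ 0) (hf : AnalyticAt ℂ (fun z => u z * f₂ z) b) : analyticOrderAt (fun z => u z * f₂ z) b = analyticOrderAt f₂ b := by
  cases hord : analyticOrderAt f₂ b with
  | top =>
    rw [analyticOrderAt_eq_top] at hord ⊢
    filter_upwards [hord] with z h1
    simp [h1]
  | coe m =>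
    rw [hf₂.analyticOrderAt_eq_natCast] at hord; rw [hf.analyticOrderAt_eq_natCast]
    obtain ⟨g, hg, hg0, hgeq⟩ := hord
    refine ⟨fun z => u z * g z, hu.mul hg, mul_ne_zero hub hg0, ?_⟩
    filter_upwards [hgeq] with z h1
    simp only [h1, smul_eq_mul]
    ring

lemma order_factor {f₂ : ℂ → ℂ} {a : ℂ} (hf₂ : AnalyticAt ℂ f₂ a)
    (hf : AnalyticAt ℂ (fun z => (z - a) * f₂ z) a) : analyticOrderAt (fun z => (z - a) * f₂ z) a = analyticOrderAt f₂ a + 1 := by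
  cases hord : analyticOrderAt f₂ a with
  | top =>
    rw [top_add]
    rw [analyticOrderAt_eq_top] at hord ⊢
    filter_upwards [hord] with z h1
    simp [h1]
  | coe m =>
    have : ((m : ℕ∞) + 1) = ((m + 1 : ℕ) : ℕ∞) := by push_cast; ring
    rw [this, hf.analyticOrderAt_eq_natCast]; rw [hf₂.analyticOrderAt_eq_natCast] at hord
    obtain ⟨g, hg, hg0, hgeq⟩ := hord
    refine ⟨g, hg, hg0, ?_⟩
    filter_upwards [hgeq] with z h1
    simp only [h1, smul_eq_mul]
    ring

lemma order_ne_zero_of_zero {f : ℂ → ℂ} {a : ℂ} (hf : AnalyticAt ℂ f a) (hfa : f a = 0) :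
    analyticOrderAt f a ≠ 0 := by
  intro h
  rw [show ((0:ℕ∞)) = ((0:ℕ):ℕ∞) from rfl, hf.analyticOrderAt_eq_natCast] at h
  obtain ⟨g, hg, hg0, hgeq⟩ := h
  have := hgeq.self_of_nhds
  simp only [pow_zero, one_smul] at this
  exact hg0 (this ▸ hfa)

lemma analyticOnNhd_dslope {f : ℂ → ℂ} {a : ℂ} (hf : AnalyticOnNhd ℂ f (ball (0:ℂ) 1))
    (ha : a ∈ ball (0:ℂ) 1) : AnalyticOnNhd ℂ (dslope f a) (ball (0:ℂ) 1) := by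
  intro x hx
  by_cases hxa : x = a
  · subst hxa
    obtain ⟨p, hp⟩ := hf x hx
    exact ⟨_, hp.has_fpower_series_dslope_fslope⟩
  · have h1 : AnalyticAt ℂ (fun z => (z - a)⁻¹ * (f z - f a)) x := by
      apply AnalyticAt.mul
      · exact ((analyticAt_id.sub analyticAt_const).inv (sub_ne_zero.mpr hxa))
      · exact (hf x hx).sub analyticAt_const
    apply h1.congr
    have hopen : {z : ℂ | z ≠ a} ∈ nhds x := isOpen_ne.mem_nhds hxa
    filter_upwards [hopen] with z hz
    rw [dslope_of_ne f hz, slope_def_field]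
    simp [div_eq_inv_mul]

lemma factor : ∀ (n : ℕ) (f : ℂ → ℂ), DifferentiableOn ℂ f (ball (0:ℂ) 1) →
    (∃ z ∈ ball (0:ℂ) 1, f z ≠ 0) →
    ∀ (Z : Finset ℂ), (∀ z ∈ ball (0:ℂ) 1, f z = 0 → z ∈ Z) → (∀ z ∈ Z, z ∈ ball (0:ℂ) 1) →
    (∑ z ∈ Z, (ordAt f z).toNat ≤ n) →
    ∃ (l : List ℂ) (g : ℂ → ℂ), (∀ a ∈ l, a ∈ ball (0:ℂ) 1) ∧
      DifferentiableOn ℂ g (ball (0:ℂ) 1) ∧ (∀ z ∈ ball (0:ℂ) 1, g z ≠ 0) ∧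
      ∀ z ∈ ball (0:ℂ) 1, f z = (l.map (fun a => z - a)).prod * g z := by
  intro n
  induction n with
  | zero =>
    intro f hf hnz Z hZ hZball hsum
    by_cases hzero : ∃ a ∈ ball (0:ℂ) 1, f a = 0
    · exfalso
      obtain ⟨a, haball, ha0⟩ := hzero
      have haZ : a ∈ Z := hZ a haball ha0
      have hA : AnalyticOnNhd ℂ f (ball (0:ℂ) 1) := hf.analyticOnNhd isOpen_ball
      have hfa : AnalyticAt ℂ f a := hA a haball
      have hordne : analyticOrderAt f a ≠ ⊤ := by
        intro htop
        rw [analyticOrderAt_eq_top] at htop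
        have := hA.eqOn_zero_of_preconnected_of_eventuallyEq_zero
          (convex_ball (0:ℂ) 1).isPreconnected haball htop
        obtain ⟨z, hz, hzne⟩ := hnz
        exact hzne (this hz)
      have hord0 : analyticOrderAt f a ≠ 0 := order_ne_zero_of_zero hfa ha0
      have h1 : 1 ≤ (ordAt f a).toNat := by
        rw [ordAt_eq hfa]
        cases hcase : analyticOrderAt f a with
        | top => exact absurd hcase hordne
        | coe m =>
          have hm0 : m ≠ 0 := by
            rintro rfl
            exact hord0 (by exact_mod_cast hcase)
          simp only [ENat.toNat_coe]
          omega
      have h2 : (ordAt f a).toNat ≤ ∑ z ∈ Z, (ordAt f z).toNat :=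
        Finset.single_le_sum (f := fun z => (ordAt f z).toNat) (fun i _ => Nat.zero_le _) haZ
      omega
    · push_neg at hzero
      exact ⟨[], f, by simp, hf, hzero, fun z _ => by simp⟩
  | succ n ih =>
    intro f hf hnz Z hZ hZball hsum
    by_cases hzero : ∃ a ∈ ball (0:ℂ) 1, f a = 0
    · obtain ⟨a, haball, ha0⟩ := hzero
      have haZ : a ∈ Z := hZ a haball ha0
      have hA : AnalyticOnNhd ℂ f (ball (0:ℂ) 1) := hf.analyticOnNhd isOpen_ball
      have hfa : AnalyticAt ℂ f a := hA a haball
      set f₂ : ℂ → ℂ := dslope f a with hf₂def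
      have hA₂ : AnalyticOnNhd ℂ f₂ (ball (0:ℂ) 1) := analyticOnNhd_dslope hA haball
      have hd₂ : DifferentiableOn ℂ f₂ (ball (0:ℂ) 1) := hA₂.differentiableOn
      have hkey : ∀ z : ℂ, f z = (z - a) * f₂ z := by
        intro z
        have := sub_smul_dslope f a z
        rw [ha0, sub_zero] at this
        rw [← this, smul_eq_mul, hf₂def]
      have hnz₂ : ∃ z ∈ ball (0:ℂ) 1, f₂ z ≠ 0 := by
        obtain ⟨z, hz, hzne⟩ := hnz
        refine ⟨z, hz, fun h => hzne ?_⟩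
        rw [hkey z, h, mul_zero]
      have hZ₂ : ∀ z ∈ ball (0:ℂ) 1, f₂ z = 0 → z ∈ Z := by
        intro z hz h0
        by_cases hza : z = a
        · exact hza ▸ haZ
        · exact hZ z hz (by rw [hkey z, h0, mul_zero])
      -- order bookkeeping
      have hordne : ∀ z, ∀ hz : z ∈ Z, analyticOrderAt f z ≠ ⊤ := by
        intro z hzZ htop
        rw [analyticOrderAt_eq_top] at htop
        have := hA.eqOn_zero_of_preconnected_of_eventuallyEq_zero
          (convex_ball (0:ℂ) 1).isPreconnected (hZball z hzZ) htop
        obtain ⟨w, hw, hwne⟩ := hnz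
        exact hwne (this hw)
      have hordeq : ∀ z ∈ Z, z ≠ a → ordAt f₂ z = ordAt f z := by
        intro z hzZ hza
        have hzball := hZball z hzZ
        have h2 : AnalyticAt ℂ f₂ z := hA₂ z hzball
        have h1 : AnalyticAt ℂ f z := hA z hzball
        have h3 : AnalyticAt ℂ (fun w => (w - a) * f₂ w) z :=
          ((analyticAt_id.sub analyticAt_const).mul h2)
        rw [ordAt_eq h1, ordAt_eq h2]
        rw [order_congr h1 h3 (Eventually.of_forall hkey)]
        exact (order_unit_mul h2 (analyticAt_id.sub analyticAt_const) (sub_ne_zero.mpr hza) h3).symm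
      have horda : ordAt f a = ordAt f₂ a + 1 := by
        have h2 : AnalyticAt ℂ f₂ a := hA₂ a haball
        have h3 : AnalyticAt ℂ (fun w => (w - a) * f₂ w) a :=
          ((analyticAt_id.sub analyticAt_const).mul h2)
        rw [ordAt_eq hfa, ordAt_eq h2]
        rw [order_congr hfa h3 (Eventually.of_forall hkey)]
        exact order_factor h2 h3
      have hfinite : ordAt f a ≠ ⊤ := by rw [ordAt_eq hfa]; exact hordne a haZ
      have hfinite₂ : ordAt f₂ a ≠ ⊤ := by
        intro h; rw [horda, h] at hfinite; simp at hfinite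
      have htoNat : (ordAt f a).toNat = (ordAt f₂ a).toNat + 1 := by
        cases hcase : ordAt f₂ a with
        | top => exact absurd hcase hfinite₂
        | coe m =>
          have e : ((m:ℕ∞) + 1) = ((m + 1 : ℕ) : ℕ∞) := by push_cast; ring
          rw [horda, hcase, e, ENat.toNat_coe, ENat.toNat_coe]
      have hsum₂ : ∑ z ∈ Z, (ordAt f₂ z).toNat ≤ n := by
        have e1 : ∑ z ∈ Z, (ordAt f z).toNat
            = (ordAt f a).toNat + ∑ z ∈ Z.erase a, (ordAt f z).toNat :=
          (Finset.add_sum_erase Z _ haZ).symm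
        have e2 : ∑ z ∈ Z, (ordAt f₂ z).toNat
            = (ordAt f₂ a).toNat + ∑ z ∈ Z.erase a, (ordAt f₂ z).toNat :=
          (Finset.add_sum_erase Z _ haZ).symm
        have e3 : ∑ z ∈ Z.erase a, (ordAt f₂ z).toNat = ∑ z ∈ Z.erase a, (ordAt f z).toNat := by
          apply Finset.sum_congr rfl
          intro z hz
          rw [hordeq z (Finset.mem_of_mem_erase hz) (Finset.ne_of_mem_erase hz)]
        omega
      obtain ⟨l', g, hl'mem, hgd, hg0, hfact⟩ := ih f₂ hd₂ hnz₂ Z hZ₂ hZball hsum₂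
      refine ⟨a :: l', g, ?_, hgd, hg0, ?_⟩
      · intro b hb
        rcases List.mem_cons.mp hb with h | h
        · exact h ▸ haball
        · exact hl'mem b h
      · intro z hz
        rw [hkey z, hfact z hz]
        simp only [List.map_cons, List.prod_cons]
        ring
    · push_neg at hzero
      exact ⟨[], f, by simp, hf, hzero, fun z _ => by simp⟩


lemma bf_normSq_key (a w : ℂ) :
    normSq (1 - (starRingEnd ℂ) a * w) - normSq (w - a) = (1 - normSq a) * (1 - normSq w) := by
  simp only [normSq_apply, sub_re, sub_im, mul_re, mul_im, one_re, one_im,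
    Complex.conj_re, Complex.conj_im]
  ring

lemma bf_den_lb (a w : ℂ) (ha : ‖a‖ < 1) (hw : ‖w‖ ≤ 1) :
    1 - ‖a‖ ≤ ‖1 - (starRingEnd ℂ) a * w‖ := by
  have h1 : ‖(starRingEnd ℂ) a * w‖ ≤ ‖a‖ := by
    rw [norm_mul, Complex.norm_conj]
    calc ‖a‖ * ‖w‖ ≤ ‖a‖ * 1 :=
          mul_le_mul_of_nonneg_left hw (norm_nonneg a)
      _ = ‖a‖ := mul_one _
  have h2 : ‖(1:ℂ)‖ - ‖(starRingEnd ℂ) a * w‖ ≤ ‖1 - (starRingEnd ℂ) a * w‖ :=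
    norm_sub_norm_le _ _
  simp only [norm_one] at h2
  linarith

lemma bf_den_ne (a w : ℂ) (ha : ‖a‖ < 1) (hw : ‖w‖ ≤ 1) :
    (1 - (starRingEnd ℂ) a * w) ≠ 0 := by
  intro h
  have := bf_den_lb a w ha hw
  rw [h] at this; simp at this; linarith

lemma bf_abs_le_one (a w : ℂ) (ha : ‖a‖ < 1) (hw : ‖w‖ ≤ 1) :
    ‖blaschkeFactor a w‖ ≤ 1 := by
  rw [blaschkeFactor, norm_div]
  have hden := bf_den_lb a w ha hw
  have h : (0:ℝ) < ‖1 - (starRingEnd ℂ) a * w‖ := by linarith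
  rw [div_le_one h]
  have key := bf_normSq_key a w
  have h1 : normSq a < 1 := by rw [← Complex.sq_norm]; nlinarith [norm_nonneg a]
  have h2 : normSq w ≤ 1 := by rw [← Complex.sq_norm]; nlinarith [norm_nonneg w]
  have h3 : normSq (w - a) ≤ normSq (1 - (starRingEnd ℂ) a * w) := by nlinarith
  rw [← Complex.sq_norm, ← Complex.sq_norm] at h3
  nlinarith [norm_nonneg (w - a), norm_nonneg (1 - (starRingEnd ℂ) a * w)]

lemma bf_abs_lb (a w : ℂ) (ha : ‖a‖ < 1) (hw : ‖w‖ ≤ 1) :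
    1 - 4 * (1 - ‖w‖) / (1 - ‖a‖) ≤ ‖blaschkeFactor a w‖ := by
  have hden := bf_den_lb a w ha hw
  have hden0 : (0:ℝ) < 1 - ‖a‖ := by linarith
  have hble := bf_abs_le_one a w ha hw
  have hb0 := norm_nonneg (blaschkeFactor a w)
  have key := bf_normSq_key a w
  have hdenne := bf_den_ne a w ha hw
  have hnsden0 : (0:ℝ) < normSq (1 - (starRingEnd ℂ) a * w) := by
    rw [← Complex.sq_norm]
    have := norm_pos_iff.mpr hdenne
    positivity
  have habs2 : (‖blaschkeFactor a w‖)^2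
      = normSq (w - a) / normSq (1 - (starRingEnd ℂ) a * w) := by
    rw [blaschkeFactor, norm_div, div_pow, Complex.sq_norm, Complex.sq_norm]
  have hnsden : (1 - ‖a‖)^2 ≤ normSq (1 - (starRingEnd ℂ) a * w) := by
    rw [← Complex.sq_norm]; nlinarith
  have hnsa : normSq a = (‖a‖)^2 := (Complex.sq_norm a).symm
  have hnsw : normSq w = (‖w‖)^2 := (Complex.sq_norm w).symm
  have haw : 0 ≤ ‖a‖ := norm_nonneg a
  have hww : 0 ≤ ‖w‖ := norm_nonneg w
  have h1 : (1 - normSq a) * (1 - normSq w) ≤ (2*(1 - ‖a‖)) * (2*(1 - ‖w‖)) := by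
    apply mul_le_mul (by nlinarith) (by nlinarith) (by nlinarith) (by nlinarith)
  have h2 : (1 - normSq a) * (1 - normSq w) / normSq (1 - (starRingEnd ℂ) a * w)
      ≤ (2*(1 - ‖a‖)) * (2*(1 - ‖w‖)) / (1 - ‖a‖)^2 :=
    div_le_div₀ (by nlinarith) h1 (by positivity) hnsden
  have h3 : (2*(1 - ‖a‖)) * (2*(1 - ‖w‖)) / (1 - ‖a‖)^2
      = 4 * (1 - ‖w‖) / (1 - ‖a‖) := by
    field_simp; ring
  have h4 : 1 - 4 * (1 - ‖w‖) / (1 - ‖a‖)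
      ≤ (‖blaschkeFactor a w‖)^2 := by
    rw [habs2]
    have e : normSq (w - a) / normSq (1 - (starRingEnd ℂ) a * w)
        = 1 - (1 - normSq a) * (1 - normSq w) / normSq (1 - (starRingEnd ℂ) a * w) := by
      rw [eq_sub_iff_add_eq, ← add_div, div_eq_one_iff_eq hnsden0.ne']; linarith
    rw [e]; linarith [h3 ▸ h2]
  nlinarith [mul_nonneg hb0 (by linarith : (0:ℝ) ≤ 1 - ‖blaschkeFactor a w‖)]

def BoundaryOne (h : ℂ → ℂ) : Prop :=
  ∀ ε : ℝ, 0 < ε → ∃ r : ℝ, r < 1 ∧ ∀ w ∈ ball (0:ℂ) 1, r < ‖w‖ →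
    |‖h w‖ - 1| < ε

lemma norm_le_one_of_boundary (h : ℂ → ℂ) (hd : DifferentiableOn ℂ h (ball (0:ℂ) 1))
    (hb : BoundaryOne h) : ∀ z ∈ ball (0:ℂ) 1, ‖h z‖ ≤ 1 := by
  intro z hz
  refine le_of_forall_pos_le_add (fun ε hε => ?_)
  obtain ⟨r, hr1, hr⟩ := hb ε hε
  have hz1 : ‖z‖ < 1 := by simpa [Complex.dist_eq] using hz
  set t : ℝ := max (max r (‖z‖)) 0 with ht
  have ht1 : t < 1 := by
    simp only [ht, max_lt_iff]
    exact ⟨⟨lt_of_le_of_lt (le_refl r) hr1, hz1⟩, one_pos⟩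
  set s : ℝ := (t + 1) / 2 with hs
  have hts : t < s := by simp only [hs]; linarith
  have hs1 : s < 1 := by simp only [hs]; linarith
  have hs0 : 0 < s := by
    have : (0:ℝ) ≤ t := le_max_right _ _
    simp only [hs]; linarith
  have hsub : closedBall (0:ℂ) s ⊆ ball (0:ℂ) 1 := closedBall_subset_ball hs1
  have hcl : closure (ball (0:ℂ) s) = closedBall (0:ℂ) s := closure_ball 0 hs0.ne'
  have hdc : DiffContOnCl ℂ h (ball (0:ℂ) s) := by
    constructor
    · exact hd.mono (fun x hx => lt_trans (by simpa [Complex.dist_eq] using hx) hs1 |> fun h' =>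
        by simpa [Complex.dist_eq] using h')
    · rw [hcl]; exact (hd.mono hsub).continuousOn
  have key := Complex.norm_le_of_forall_mem_frontier_norm_le (isBounded_ball (x := (0:ℂ)) (r := s))
      hdc (C := 1 + ε) ?_ (z := z) ?_
  · simpa using key
  · intro w hw
    rw [frontier_ball 0 hs0.ne'] at hw
    have hws : ‖w‖ = s := by simpa [Complex.dist_eq] using hw
    have hwb : w ∈ ball (0:ℂ) 1 := by simp [Complex.dist_eq, hws, hs1]
    have hrw : r < ‖w‖ := by
      rw [hws]
      exact lt_of_le_of_lt (le_trans (le_max_left r _) (le_max_left _ 0)) hts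
    have := hr w hwb hrw
    cases' abs_lt.mp this with h1 h2
    linarith
  · rw [hcl]
    apply ball_subset_closedBall
    have : ‖z‖ ≤ t := le_trans (le_max_right r _) (le_max_left _ 0)
    simp only [mem_ball, Complex.dist_eq, sub_zero]
    linarith

lemma abs_eq_one_of_boundary (g : ℂ → ℂ) (hd : DifferentiableOn ℂ g (ball (0:ℂ) 1))
    (hg0 : ∀ z ∈ ball (0:ℂ) 1, g z ≠ 0) (hb : BoundaryOne g) :
    ∀ z ∈ ball (0:ℂ) 1, ‖g z‖ = 1 := by
  have hup := norm_le_one_of_boundary g hd hb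
  have hinvb : BoundaryOne (fun z => (g z)⁻¹) := by
    intro ε hε
    obtain ⟨r, hr1, hr⟩ := hb (min (ε/2) (1/2)) (by positivity)
    refine ⟨r, hr1, fun w hw hrw => ?_⟩
    have h1 := hr w hw hrw
    set x := ‖g w‖ with hx
    have hmin1 : |x - 1| < ε/2 := lt_of_lt_of_le h1 (min_le_left _ _)
    have hmin2 : |x - 1| < 1/2 := lt_of_lt_of_le h1 (min_le_right _ _)
    cases' abs_lt.mp hmin2 with ha1 ha2
    have hx2 : (1:ℝ)/2 < x := by linarith
    have hx0 : (0:ℝ) < x := by linarith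
    have : ‖(g w)⁻¹‖ = x⁻¹ := by rw [norm_inv]
    rw [this]
    have he : x⁻¹ - 1 = (1 - x) / x := by field_simp
    rw [he, abs_div, abs_of_pos hx0, div_lt_iff₀ hx0]
    have : |1 - x| = |x - 1| := abs_sub_comm 1 x
    rw [this]
    nlinarith [abs_nonneg (x - 1)]
  have hdown := norm_le_one_of_boundary (fun z => (g z)⁻¹) (hd.inv hg0) hinvb
  intro z hz
  have h1 := hup z hz
  have h2 := hdown z hz
  simp only [norm_inv] at h2
  have hne : ‖g z‖ ≠ 0 := by
    simpa using hg0 z hz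
  have h0 : 0 < ‖g z‖ := lt_of_le_of_ne (norm_nonneg _) (Ne.symm hne)
  have := (inv_le_one₀ h0).mp h2
  linarith

lemma const_of_abs_one (g : ℂ → ℂ) (hd : DifferentiableOn ℂ g (ball (0:ℂ) 1))
    (habs : ∀ z ∈ ball (0:ℂ) 1, ‖g z‖ = 1) :
    ∀ z ∈ ball (0:ℂ) 1, g z = g 0 := by
  have h0 : (0:ℂ) ∈ ball (0:ℂ) 1 := mem_ball_self one_pos
  have hmax : IsMaxOn (norm ∘ g) (ball (0:ℂ) 1) 0 := by
    intro x hx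
    have : ‖g x‖ ≤ 1 := (habs x hx).le
    simpa [comp_apply, habs 0 h0] using this
  have := Complex.eqOn_of_isPreconnected_of_isMaxOn_norm
    (convex_ball (0:ℂ) 1).isPreconnected isOpen_ball hd h0 hmax
  intro z hz
  exact this hz

lemma key_induction (l : List ℂ) : ∀ (g : ℂ → ℂ), DifferentiableOn ℂ g (ball (0:ℂ) 1) →
    (∀ z ∈ ball (0:ℂ) 1, g z ≠ 0) → (∀ a ∈ l, a ∈ ball (0:ℂ) 1) →
    BoundaryOne (fun z => (l.map (fun a => z - a)).prod * g z) →
    ∃ lam : ℂ, ‖lam‖ = 1 ∧ ∀ z ∈ ball (0:ℂ) 1,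
      (l.map (fun a => z - a)).prod * g z = lam * (l.map (fun a => blaschkeFactor a z)).prod := by
  induction l with
  | nil =>
    intro g hd hg0 _ hb
    simp only [List.map_nil, List.prod_nil, one_mul] at hb ⊢
    have habs := abs_eq_one_of_boundary g hd hg0 hb
    refine ⟨g 0, habs 0 (mem_ball_self one_pos), fun z hz => ?_⟩
    rw [mul_one]
    exact const_of_abs_one g hd habs z hz
  | cons a l' ih =>
    intro g hd hg0 hmem hb
    have ha : ‖a‖ < 1 := by simpa [Complex.dist_eq] using hmem a List.mem_cons_self
    set g₁ : ℂ → ℂ := fun z => (1 - (starRingEnd ℂ) a * z) * g z with hg₁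
    have hd₁ : DifferentiableOn ℂ g₁ (ball (0:ℂ) 1) := by
      apply DifferentiableOn.mul _ hd
      exact (differentiable_const _).sub ((differentiable_id.const_mul _)) |>.differentiableOn
    have hg₁0 : ∀ z ∈ ball (0:ℂ) 1, g₁ z ≠ 0 := by
      intro z hz
      have hz1 : ‖z‖ < 1 := by simpa [Complex.dist_eq] using hz
      exact mul_ne_zero (bf_den_ne a z ha hz1.le) (hg0 z hz)
    -- the identity
    have hident : ∀ w ∈ ball (0:ℂ) 1,
        ((a :: l').map (fun b => w - b)).prod * g w
          = blaschkeFactor a w * ((l'.map (fun b => w - b)).prod * g₁ w) := by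
      intro w hw
      have hw1 : ‖w‖ < 1 := by simpa [Complex.dist_eq] using hw
      have hden := bf_den_ne a w ha hw1.le
      simp only [List.map_cons, List.prod_cons, blaschkeFactor, hg₁]
      rw [div_mul_eq_mul_div, eq_div_iff hden]
      ring
    have hb₁ : BoundaryOne (fun z => (l'.map (fun b => z - b)).prod * g₁ z) := by
      intro ε hε
      set ε' : ℝ := (min ε 1) / 3 with hε'
      have hε'0 : 0 < ε' := by
        have := lt_min hε one_pos
        positivity
      have hε'ε : ε' ≤ ε / 3 := by
        apply div_le_div_of_nonneg_right ?_ (by norm_num)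
        · exact min_le_left _ _
      have hε'1 : ε' ≤ 1 / 3 := by
        apply div_le_div_of_nonneg_right (min_le_right _ _) (by norm_num)
      obtain ⟨r₁, hr₁1, hr₁⟩ := hb ε' hε'0
      set r₂ : ℝ := 1 - ε' * (1 - ‖a‖) / 4 with hr₂def
      have hr₂1 : r₂ < 1 := by
        have : 0 < ε' * (1 - ‖a‖) / 4 := by
          have : 0 < 1 - ‖a‖ := by linarith
          positivity
        simp only [hr₂def]; linarith
      refine ⟨max (max r₁ r₂) (‖a‖), by simp [max_lt_iff, hr₁1, hr₂1, ha], ?_⟩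
      intro w hw hrw
      have hw1 : ‖w‖ < 1 := by simpa [Complex.dist_eq] using hw
      have hrw1 : r₁ < ‖w‖ := lt_of_le_of_lt (le_trans (le_max_left _ _) (le_max_left _ _)) hrw
      have hrw2 : r₂ < ‖w‖ := lt_of_le_of_lt (le_trans (le_max_right _ _) (le_max_left _ _)) hrw
      have hrwa : ‖a‖ < ‖w‖ := lt_of_le_of_lt (le_max_right _ _) hrw
      -- bound on |bf a w|
      have hc_ub : ‖blaschkeFactor a w‖ ≤ 1 := bf_abs_le_one a w ha hw1.le
      have hc_lb : 1 - ε' < ‖blaschkeFactor a w‖ := by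
        have h4 : 4 * (1 - ‖w‖) / (1 - ‖a‖) < ε' := by
          rw [div_lt_iff₀ (by linarith : (0:ℝ) < 1 - ‖a‖)]
          simp only [hr₂def] at hrw2
          nlinarith
        have := bf_abs_lb a w ha hw1.le
        linarith
      have hc0 : 0 < ‖blaschkeFactor a w‖ := by linarith
      -- bound on |h w|
      have hH := hr₁ w hw hrw1
      set H := ‖((a :: l').map (fun b => w - b)).prod * g w‖ with hH'
      cases' abs_lt.mp hH with hH1 hH2
      -- express
      have hprod : ‖(l'.map (fun b => w - b)).prod * g₁ w‖
          = H / ‖blaschkeFactor a w‖ := by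
        rw [hH', hident w hw, norm_mul]
        rw [norm_mul (blaschkeFactor a w), mul_div_cancel_left₀ _ hc0.ne', norm_mul (List.prod _)]
      rw [hprod]
      set c := ‖blaschkeFactor a w‖
      have hub : H / c < 1 + ε := by
        rw [div_lt_iff₀ hc0]
        nlinarith [mul_lt_mul_of_pos_left hc_lb (by linarith : (0:ℝ) < 1 + ε),
          mul_le_mul_of_nonneg_left hε'1 hε.le]
      have hlb : 1 - ε < H / c := by
        rw [lt_div_iff₀ hc0]
        rcases le_or_gt ε 1 with hle | hgt
        · have h1 : (1 - ε) * c ≤ 1 - ε := by nlinarith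
          linarith
        · have h1 : (1 - ε) * c < 0 := mul_neg_of_neg_of_pos (by linarith) hc0
          linarith
      rw [abs_lt]
      constructor <;> linarith
    obtain ⟨lam, hlam, heq⟩ := ih g₁ hd₁ hg₁0 (fun b hb' => hmem b (List.mem_cons_of_mem a hb')) hb₁
    refine ⟨lam, hlam, fun z hz => ?_⟩
    rw [hident z hz, heq z hz]
    simp only [List.map_cons, List.prod_cons]
    ring


-- zero set finite
lemma zeros_finite (f : ℂ → ℂ) (hf : DifferentiableOn ℂ f (ball (0:ℂ) 1))
    (hnc : ¬ ∃ c : ℂ, ∀ z ∈ ball (0:ℂ) 1, f z = c)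
    (hcont : ContinuousOn f (closedBall (0:ℂ) 1))
    (hbd : ∀ z : ℂ, ‖z‖ = 1 → ‖f z‖ = 1) :
    Set.Finite {z ∈ ball (0:ℂ) 1 | f z = 0} := by
  classical
  set Z₀ : Set ℂ := closedBall (0:ℂ) 1 ∩ f ⁻¹' {0} with hZ₀
  have hA : AnalyticOnNhd ℂ f (ball (0:ℂ) 1) := hf.analyticOnNhd isOpen_ball
  have hclosed : IsClosed Z₀ :=
    hcont.preimage_isClosed_of_isClosed Metric.isClosed_closedBall isClosed_singleton
  have hcomp : IsCompact Z₀ :=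
    isCompact_closedBall (0:ℂ) 1 |>.of_isClosed_subset hclosed inter_subset_left
  have hZball : Z₀ ⊆ ball (0:ℂ) 1 := by
    rintro z ⟨hz1, hz2⟩
    have hz1' : ‖z‖ ≤ 1 := by simpa [Complex.dist_eq] using hz1
    rcases lt_or_eq_of_le hz1' with h | h
    · simpa [Complex.dist_eq] using h
    · exfalso
      have := hbd z h
      simp only [mem_preimage, mem_singleton_iff] at hz2
      rw [hz2] at this
      simp at this
  have hne0 : ∃ z ∈ ball (0:ℂ) 1, f z ≠ 0 := by
    by_contra h
    push_neg at h
    exact hnc ⟨0, h⟩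
  have hiso : ∀ a : ℂ, ∃ U : Set ℂ, U ∈ nhds a ∧ (a ∈ Z₀ → ∀ z ∈ U, z ≠ a → f z ≠ 0) := by
    intro a
    by_cases haZ : a ∈ Z₀
    · have haball := hZball haZ
      rcases (hA a haball).eventually_eq_zero_or_eventually_ne_zero with h | h
      · exfalso
        have := hA.eqOn_zero_of_preconnected_of_eventuallyEq_zero
          (convex_ball (0:ℂ) 1).isPreconnected haball h
        obtain ⟨z, hz, hzne⟩ := hne0
        exact hzne (this hz)
      · rw [eventually_nhdsWithin_iff] at h
        rcases _root_.eventually_nhds_iff.mp h with ⟨U, hU1, hU2, hU3⟩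
        exact ⟨U, hU2.mem_nhds hU3, fun _ z hz hza => hU1 z hz hza⟩
    · exact ⟨univ, univ_mem, fun h => absurd h haZ⟩
  choose U hU1 hU2 using hiso
  obtain ⟨t, ht1, ht2⟩ := hcomp.elim_nhds_subcover U (fun a _ => hU1 a)
  have hsub : {z ∈ ball (0:ℂ) 1 | f z = 0} ⊆ ↑t := by
    rintro z ⟨hz1, hz2⟩
    have hzZ₀ : z ∈ Z₀ := ⟨ball_subset_closedBall hz1, by simpa using hz2⟩
    obtain ⟨a, hat, hzU⟩ := mem_iUnion₂.mp (ht2 hzZ₀)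
    by_cases hza : z = a
    · simpa [hza] using hat
    · exact absurd hz2 (hU2 a (ht1 a hat) z hzU hza)
  exact Set.Finite.subset t.finite_toSet hsub

-- boundary behavior
lemma boundaryOne_of_cont (f : ℂ → ℂ)
    (hcont : ContinuousOn f (closedBall (0:ℂ) 1))
    (hbd : ∀ z : ℂ, ‖z‖ = 1 → ‖f z‖ = 1) : BoundaryOne f := by
  intro ε hε
  have huc : UniformContinuousOn f (closedBall (0:ℂ) 1) :=
    (isCompact_closedBall (0:ℂ) 1).uniformContinuousOn_of_continuous hcont
  rw [Metric.uniformContinuousOn_iff] at huc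
  obtain ⟨δ, hδ0, hδ⟩ := huc ε hε
  refine ⟨max (1 - δ/2) (1/2), by simp [max_lt_iff]; constructor <;> linarith, ?_⟩
  intro w hw hrw
  have hw1 : ‖w‖ < 1 := by simpa [Complex.dist_eq] using hw
  have hw2 : (1:ℝ)/2 < ‖w‖ := lt_of_le_of_lt (le_max_right _ _) hrw
  have hw3 : 1 - δ/2 < ‖w‖ := lt_of_le_of_lt (le_max_left _ _) hrw
  have hw0 : w ≠ 0 := by
    intro h; rw [h] at hw2; simp at hw2; linarith
  set u : ℂ := w / (‖w‖ : ℂ) with hu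
  have habsu : ‖u‖ = 1 := by
    rw [hu, norm_div, Complex.norm_real, Real.norm_eq_abs, abs_of_pos (by linarith : (0:ℝ) < ‖w‖)]
    field_simp
  have hdistwu : dist w u < δ := by
    rw [Complex.dist_eq]
    have habs0 : (‖w‖ : ℂ) ≠ 0 := by
      simpa using (by intro h; exact hw0 (norm_eq_zero.mp h) : ‖w‖ ≠ 0)
    have : w - u = w * (1 - (‖w‖ : ℂ)⁻¹) := by
      rw [hu]
      field_simp
    rw [this, norm_mul]
    have h2 : (1 : ℂ) - (‖w‖ : ℂ)⁻¹ = ((1 - (‖w‖)⁻¹ : ℝ) : ℂ) := by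
      push_cast; ring
    rw [h2, Complex.norm_real, Real.norm_eq_abs]
    have hwpos : (0:ℝ) < ‖w‖ := by linarith
    have h3 : |1 - (‖w‖)⁻¹| = (‖w‖)⁻¹ - 1 := by
      rw [abs_of_nonpos]
      · ring
      · have : (1:ℝ) ≤ (‖w‖)⁻¹ := one_le_inv_iff₀.mpr ⟨hwpos, hw1.le⟩
        linarith
    rw [h3]
    have h4 : ‖w‖ * ((‖w‖)⁻¹ - 1) = 1 - ‖w‖ := by
      field_simp
    rw [h4]
    linarith
  have hwc : w ∈ closedBall (0:ℂ) 1 := ball_subset_closedBall hw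
  have huc2 : u ∈ closedBall (0:ℂ) 1 := by
    simp [Complex.dist_eq, habsu]
  have hfd := hδ w hwc u huc2 hdistwu
  rw [Complex.dist_eq] at hfd
  have habv := abs_norm_sub_norm_le (f w) (f u)
  rw [hbd u habsu] at habv
  linarith [lt_of_le_of_lt habv hfd]

end BlaschkeProof

theorem stmt_14 (f : ℂ → ℂ) (hf : DifferentiableOn ℂ f (ball (0:ℂ) 1))
    (hmaps : Set.MapsTo f (ball (0:ℂ) 1) (ball (0:ℂ) 1))
    (hnc : ¬ ∃ c : ℂ, ∀ z ∈ ball (0:ℂ) 1, f z = c)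
    (hcont : ContinuousOn f (closedBall (0:ℂ) 1))
    (hbd : ∀ z : ℂ, ‖z‖ = 1 → ‖f z‖ = 1) :
    IsFiniteBlaschke f := by
  classical
  have hnz : ∃ z ∈ ball (0:ℂ) 1, f z ≠ 0 := by
    by_contra h
    push_neg at h
    exact hnc ⟨0, h⟩
  have hfin := zeros_finite f hf hnc hcont hbd
  set Z : Finset ℂ := hfin.toFinset with hZdef
  have hZ : ∀ z ∈ ball (0:ℂ) 1, f z = 0 → z ∈ Z := fun z hz h0 =>
    hfin.mem_toFinset.mpr ⟨hz, h0⟩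
  have hZball : ∀ z ∈ Z, z ∈ ball (0:ℂ) 1 := fun z hz => (hfin.mem_toFinset.mp hz).1
  obtain ⟨l, g, hlmem, hgd, hg0, hfact⟩ :=
    factor (∑ z ∈ Z, (ordAt f z).toNat) f hf hnz Z hZ hZball le_rfl
  have hb : BoundaryOne f := boundaryOne_of_cont f hcont hbd
  have hb' : BoundaryOne (fun z => (l.map (fun a => z - a)).prod * g z) := by
    intro ε hε
    obtain ⟨r, hr1, hr⟩ := hb ε hε
    refine ⟨r, hr1, fun w hw hrw => ?_⟩
    show |‖(l.map (fun a => w - a)).prod * g w‖ - 1| < ε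
    rw [← hfact w hw]
    exact hr w hw hrw
  obtain ⟨lam, hlam, heq⟩ := key_induction l g hgd hg0 hlmem hb'
  have hfl : ∀ z ∈ ball (0:ℂ) 1, f z = lam * (l.map (fun a => blaschkeFactor a z)).prod :=
    fun z hz => by rw [hfact z hz, heq z hz]
  have hlne : l ≠ [] := by
    rintro rfl
    exact hnc ⟨lam, fun z hz => by simpa using hfl z hz⟩
  refine ⟨l.length, List.length_pos_iff.mpr hlne, lam, fun i => l.get i, hlam,
    fun i => hlmem _ (l.get_mem i), fun z hz => ?_⟩
  rw [hfl z hz]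
  congr 1
  exact (Fin.prod_univ_fun_getElem l (fun a => blaschkeFactor a z)).symm
end
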